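/- arXiv:2406.04868 — 5 statements merged into one kernel-verified Lean document; each statement's English description precedes it below -/
import Mathlib

section
/- (Stability of projections) Let S ⊆ ℝⁿ be a nonempty compact convex set and let Π_S denote the Euclidean projection onto S. Then for every A ∈ ℝⁿ, E_{W∼N(0,Id_n)} ‖Π_S(A+W) − Π_S(A)‖² ≤ (4/3)·G(S). -/
open MeasureTheory ProbabilityTheory

/-- The standard Gaussian measure `N(0, Id_n)` on `ℝⁿ = EuclideanSpace ℝ (Fin n)`. -/
noncomputable def stdGaussianE (n : ℕ) : Measure (EuclideanSpace ℝ (Fin n)) :=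
  (Measure.pi fun _ : Fin n => gaussianReal 0 1).map
    (MeasurableEquiv.toLp 2 (Fin n → ℝ))

/-- Gaussian complexity `G(S) = E_{W ∼ N(0,Id_n)} sup_{X ∈ S} ⟨X, W⟩`. -/
noncomputable def gaussComplexity {n : ℕ} (S : Set (EuclideanSpace ℝ (Fin n))) : ℝ :=
  ∫ w, (⨆ X ∈ S, (inner ℝ X w : ℝ)) ∂(stdGaussianE n)

/- ### Auxiliary lemmas -/

section Aux

open Real

lemma aux_integrable_mul_exp :
    Integrable (fun x : ℝ => x * Real.exp (-(2⁻¹ : ℝ) * x ^ 2)) := by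
  have h : Integrable (fun x : ℝ => x ^ (1:ℝ) * Real.exp (-(2⁻¹ : ℝ) * x ^ 2)) :=
    integrable_rpow_mul_exp_neg_mul_sq (by norm_num) (by norm_num)
  simpa [Real.rpow_one] using h

lemma aux_key_pdf (x : ℝ) : (gaussianPDF 0 1 x).toReal
    = (√(2 * π))⁻¹ * Real.exp (-(2⁻¹:ℝ) * x ^ 2) := by
  rw [gaussianPDF, ENNReal.toReal_ofReal (gaussianPDFReal_nonneg _ _ _), gaussianPDFReal]
  have h1 : -(x - 0) ^ 2 / (2 * ((1:NNReal):ℝ)) = -(2⁻¹:ℝ) * x ^ 2 := by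
    push_cast; ring
  rw [h1]
  norm_num

lemma aux_integrable_id_gaussianReal : Integrable (fun x : ℝ => x) (gaussianReal 0 1) := by
  rw [gaussianReal_of_var_ne_zero _ one_ne_zero,
    integrable_withDensity_iff (measurable_gaussianPDF 0 1)
      (ae_of_all _ fun x => ENNReal.ofReal_lt_top)]
  have h : Integrable (fun x : ℝ => x * ((√(2 * π))⁻¹ * Real.exp (-(2⁻¹:ℝ) * x ^ 2))) := by
    refine (aux_integrable_mul_exp.const_mul ((√(2 * π))⁻¹)).congr (ae_of_all _ fun x => ?_)
    ring
  refine h.congr (ae_of_all _ fun x => ?_)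
  simp only [aux_key_pdf x]

lemma aux_integral_id_gaussianReal : ∫ x, x ∂(gaussianReal 0 1) = 0 := by
  have hmap : (gaussianReal 0 1).map (fun x : ℝ => -x) = gaussianReal 0 1 := by
    have := gaussianReal_map_const_mul (μ := 0) (v := 1) (-1)
    simpa [neg_one_mul] using this
  have h1 : ∫ x, x ∂(gaussianReal 0 1) = ∫ x, -x ∂(gaussianReal 0 1) := by
    conv_lhs => rw [← hmap]
    rw [integral_map (φ := fun x : ℝ => -x) (f := fun x : ℝ => x)
      measurable_neg.aemeasurable measurable_id.aestronglyMeasurable]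
  have h2 : ∫ x, -x ∂(gaussianReal 0 1) = -∫ x, x ∂(gaussianReal 0 1) := integral_neg _
  linarith [h2 ▸ h1]

lemma aux_map_eval_pi {ι : Type*} [Fintype ι] [DecidableEq ι] {α : ι → Type*}
    [∀ i, MeasurableSpace (α i)]
    (μ : ∀ i, Measure (α i)) [∀ i, IsProbabilityMeasure (μ i)] (i : ι) :
    (Measure.pi μ).map (Function.eval i) = μ i := by
  ext s hs
  rw [Measure.map_apply (measurable_pi_apply i) hs]
  have h : Function.eval i ⁻¹' s
      = Set.pi Set.univ (Function.update (fun j => (Set.univ : Set (α j))) i s) := by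
    ext x
    simp only [Set.mem_preimage, Set.mem_pi, Set.mem_univ, forall_true_left]
    constructor
    · intro hx j
      rcases eq_or_ne j i with rfl | hj
      · simpa using hx
      · simp [Function.update_of_ne hj]
    · intro h
      simpa using h i
  rw [h, Measure.pi_pi, Finset.prod_eq_single i]
  · simp
  · intro j _ hj
    simp [Function.update_of_ne hj]
  · simp

lemma aux_integrable_eval_pi {n : ℕ} (i : Fin n) :
    Integrable (fun x : Fin n → ℝ => x i) (Measure.pi fun _ => gaussianReal 0 1) := by
  have hmp : MeasurePreserving (Function.eval i)
      (Measure.pi fun _ : Fin n => gaussianReal 0 1) (gaussianReal 0 1) :=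
    ⟨measurable_pi_apply i, aux_map_eval_pi _ i⟩
  exact (hmp.integrable_comp measurable_id.aestronglyMeasurable).mpr
    aux_integrable_id_gaussianReal

lemma aux_integral_eval_pi {n : ℕ} (i : Fin n) :
    ∫ x : Fin n → ℝ, x i ∂(Measure.pi fun _ => gaussianReal 0 1) = 0 := by
  have h := integral_map (φ := Function.eval i) (f := fun y : ℝ => y)
    (measurable_pi_apply i).aemeasurable measurable_id.aestronglyMeasurable
    (μ := Measure.pi fun _ : Fin n => gaussianReal 0 1)
  rw [aux_map_eval_pi] at h
  rw [← h, aux_integral_id_gaussianReal]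

lemma aux_isProbability_stdGaussianE (n : ℕ) : IsProbabilityMeasure (stdGaussianE n) := by
  unfold stdGaussianE
  exact Measure.isProbabilityMeasure_map (MeasurableEquiv.measurable _).aemeasurable

lemma aux_inner_comp {n : ℕ} (v : EuclideanSpace ℝ (Fin n)) :
    (fun x : Fin n → ℝ =>
        (inner ℝ v ((MeasurableEquiv.toLp 2 (Fin n → ℝ)) x) : ℝ))
      = fun x : Fin n → ℝ => ∑ i, v i * x i := by
  funext x
  simp [PiLp.inner_apply, MeasurableEquiv.coe_toLp, PiLp.toLp_apply, RCLike.inner_apply, mul_comm]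

lemma aux_integrable_inner_std {n : ℕ} (v : EuclideanSpace ℝ (Fin n)) :
    Integrable (fun w : EuclideanSpace ℝ (Fin n) => (inner ℝ v w : ℝ)) (stdGaussianE n) := by
  unfold stdGaussianE
  rw [integrable_map_equiv]
  have h : ((fun w : EuclideanSpace ℝ (Fin n) => (inner ℝ v w : ℝ))
      ∘ (MeasurableEquiv.toLp 2 (Fin n → ℝ)))
      = fun x : Fin n → ℝ => ∑ i, v i * x i := aux_inner_comp v
  rw [h]
  exact integrable_finset_sum _ fun i _ => (aux_integrable_eval_pi i).const_mul (v i)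

lemma aux_integral_inner_std {n : ℕ} (v : EuclideanSpace ℝ (Fin n)) :
    ∫ w, (inner ℝ v w : ℝ) ∂(stdGaussianE n) = 0 := by
  unfold stdGaussianE
  rw [integral_map_equiv]
  have h : (fun x : Fin n → ℝ =>
      (inner ℝ v ((MeasurableEquiv.toLp 2 (Fin n → ℝ)) x) : ℝ))
      = fun x : Fin n → ℝ => ∑ i, v i * x i := aux_inner_comp v
  simp only [h]
  rw [integral_finset_sum _ fun i _ => (aux_integrable_eval_pi i).const_mul (v i)]
  simp [integral_const_mul, aux_integral_eval_pi]

lemma aux_integrable_norm_std (n : ℕ) :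
    Integrable (fun w : EuclideanSpace ℝ (Fin n) => ‖w‖) (stdGaussianE n) := by
  unfold stdGaussianE
  rw [integrable_map_equiv]
  have hint : Integrable (fun x : Fin n → ℝ => ∑ i, |x i|)
      (Measure.pi fun _ => gaussianReal 0 1) :=
    integrable_finset_sum _ fun i _ => (aux_integrable_eval_pi i).abs
  refine hint.mono' ?_ (ae_of_all _ fun x => ?_)
  · exact ((MeasurableEquiv.toLp 2 (Fin n → ℝ)).measurable.norm).aestronglyMeasurable
  · simp only [Function.comp_apply, norm_norm]
    have h1 : ‖(MeasurableEquiv.toLp 2 (Fin n → ℝ)) x‖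
        = Real.sqrt (∑ i, |x i| ^ 2) := by
      rw [EuclideanSpace.norm_eq]
      simp [Real.norm_eq_abs, MeasurableEquiv.coe_toLp,
        PiLp.toLp_apply]
    rw [h1]
    have h2 : ∑ i, |x i| ^ 2 ≤ (∑ i, |x i|) ^ 2 :=
      Finset.sum_sq_le_sq_sum_of_nonneg fun i _ => abs_nonneg _
    calc Real.sqrt (∑ i, |x i| ^ 2) ≤ Real.sqrt ((∑ i, |x i|) ^ 2) := Real.sqrt_le_sqrt h2
      _ = ∑ i, |x i| := Real.sqrt_sq (Finset.sum_nonneg fun i _ => abs_nonneg _)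

end Aux

section Proj

variable {n : ℕ} {S : Set (EuclideanSpace ℝ (Fin n))}

lemma aux_proj_inner (hSconvex : Convex ℝ S)
    (proj : EuclideanSpace ℝ (Fin n) → EuclideanSpace ℝ (Fin n))
    (hproj : ∀ x, proj x ∈ S ∧ ∀ y ∈ S, ‖x - proj x‖ ≤ ‖x - y‖)
    (x : EuclideanSpace ℝ (Fin n)) :
    ∀ y ∈ S, (inner ℝ (x - proj x) (y - proj x) : ℝ) ≤ 0 := by
  haveI : Nonempty S := ⟨⟨proj x, (hproj x).1⟩⟩
  have h : ‖x - proj x‖ = ⨅ w : S, ‖x - w‖ := by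
    have h1 : ∀ w : S, ‖x - proj x‖ ≤ ‖x - (w : EuclideanSpace ℝ (Fin n))‖ :=
      fun w => (hproj x).2 w w.2
    have hbdd : BddBelow (Set.range fun w : S => ‖x - (w : EuclideanSpace ℝ (Fin n))‖) := by
      refine ⟨0, ?_⟩
      rintro - ⟨w, rfl⟩
      exact norm_nonneg _
    refine le_antisymm (le_ciInf h1) ?_
    exact ciInf_le hbdd (⟨proj x, (hproj x).1⟩ : S)
  exact (norm_eq_iInf_iff_real_inner_le_zero hSconvex (hproj x).1).mp h

lemma aux_proj_sq (hSconvex : Convex ℝ S)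
    (proj : EuclideanSpace ℝ (Fin n) → EuclideanSpace ℝ (Fin n))
    (hproj : ∀ x, proj x ∈ S ∧ ∀ y ∈ S, ‖x - proj x‖ ≤ ‖x - y‖)
    (x y : EuclideanSpace ℝ (Fin n)) :
    ‖proj y - proj x‖ ^ 2 ≤ (inner ℝ (y - x) (proj y - proj x) : ℝ) := by
  have h1 : (inner ℝ (x - proj x) (proj y - proj x) : ℝ) ≤ 0 :=
    aux_proj_inner hSconvex proj hproj x (proj y) (hproj y).1
  have h2 : (inner ℝ (y - proj y) (proj x - proj y) : ℝ) ≤ 0 :=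
    aux_proj_inner hSconvex proj hproj y (proj x) (hproj x).1
  have hns : ‖proj y - proj x‖ ^ 2 = (inner ℝ (proj y - proj x) (proj y - proj x) : ℝ) :=
    (real_inner_self_eq_norm_sq _).symm
  have hexp : (inner ℝ (y - x) (proj y - proj x) : ℝ)
      - (inner ℝ (proj y - proj x) (proj y - proj x) : ℝ)
      = (0 - (inner ℝ (y - proj y) (proj x - proj y) : ℝ))
        - (inner ℝ (x - proj x) (proj y - proj x) : ℝ) := by
    simp only [inner_sub_left, inner_sub_right, real_inner_comm]
    ring
  linarith [hns, hexp, h1, h2]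

lemma aux_proj_lip (hSconvex : Convex ℝ S)
    (proj : EuclideanSpace ℝ (Fin n) → EuclideanSpace ℝ (Fin n))
    (hproj : ∀ x, proj x ∈ S ∧ ∀ y ∈ S, ‖x - proj x‖ ≤ ‖x - y‖) :
    LipschitzWith 1 proj := by
  refine LipschitzWith.of_dist_le_mul fun x y => ?_
  rw [dist_eq_norm, dist_eq_norm, NNReal.coe_one, one_mul]
  have h := aux_proj_sq hSconvex proj hproj y x
  have hle : (inner ℝ (x - y) (proj x - proj y) : ℝ) ≤ ‖x - y‖ * ‖proj x - proj y‖ :=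
    real_inner_le_norm _ _
  rcases eq_or_lt_of_le (norm_nonneg (proj x - proj y)) with h0 | h0
  · rw [← h0]; exact norm_nonneg _
  · nlinarith [h, hle, h0]

end Proj

/-- Stability of projections: for a nonempty compact convex `S ⊆ ℝⁿ`
with Euclidean projection `proj`, for every `A`,
`E_{W∼N(0,Id_n)} ‖proj(A+w) − proj(A)‖² ≤ (4/3)·G(S)`. -/
theorem stability_of_projections
    (n : ℕ) (S : Set (EuclideanSpace ℝ (Fin n)))
    (hS : S.Nonempty) (hScompact : IsCompact S) (hSconvex : Convex ℝ S)
    (proj : EuclideanSpace ℝ (Fin n) → EuclideanSpace ℝ (Fin n))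
    (hproj : ∀ x, proj x ∈ S ∧ ∀ y ∈ S, ‖x - proj x‖ ≤ ‖x - y‖)
    (A : EuclideanSpace ℝ (Fin n)) :
    ∫ w, ‖proj (A + w) - proj A‖ ^ 2 ∂(stdGaussianE n) ≤ (4 / 3) * gaussComplexity S := by
  haveI := aux_isProbability_stdGaussianE n
  obtain ⟨X₀, hX₀⟩ := hS
  obtain ⟨C, hC⟩ := isBounded_iff_forall_norm_le.mp hScompact.isBounded
  set R : ℝ := max C 0 with hRdef
  have hR0 : (0:ℝ) ≤ R := le_max_right _ _
  have hRS : ∀ X ∈ S, ‖X‖ ≤ R := fun X hX => (hC X hX).trans (le_max_left _ _)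
  set G : EuclideanSpace ℝ (Fin n) → ℝ := fun w => ⨆ X ∈ S, (inner ℝ X w : ℝ) with hGdef
  have hGC : gaussComplexity S = ∫ w, G w ∂(stdGaussianE n) := rfl
  -- boundedness of the indexed family
  have hbddA : ∀ w : EuclideanSpace ℝ (Fin n),
      BddAbove (Set.range fun X => ⨆ _ : X ∈ S, (inner ℝ X w : ℝ)) := by
    intro w
    have himg : BddAbove ((fun X => (inner ℝ X w : ℝ)) '' S) :=
      (hScompact.image (continuous_id.inner continuous_const)).bddAbove
    refine (himg.insert 0).mono ?_
    rintro - ⟨X, rfl⟩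
    show (⨆ _ : X ∈ S, (inner ℝ X w : ℝ)) ∈ insert 0 ((fun X => (inner ℝ X w : ℝ)) '' S)
    by_cases hX : X ∈ S
    · haveI : Nonempty (X ∈ S) := ⟨hX⟩
      rw [ciSup_const]
      exact Set.mem_insert_of_mem _ ⟨X, hX, rfl⟩
    · haveI : IsEmpty (X ∈ S) := ⟨hX⟩
      rw [Real.iSup_of_isEmpty]
      exact Set.mem_insert _ _
  -- each inner product is at most G
  have hle : ∀ w : EuclideanSpace ℝ (Fin n), ∀ X ∈ S, (inner ℝ X w : ℝ) ≤ G w := by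
    intro w X hX
    haveI : Nonempty (X ∈ S) := ⟨hX⟩
    have h1 : (inner ℝ X w : ℝ) = ⨆ _ : X ∈ S, (inner ℝ X w : ℝ) := ciSup_const.symm
    rw [hGdef, h1]
    exact le_ciSup (hbddA w) X
  -- upper bound for G
  have hub : ∀ w : EuclideanSpace ℝ (Fin n), G w ≤ R * ‖w‖ := by
    intro w
    refine ciSup_le fun X => ?_
    by_cases hX : X ∈ S
    · haveI : Nonempty (X ∈ S) := ⟨hX⟩
      rw [ciSup_const]
      calc (inner ℝ X w : ℝ) ≤ ‖X‖ * ‖w‖ := real_inner_le_norm _ _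
        _ ≤ R * ‖w‖ := mul_le_mul_of_nonneg_right (hRS X hX) (norm_nonneg _)
    · haveI : IsEmpty (X ∈ S) := ⟨hX⟩
      rw [Real.iSup_of_isEmpty]
      positivity
  -- lower bound for G
  have hlb : ∀ w : EuclideanSpace ℝ (Fin n), -(R * ‖w‖) ≤ G w := by
    intro w
    refine le_trans ?_ (hle w X₀ hX₀)
    have h1 : |(inner ℝ X₀ w : ℝ)| ≤ ‖X₀‖ * ‖w‖ := abs_real_inner_le_norm _ _
    have h2 : ‖X₀‖ * ‖w‖ ≤ R * ‖w‖ :=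
      mul_le_mul_of_nonneg_right (hRS X₀ hX₀) (norm_nonneg _)
    have := abs_le.mp h1
    linarith [this.1]
  have habs : ∀ w : EuclideanSpace ℝ (Fin n), |G w| ≤ R * ‖w‖ := fun w =>
    abs_le.mpr ⟨hlb w, hub w⟩
  -- continuity of G
  have hGcont : Continuous G := by
    by_cases huniv : ∀ X : EuclideanSpace ℝ (Fin n), X ∈ S
    · -- S is the whole space; compactness forces the space to be trivial
      haveI : Subsingleton (EuclideanSpace ℝ (Fin n)) := by
        constructor
        intro a b
        have hz : ∀ v : EuclideanSpace ℝ (Fin n), v = 0 := by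
          intro v
          by_contra hv
          have hvn : 0 < ‖v‖ := norm_pos_iff.mpr hv
          have ht := hRS (((R + 1) / ‖v‖) • v) (huniv _)
          rw [norm_smul, Real.norm_eq_abs, abs_div, abs_of_nonneg (by linarith),
            abs_of_pos hvn, div_mul_cancel₀ _ hvn.ne'] at ht
          linarith
        rw [hz a, hz b]
      have hGconst : G = fun _ => G 0 := funext fun w => by rw [Subsingleton.elim w 0]
      rw [hGconst]
      exact continuous_const
    · push_neg at huniv
      obtain ⟨Xout, hXout⟩ := huniv
      have hGnonneg : ∀ w : EuclideanSpace ℝ (Fin n), 0 ≤ G w := by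
        intro w
        have h1 := le_ciSup (hbddA w) Xout
        haveI : IsEmpty (Xout ∈ S) := ⟨hXout⟩
        rwa [Real.iSup_of_isEmpty] at h1
      have hside : ∀ w w' : EuclideanSpace ℝ (Fin n), G w ≤ G w' + R * ‖w - w'‖ := by
        intro w w'
        refine ciSup_le fun X => ?_
        by_cases hX : X ∈ S
        · haveI : Nonempty (X ∈ S) := ⟨hX⟩
          rw [ciSup_const]
          have h1 : (inner ℝ X w : ℝ) = (inner ℝ X w' : ℝ) + (inner ℝ X (w - w') : ℝ) := by
            rw [inner_sub_right]; ring
          have h2 : (inner ℝ X (w - w') : ℝ) ≤ ‖X‖ * ‖w - w'‖ := real_inner_le_norm _ _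
          have h3 : ‖X‖ * ‖w - w'‖ ≤ R * ‖w - w'‖ :=
            mul_le_mul_of_nonneg_right (hRS X hX) (norm_nonneg _)
          have h4 := hle w' X hX
          linarith
        · haveI : IsEmpty (X ∈ S) := ⟨hX⟩
          rw [Real.iSup_of_isEmpty]
          have := hGnonneg w'
          positivity
      have hlip : LipschitzWith (Real.toNNReal R) G := by
        refine LipschitzWith.of_dist_le_mul fun w w' => ?_
        rw [Real.dist_eq, Real.coe_toNNReal _ hR0, dist_eq_norm]
        refine abs_le.mpr ⟨?_, ?_⟩
        · have h1 := hside w' w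
          have h2 : ‖w' - w‖ = ‖w - w'‖ := norm_sub_rev _ _
          linarith [h1, h2 ▸ h1]
        · linarith [hside w w']
      exact hlip.continuous
  -- integrability
  have hnormint := aux_integrable_norm_std n
  have hGint : Integrable G (stdGaussianE n) := by
    refine (hnormint.const_mul R).mono' hGcont.aestronglyMeasurable
      (ae_of_all _ fun w => ?_)
    rw [Real.norm_eq_abs]
    exact habs w
  have hlint : Integrable (fun w : EuclideanSpace ℝ (Fin n) =>
      (inner ℝ (proj A) w : ℝ)) (stdGaussianE n) := aux_integrable_inner_std (proj A)
  have hprojcont : Continuous proj := (aux_proj_lip hSconvex proj hproj).continuous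
  have hhcont : Continuous fun w : EuclideanSpace ℝ (Fin n) =>
      ‖proj (A + w) - proj A‖ ^ 2 :=
    (((hprojcont.comp (continuous_const.add continuous_id)).sub continuous_const).norm).pow 2
  have hhint : Integrable (fun w : EuclideanSpace ℝ (Fin n) =>
      ‖proj (A + w) - proj A‖ ^ 2) (stdGaussianE n) := by
    refine (integrable_const ((2 * R) ^ 2)).mono' hhcont.aestronglyMeasurable
      (ae_of_all _ fun w => ?_)
    rw [Real.norm_eq_abs, abs_of_nonneg (by positivity)]
    have h1 : ‖proj (A + w) - proj A‖ ≤ 2 * R := by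
      calc ‖proj (A + w) - proj A‖ ≤ ‖proj (A + w)‖ + ‖proj A‖ := norm_sub_le _ _
        _ ≤ R + R := add_le_add (hRS _ (hproj (A + w)).1) (hRS _ (hproj A).1)
        _ = 2 * R := by ring
    have h2 : (0:ℝ) ≤ ‖proj (A + w) - proj A‖ := norm_nonneg _
    nlinarith
  -- pointwise bound
  have hpt : ∀ w : EuclideanSpace ℝ (Fin n),
      ‖proj (A + w) - proj A‖ ^ 2 ≤ G w - (inner ℝ (proj A) w : ℝ) := by
    intro w
    have h1 := aux_proj_sq hSconvex proj hproj A (A + w)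
    have h2 : A + w - A = w := by abel
    rw [h2] at h1
    have h3 : (inner ℝ w (proj (A + w) - proj A) : ℝ)
        = (inner ℝ (proj (A + w)) w : ℝ) - (inner ℝ (proj A) w : ℝ) := by
      rw [inner_sub_right, real_inner_comm w (proj (A + w)), real_inner_comm w (proj A)]
    have h4 := hle w (proj (A + w)) (hproj (A + w)).1
    linarith [h1, h3 ▸ h1]
  -- main estimate
  have hmain : ∫ w, ‖proj (A + w) - proj A‖ ^ 2 ∂(stdGaussianE n) ≤ gaussComplexity S := by
    calc ∫ w, ‖proj (A + w) - proj A‖ ^ 2 ∂(stdGaussianE n)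
        ≤ ∫ w, (G w - (inner ℝ (proj A) w : ℝ)) ∂(stdGaussianE n) :=
          integral_mono hhint (hGint.sub hlint) hpt
      _ = ∫ w, G w ∂(stdGaussianE n) - ∫ w, (inner ℝ (proj A) w : ℝ) ∂(stdGaussianE n) :=
          integral_sub hGint hlint
      _ = gaussComplexity S := by
          rw [aux_integral_inner_std, hGC, sub_zero]
  have hGCnonneg : 0 ≤ gaussComplexity S := by
    have h1 : ∫ w, (inner ℝ X₀ w : ℝ) ∂(stdGaussianE n) ≤ ∫ w, G w ∂(stdGaussianE n) :=
      integral_mono (aux_integrable_inner_std X₀) hGint fun w => hle w X₀ hX₀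
    rw [aux_integral_inner_std] at h1
    rw [hGC]
    exact h1
  linarith
end

section
/- (Utility of perturb-and-project) Let S ⊆ ℝⁿ be a nonempty compact convex set, let ε, δ ∈ (0,1], Δ > 0, and let W ∼ N(0, σ²·Id_n) with σ² = 2·log(2/δ)·Δ²/ε². Then for every A ∈ ℝⁿ, the output Π̂ := Π_S(A + W) satisfies E ‖Π̂ − Π_S(A)‖² ≤ (8·√(log(2/δ))/(3ε))·Δ·G(S). -/
open MeasureTheory ProbabilityTheory

/-- The Gaussian measure `N(0, v·Id_n)` on `ℝⁿ` with coordinate variance `v`. -/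
noncomputable def gaussianE (n : ℕ) (v : NNReal) : Measure (EuclideanSpace ℝ (Fin n)) :=
  (Measure.pi fun _ : Fin n => gaussianReal 0 v).map
    (MeasurableEquiv.toLp 2 (Fin n → ℝ))

section PPUtilHelpers

variable {n : ℕ}

lemma PPUtil.measurePreserving_eval_pi (μ : Fin n → Measure ℝ) [∀ i, IsProbabilityMeasure (μ i)]
    (i : Fin n) : MeasurePreserving (Function.eval i) (Measure.pi μ) (μ i) := by
  refine ⟨measurable_pi_apply i, ?_⟩
  ext s hs
  rw [Measure.map_apply (measurable_pi_apply i) hs, Set.eval_preimage, Measure.pi_pi]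
  rw [Finset.prod_eq_single i]
  · simp
  · intro j _ hj; simp [Function.update_of_ne hj]
  · simp

lemma PPUtil.integrable_abs_gaussianReal01 : Integrable (fun x : ℝ => |x|) (gaussianReal 0 1) := by
  rw [gaussianReal_of_var_ne_zero _ one_ne_zero,
    integrable_withDensity_iff (measurable_gaussianPDF 0 1)
      (ae_of_all _ fun x => ENNReal.ofReal_lt_top)]
  have h : Integrable (fun x : ℝ =>
      (Real.sqrt (2 * Real.pi * 1))⁻¹ * |x * Real.exp (-(2 : ℝ)⁻¹ * x ^ 2)|) :=
    ((integrable_mul_exp_neg_mul_sq (by norm_num : (0:ℝ) < 2⁻¹)).abs).const_mul _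
  refine h.congr (ae_of_all _ fun x => ?_)
  show (Real.sqrt (2 * Real.pi * 1))⁻¹ * |x * Real.exp (-(2 : ℝ)⁻¹ * x ^ 2)|
      = |x| * (gaussianPDF 0 1 x).toReal
  rw [abs_mul, abs_of_nonneg (Real.exp_pos _).le]
  unfold gaussianPDF
  rw [ENNReal.toReal_ofReal (gaussianPDFReal_nonneg _ _ _)]
  unfold gaussianPDFReal
  push_cast
  rw [show -(x - 0) ^ 2 / (2 * 1) = -(2:ℝ)⁻¹ * x ^ 2 by ring]
  ring

lemma PPUtil.gaussianE_eq_map (v : NNReal) :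
    gaussianE n v = (stdGaussianE n).map (fun w => Real.sqrt v • w) := by
  set c : ℝ := Real.sqrt v with hc
  have hmc : Measurable (fun (x : Fin n → ℝ) i => c * x i) :=
    by fun_prop
  unfold gaussianE stdGaussianE
  rw [Measure.map_map (measurable_const_smul c) (MeasurableEquiv.measurable _)]
  have hcomp : (fun w : EuclideanSpace ℝ (Fin n) => c • w)
        ∘ ⇑(MeasurableEquiv.toLp 2 (Fin n → ℝ))
      = ⇑(MeasurableEquiv.toLp 2 (Fin n → ℝ)) ∘ (fun (x : Fin n → ℝ) i => c * x i) := rfl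
  rw [hcomp, ← Measure.map_map (MeasurableEquiv.measurable _) hmc]
  congr 1
  have hmp := measurePreserving_pi (fun _ : Fin n => gaussianReal 0 1)
    (fun _ : Fin n => gaussianReal 0 v) (f := fun _ x => c * x) (fun i => ?_)
  · exact hmp.map_eq.symm
  · refine ⟨measurable_id.const_mul c, ?_⟩
    rw [show (fun x : ℝ => c * x) = (c * ·) from rfl, gaussianReal_map_const_mul]
    congr 1
    · ring
    · ext
      simp [hc, Real.sq_sqrt v.coe_nonneg]

lemma PPUtil.stdGaussianE_map_neg : (stdGaussianE n).map (fun w => -w) = stdGaussianE n := by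
  have hmn : Measurable (fun (x : Fin n → ℝ) i => -x i) :=
    measurable_pi_lambda _ fun i => (measurable_pi_apply i).neg
  unfold stdGaussianE
  rw [Measure.map_map measurable_neg (MeasurableEquiv.measurable _)]
  have hcomp : (fun w : EuclideanSpace ℝ (Fin n) => -w)
        ∘ ⇑(MeasurableEquiv.toLp 2 (Fin n → ℝ))
      = ⇑(MeasurableEquiv.toLp 2 (Fin n → ℝ)) ∘ (fun (x : Fin n → ℝ) i => -x i) := rfl
  rw [hcomp, ← Measure.map_map (MeasurableEquiv.measurable _) hmn]
  congr 1
  have hmp := measurePreserving_pi (fun _ : Fin n => gaussianReal 0 1)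
    (fun _ : Fin n => gaussianReal 0 1) (f := fun _ x => -x) (fun i => ?_)
  · exact hmp.map_eq
  · refine ⟨measurable_neg, ?_⟩
    have := gaussianReal_map_const_mul (μ := 0) (v := 1) (-1)
    simp only [neg_one_mul] at this
    rw [this]
    norm_num

instance PPUtil.isProbStd : IsProbabilityMeasure (stdGaussianE n) := by
  unfold stdGaussianE
  exact Measure.isProbabilityMeasure_map (MeasurableEquiv.measurable _).aemeasurable

instance PPUtil.isProbGaussianE (v : NNReal) : IsProbabilityMeasure (gaussianE n v) := by
  unfold gaussianE
  exact Measure.isProbabilityMeasure_map (MeasurableEquiv.measurable _).aemeasurable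

lemma PPUtil.integrable_norm_std :
    Integrable (fun w : EuclideanSpace ℝ (Fin n) => ‖w‖) (stdGaussianE n) := by
  unfold stdGaussianE
  rw [integrable_map_measure continuous_norm.aestronglyMeasurable
    (MeasurableEquiv.measurable _).aemeasurable]
  have hsum : Integrable (fun x : Fin n → ℝ => ∑ i, |x i|)
      (Measure.pi fun _ : Fin n => gaussianReal 0 1) := by
    refine integrable_finset_sum _ fun i _ => ?_
    exact ((PPUtil.measurePreserving_eval_pi (fun _ : Fin n => gaussianReal 0 1) i).integrable_comp
      PPUtil.integrable_abs_gaussianReal01.aestronglyMeasurable).mpr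
      PPUtil.integrable_abs_gaussianReal01
  refine hsum.mono' ?_ (ae_of_all _ fun x => ?_)
  · exact ((MeasurableEquiv.measurable _).norm).aestronglyMeasurable
  · show ‖‖(MeasurableEquiv.toLp 2 (Fin n → ℝ)) x‖‖ ≤ ∑ i, |x i|
    rw [norm_norm, EuclideanSpace.norm_eq]
    have h1 : ∑ i, ‖(MeasurableEquiv.toLp 2 (Fin n → ℝ)) x i‖ ^ 2
        = ∑ i, |x i| ^ 2 := by
      refine Finset.sum_congr rfl fun i _ => ?_
      rw [Real.norm_eq_abs]
      rfl
    rw [h1]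
    calc Real.sqrt (∑ i, |x i| ^ 2) ≤ Real.sqrt ((∑ i, |x i|) ^ 2) := by
          apply Real.sqrt_le_sqrt
          exact Finset.sum_sq_le_sq_sum_of_nonneg fun i _ => abs_nonneg _
      _ = ∑ i, |x i| := Real.sqrt_sq (Finset.sum_nonneg fun i _ => abs_nonneg _)

end PPUtilHelpers

set_option maxHeartbeats 1000000 in
/-- Utility of perturb-and-project: with `W ∼ N(0, σ²·Id_n)`,
`σ² = 2·log(2/δ)·Δ²/ε²`, the output `Π̂ = Π_S(A + W)` satisfies
`E ‖Π̂ − Π_S(A)‖² ≤ (8√(log(2/δ))/(3ε))·Δ·G(S)`. -/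
theorem perturb_and_project_utility
    (n : ℕ) (S : Set (EuclideanSpace ℝ (Fin n)))
    (hS : S.Nonempty) (hScompact : IsCompact S) (hSconvex : Convex ℝ S)
    (proj : EuclideanSpace ℝ (Fin n) → EuclideanSpace ℝ (Fin n))
    (hproj : ∀ x, proj x ∈ S ∧ ∀ y ∈ S, ‖x - proj x‖ ≤ ‖x - y‖)
    (ε δ Δ : ℝ) (hε : ε ∈ Set.Ioc (0 : ℝ) 1) (hδ : δ ∈ Set.Ioc (0 : ℝ) 1) (hΔ : 0 < Δ)
    (σ2 : NNReal) (hσ2 : (σ2 : ℝ) = 2 * Real.log (2 / δ) * Δ ^ 2 / ε ^ 2)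
    (A : EuclideanSpace ℝ (Fin n)) :
    ∫ w, ‖proj (A + w) - proj A‖ ^ 2 ∂(gaussianE n σ2)
      ≤ 8 * Real.sqrt (Real.log (2 / δ)) / (3 * ε) * Δ * gaussComplexity S := by
  obtain ⟨hε0, hε1⟩ := hε
  obtain ⟨hδ0, hδ1⟩ := hδ
  set L : ℝ := Real.log (2 / δ) with hLdef
  have hL : 0 < L := Real.log_pos (by rw [lt_div_iff₀ hδ0]; linarith)
  obtain ⟨x₀, hx₀⟩ := hS
  obtain ⟨R, hR⟩ := hScompact.isBounded.exists_norm_le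
  have hR0 : 0 ≤ R := le_trans (norm_nonneg x₀) (hR x₀ hx₀)
  set F : EuclideanSpace ℝ (Fin n) → ℝ := fun w => ⨆ X ∈ S, (inner ℝ X w : ℝ) with hF
  -- elementary facts about the sup
  have hg0 : ∀ (w X : EuclideanSpace ℝ (Fin n)), X ∉ S →
      (⨆ _ : X ∈ S, (inner ℝ X w : ℝ)) = 0 := by
    intro w X hX
    haveI : IsEmpty (X ∈ S) := ⟨hX⟩
    exact Real.iSup_of_isEmpty _
  have hgb : ∀ (w X : EuclideanSpace ℝ (Fin n)),
      |⨆ _ : X ∈ S, (inner ℝ X w : ℝ)| ≤ R * ‖w‖ := by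
    intro w X
    by_cases hX : X ∈ S
    · rw [ciSup_pos hX]
      exact (abs_real_inner_le_norm X w).trans
        (mul_le_mul_of_nonneg_right (hR X hX) (norm_nonneg w))
    · rw [hg0 w X hX, abs_zero]
      positivity
  have hbdd : ∀ w : EuclideanSpace ℝ (Fin n),
      BddAbove (Set.range fun X => ⨆ _ : X ∈ S, (inner ℝ X w : ℝ)) := by
    intro w
    refine ⟨R * ‖w‖, ?_⟩
    rintro _ ⟨X, rfl⟩
    exact (abs_le.mp (hgb w X)).2
  have hinner_le_F : ∀ (w X : EuclideanSpace ℝ (Fin n)), X ∈ S → (inner ℝ X w : ℝ) ≤ F w := by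
    intro w X hX
    have h := le_ciSup (hbdd w) X
    rwa [ciSup_pos hX] at h
  have hFle : ∀ w, F w ≤ R * ‖w‖ := fun w => ciSup_le fun X => (abs_le.mp (hgb w X)).2
  have hFabs : ∀ w, |F w| ≤ R * ‖w‖ := by
    intro w
    refine abs_le.mpr ⟨?_, hFle w⟩
    calc -(R * ‖w‖) ≤ (inner ℝ x₀ w : ℝ) := (abs_le.mp ((abs_real_inner_le_norm x₀ w).trans
          (mul_le_mul_of_nonneg_right (hR x₀ hx₀) (norm_nonneg w)))).1
      _ ≤ F w := hinner_le_F w x₀ hx₀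
  have hFlip : ∀ w w', F w ≤ F w' + R * ‖w - w'‖ := by
    intro w w'
    refine ciSup_le fun X => ?_
    by_cases hX : X ∈ S
    · rw [ciSup_pos hX]
      have h1 : (inner ℝ X w : ℝ) = inner ℝ X w' + (inner ℝ X (w - w') : ℝ) := by
        rw [← inner_add_right]
        congr 1
        abel
      rw [h1]
      exact add_le_add (hinner_le_F w' X hX) ((real_inner_le_norm X _).trans
        (mul_le_mul_of_nonneg_right (hR X hX) (norm_nonneg _)))
    · rw [hg0 w X hX]
      have h2 : (0 : ℝ) ≤ F w' := by
        have := le_ciSup (hbdd w') X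
        rwa [hg0 w' X hX] at this
      have : (0:ℝ) ≤ R * ‖w - w'‖ := by positivity
      linarith
  have hFcont : Continuous F := by
    refine (LipschitzWith.of_dist_le_mul (K := Real.toNNReal R) fun w w' => ?_).continuous
    rw [Real.dist_eq, Real.coe_toNNReal R hR0, dist_eq_norm]
    refine abs_le.mpr ⟨?_, ?_⟩
    · have := hFlip w' w
      rw [norm_sub_rev] at this
      linarith
    · have := hFlip w w'
      linarith
  have hFsmul : ∀ (c : ℝ), 0 ≤ c → ∀ w, F (c • w) = c * F w := by
    intro c hc w
    have hptw : ∀ X : EuclideanSpace ℝ (Fin n),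
        (⨆ _ : X ∈ S, (inner ℝ X (c • w) : ℝ)) = c * ⨆ _ : X ∈ S, (inner ℝ X w : ℝ) := by
      intro X
      by_cases hX : X ∈ S
      · rw [ciSup_pos hX, ciSup_pos hX, real_inner_smul_right]
      · rw [hg0 _ X hX, hg0 _ X hX, mul_zero]
    show (⨆ X, ⨆ _ : X ∈ S, (inner ℝ X (c • w) : ℝ)) = c * ⨆ X, ⨆ _ : X ∈ S, (inner ℝ X w : ℝ)
    simp_rw [hptw]
    rw [show (c * ⨆ X, ⨆ _ : X ∈ S, (inner ℝ X w : ℝ))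
        = c • ⨆ X, ⨆ _ : X ∈ S, (inner ℝ X w : ℝ) from rfl,
      Real.smul_iSup_of_nonneg hc]
    rfl
  -- projection facts
  have hvar : ∀ x, ∀ y ∈ S, (inner ℝ (x - proj x) (y - proj x) : ℝ) ≤ 0 := by
    intro x
    have hmem := (hproj x).1
    haveI : Nonempty S := ⟨⟨x₀, hx₀⟩⟩
    have h1 : ‖x - proj x‖ ≤ ⨅ w : S, ‖x - w‖ := le_ciInf fun w => (hproj x).2 w w.2
    have hbb : BddBelow (Set.range fun w : S => ‖x - (w : EuclideanSpace ℝ (Fin n))‖) := by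
      refine ⟨0, ?_⟩
      rintro r ⟨w, rfl⟩
      exact norm_nonneg _
    have h2 : (⨅ w : S, ‖x - w‖) ≤ ‖x - proj x‖ := ciInf_le hbb ⟨proj x, hmem⟩
    exact (norm_eq_iInf_iff_real_inner_le_zero hSconvex hmem).mp (le_antisymm h1 h2)
  have hkey : ∀ x y, ‖proj x - proj y‖ ^ 2 ≤ (inner ℝ (proj x - proj y) (x - y) : ℝ) := by
    intro x y
    have h1 := hvar x (proj y) (hproj y).1
    have h2 := hvar y (proj x) (hproj x).1
    have expand : (inner ℝ (proj x - proj y) (x - y) : ℝ) - ‖proj x - proj y‖ ^ 2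
        = (-(inner ℝ (x - proj x) (proj y - proj x) : ℝ))
          + (-(inner ℝ (y - proj y) (proj x - proj y) : ℝ)) := by
      rw [← real_inner_self_eq_norm_sq]
      simp only [inner_sub_left, inner_sub_right]
      rw [real_inner_comm x (proj y), real_inner_comm x (proj x),
        real_inner_comm y (proj x), real_inner_comm y (proj y)]
      ring
    linarith
  have hlip : ∀ x y, ‖proj x - proj y‖ ≤ ‖x - y‖ := by
    intro x y
    rcases eq_or_lt_of_le (norm_nonneg (proj x - proj y)) with h | h
    · rw [← h]; exact norm_nonneg _
    · have h2 := hkey x y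
      have h3 : (inner ℝ (proj x - proj y) (x - y) : ℝ) ≤ ‖proj x - proj y‖ * ‖x - y‖ :=
        real_inner_le_norm _ _
      nlinarith
  have hprojcont : Continuous proj := by
    refine (LipschitzWith.of_dist_le_mul (K := 1) fun x y => ?_).continuous
    rw [dist_eq_norm, dist_eq_norm, NNReal.coe_one, one_mul]
    exact hlip x y
  -- pointwise main inequality
  have hpt : ∀ w, ‖proj (A + w) - proj A‖ ^ 2 ≤ F w - (inner ℝ (proj A) w : ℝ) := by
    intro w
    have h := hkey (A + w) A
    rw [add_sub_cancel_left] at h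
    have h2 : (inner ℝ (proj (A + w) - proj A) w : ℝ)
        = (inner ℝ (proj (A + w)) w : ℝ) - (inner ℝ (proj A) w : ℝ) := inner_sub_left _ _ _
    have h3 : (inner ℝ (proj (A + w)) w : ℝ) ≤ F w := hinner_le_F w _ (hproj _).1
    linarith
  -- measure plumbing
  set σ : ℝ := Real.sqrt σ2 with hσdef
  have hσ0 : 0 ≤ σ := Real.sqrt_nonneg _
  have hmap : gaussianE n σ2 = (stdGaussianE n).map (fun w => σ • w) :=
    PPUtil.gaussianE_eq_map σ2
  have hsm : Measurable (fun w : EuclideanSpace ℝ (Fin n) => σ • w) := measurable_const_smul σ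
  have hFint_std : Integrable F (stdGaussianE n) := by
    refine (PPUtil.integrable_norm_std.const_mul R).mono'
      hFcont.aestronglyMeasurable (ae_of_all _ fun w => ?_)
    rw [Real.norm_eq_abs]
    exact hFabs w
  have hlin_cont : ∀ b : EuclideanSpace ℝ (Fin n),
      Continuous (fun w : EuclideanSpace ℝ (Fin n) => (inner ℝ b w : ℝ)) := fun b =>
    Continuous.inner continuous_const continuous_id
  have hlin_int_std : ∀ b : EuclideanSpace ℝ (Fin n),
      Integrable (fun w => (inner ℝ b w : ℝ)) (stdGaussianE n) := by
    intro b
    refine (PPUtil.integrable_norm_std.const_mul ‖b‖).mono'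
      (hlin_cont b).aestronglyMeasurable (ae_of_all _ fun w => ?_)
    rw [Real.norm_eq_abs]
    exact abs_real_inner_le_norm b w
  have hlin_zero : ∀ b : EuclideanSpace ℝ (Fin n),
      ∫ w, (inner ℝ b w : ℝ) ∂(stdGaussianE n) = 0 := by
    intro b
    have h1 : ∫ w, (inner ℝ b w : ℝ) ∂(stdGaussianE n)
        = ∫ w, (inner ℝ b (-w) : ℝ) ∂(stdGaussianE n) := by
      conv_lhs => rw [← PPUtil.stdGaussianE_map_neg (n := n)]
      rw [integral_map measurable_neg.aemeasurable]
      rw [PPUtil.stdGaussianE_map_neg]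
      exact (hlin_cont b).aestronglyMeasurable
    simp only [inner_neg_right] at h1
    rw [integral_neg] at h1
    linarith
  have hμint_F : Integrable F (gaussianE n σ2) := by
    rw [hmap, integrable_map_measure hFcont.aestronglyMeasurable hsm.aemeasurable]
    have : (F ∘ fun w => σ • w) = fun w => σ * F w := funext fun w => hFsmul σ hσ0 w
    rw [this]
    exact hFint_std.const_mul σ
  have hμint_lin : Integrable (fun w => (inner ℝ (proj A) w : ℝ)) (gaussianE n σ2) := by
    rw [hmap, integrable_map_measure (hlin_cont (proj A)).aestronglyMeasurable hsm.aemeasurable]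
    have : ((fun w => (inner ℝ (proj A) w : ℝ)) ∘ fun w => σ • w)
        = fun w => σ * (inner ℝ (proj A) w : ℝ) := funext fun w => real_inner_smul_right _ _ _
    rw [this]
    exact (hlin_int_std (proj A)).const_mul σ
  have hμint_lhs : Integrable (fun w => ‖proj (A + w) - proj A‖ ^ 2) (gaussianE n σ2) := by
    refine (integrable_const ((2 * R) ^ 2)).mono' ?_ (ae_of_all _ fun w => ?_)
    · exact (((hprojcont.comp (continuous_const.add continuous_id)).sub
        continuous_const).norm.pow 2).aestronglyMeasurable
    · rw [Real.norm_eq_abs, abs_of_nonneg (by positivity)]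
      have hb : ‖proj (A + w) - proj A‖ ≤ 2 * R := by
        calc ‖proj (A + w) - proj A‖ ≤ ‖proj (A + w)‖ + ‖proj A‖ := norm_sub_le _ _
          _ ≤ R + R := add_le_add (hR _ (hproj _).1) (hR _ (hproj _).1)
          _ = 2 * R := by ring
      exact pow_le_pow_left₀ (norm_nonneg _) hb 2
  have hlinμ_zero : ∫ w, (inner ℝ (proj A) w : ℝ) ∂(gaussianE n σ2) = 0 := by
    rw [hmap, integral_map hsm.aemeasurable]
    · have : (fun w => (inner ℝ (proj A) (σ • w) : ℝ))
          = fun w => σ * (inner ℝ (proj A) w : ℝ) := funext fun w => real_inner_smul_right _ _ _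
      rw [this, integral_const_mul, hlin_zero]
      ring
    · rw [← hmap]
      exact (hlin_cont (proj A)).aestronglyMeasurable
  have hGnonneg : 0 ≤ gaussComplexity S := by
    have h := integral_mono (hlin_int_std x₀) hFint_std (fun w => hinner_le_F w x₀ hx₀)
    rw [hlin_zero x₀] at h
    exact h
  have hFμ : ∫ w, F w ∂(gaussianE n σ2) = σ * gaussComplexity S := by
    rw [hmap, integral_map hsm.aemeasurable]
    · have : (fun w => F (σ • w)) = fun w => σ * F w := funext fun w => hFsmul σ hσ0 w
      rw [this, integral_const_mul]
      rfl
    · rw [← hmap]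
      exact hFcont.aestronglyMeasurable
  have hσle : σ ≤ 8 * Real.sqrt L / (3 * ε) * Δ := by
    have hrhs0 : 0 ≤ 8 * Real.sqrt L / (3 * ε) * Δ := by positivity
    have hrhs2 : (8 * Real.sqrt L / (3 * ε) * Δ) ^ 2 = 64 * L * Δ ^ 2 / (9 * ε ^ 2) := by
      rw [show (8 * Real.sqrt L / (3 * ε) * Δ) ^ 2
          = 64 * Real.sqrt L ^ 2 * Δ ^ 2 / (9 * ε ^ 2) by ring, Real.sq_sqrt hL.le]
    have hle2 : (σ2 : ℝ) ≤ (8 * Real.sqrt L / (3 * ε) * Δ) ^ 2 := by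
      rw [hrhs2, hσ2]
      rw [div_le_div_iff₀ (by positivity) (by positivity)]
      nlinarith [mul_pos (mul_pos hL (pow_pos hΔ 2)) (pow_pos hε0 2)]
    calc σ = Real.sqrt (σ2 : ℝ) := rfl
      _ ≤ Real.sqrt ((8 * Real.sqrt L / (3 * ε) * Δ) ^ 2) := Real.sqrt_le_sqrt hle2
      _ = 8 * Real.sqrt L / (3 * ε) * Δ := Real.sqrt_sq hrhs0
  calc ∫ w, ‖proj (A + w) - proj A‖ ^ 2 ∂(gaussianE n σ2)
      ≤ ∫ w, (F w - (inner ℝ (proj A) w : ℝ)) ∂(gaussianE n σ2) :=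
        integral_mono hμint_lhs (hμint_F.sub hμint_lin) hpt
    _ = ∫ w, F w ∂(gaussianE n σ2) - ∫ w, (inner ℝ (proj A) w : ℝ) ∂(gaussianE n σ2) :=
        integral_sub hμint_F hμint_lin
    _ = σ * gaussComplexity S := by rw [hlinμ_zero, hFμ]; ring
    _ ≤ 8 * Real.sqrt L / (3 * ε) * Δ * gaussComplexity S :=
        mul_le_mul_of_nonneg_right hσle hGnonneg
end

section
/- (Utility of perturb-and-alternately-project, conditional form) Let S₁, …, S_q ⊆ ℝⁿ be nonempty compact convex sets with nonempty intersection S = ⋂_{ℓ∈[q]} S_ℓ contained in the ball {X ∈ ℝⁿ : ‖X‖² ≤ n^C} for some C ≥ 0. Suppose c ∈ (0,1) is such that for every x ∈ ℝⁿ the averaged alternating-projection iterates, defined by Π⁰(x) = x and Π^t(x) = (1/q)·∑_{ℓ∈[q]} Π_{S_ℓ}(Π^{t−1}(x)), satisfy ‖Π_S(x) − Π^t(x)‖ ≤ c^t·‖Π_S(x) − x‖ for all t ≥ 1. Let ε, δ ∈ (0,1], Δ > 0, let W ∼ N(0, σ²·Id_n) with σ² = 2·log(2/δ)·Δ²/ε²,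 and let t ≥ 1 be such that 2·c^{2t}·(4σ²n + 2n^C) ≤ n^{−10}. Then for every A ∈ ℝⁿ, E ‖Π^t(A + W) − Π_S(A)‖² ≤ (16·√(log(2/δ))/(3ε))·Δ·G(S) + 8·c^{2t}·‖A‖² + n^{−10}. -/
open MeasureTheory ProbabilityTheory

section AuxGauss
open Filter Real

section GaussMoments

lemma tendsto_mul_exp_neg_mul_sq_atTop {b : ℝ} (hb : 0 < b) :
    Tendsto (fun x : ℝ => x * Real.exp (-b * x ^ 2)) atTop (nhds 0) := by
  have he : Tendsto (fun x : ℝ => Real.exp (-(1/2) * x)) atTop (nhds 0) := by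
    have h1 : Tendsto (fun x : ℝ => (1/2 : ℝ) * x) atTop atTop :=
      tendsto_id.const_mul_atTop (by norm_num)
    have h2 := (Filter.tendsto_neg_atTop_atBot).comp h1
    have h3 := Real.tendsto_exp_atBot.comp h2
    refine h3.congr fun x => ?_
    simp [Function.comp, neg_mul]
  have h := (rpow_mul_exp_neg_mul_sq_isLittleO_exp_neg hb 1).trans_tendsto he
  simpa [Real.rpow_one] using h

lemma tendsto_mul_exp_neg_mul_sq_atBot {b : ℝ} (hb : 0 < b) :
    Tendsto (fun x : ℝ => x * Real.exp (-b * x ^ 2)) atBot (nhds 0) := by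
  have h := ((tendsto_mul_exp_neg_mul_sq_atTop hb).neg).comp tendsto_neg_atBot_atTop
  simp only [neg_zero] at h
  refine h.congr fun x => ?_
  simp only [Function.comp]
  rw [neg_sq]
  ring

lemma integrable_sq_mul_exp_neg_mul_sq {b : ℝ} (hb : 0 < b) :
    Integrable (fun x : ℝ => x ^ 2 * Real.exp (-b * x ^ 2)) := by
  have h := integrable_rpow_mul_exp_neg_mul_sq hb (s := 2) (by norm_num)
  refine h.congr ?_
  refine Eventually.of_forall fun x => ?_
  have : x ^ (2 : ℝ) = x ^ (2 : ℕ) := by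
    rw [show (2 : ℝ) = ((2 : ℕ) : ℝ) by norm_num, Real.rpow_natCast]
  simp only [this]

lemma integral_sq_mul_exp_neg_mul_sq {b : ℝ} (hb : 0 < b) :
    ∫ x : ℝ, x ^ 2 * Real.exp (-b * x ^ 2) = (2 * b)⁻¹ * Real.sqrt (π / b) := by
  have hb' : (2 : ℝ) * b ≠ 0 := by positivity
  have hderiv : ∀ x : ℝ, HasDerivAt (fun y : ℝ => -(2 * b)⁻¹ * (y * Real.exp (-b * y ^ 2)))
      (x ^ 2 * Real.exp (-b * x ^ 2) - (2 * b)⁻¹ * Real.exp (-b * x ^ 2)) x := by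
    intro x
    have h1 : HasDerivAt (fun y : ℝ => -b * y ^ 2) (-b * (2 * x)) x := by
      have := (hasDerivAt_pow 2 x).const_mul (-b)
      simpa using this
    have h2 := h1.exp
    have h3 := (hasDerivAt_id x).mul h2
    have h4 := h3.const_mul (-(2 * b)⁻¹)
    refine h4.congr_deriv ?_
    simp only [id_eq]
    field_simp
    ring
  have hint : Integrable (fun x : ℝ =>
      x ^ 2 * Real.exp (-b * x ^ 2) - (2 * b)⁻¹ * Real.exp (-b * x ^ 2)) :=
    (integrable_sq_mul_exp_neg_mul_sq hb).sub ((integrable_exp_neg_mul_sq hb).const_mul _)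
  have hbot : Tendsto (fun y : ℝ => -(2 * b)⁻¹ * (y * Real.exp (-b * y ^ 2))) atBot (nhds 0) := by
    have := (tendsto_mul_exp_neg_mul_sq_atBot hb).const_mul (-(2 * b)⁻¹)
    simpa using this
  have htop : Tendsto (fun y : ℝ => -(2 * b)⁻¹ * (y * Real.exp (-b * y ^ 2))) atTop (nhds 0) := by
    have := (tendsto_mul_exp_neg_mul_sq_atTop hb).const_mul (-(2 * b)⁻¹)
    simpa using this
  have key := integral_of_hasDerivAt_of_tendsto hderiv hint hbot htop
  rw [sub_zero] at key
  have hsplit := integral_sub (integrable_sq_mul_exp_neg_mul_sq hb)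
    ((integrable_exp_neg_mul_sq hb).const_mul ((2 * b)⁻¹))
  rw [hsplit] at key
  have hg : ∫ x : ℝ, (2 * b)⁻¹ * Real.exp (-b * x ^ 2) = (2 * b)⁻¹ * Real.sqrt (π / b) := by
    rw [integral_const_mul, integral_gaussian]
  linarith [key, hg]

end GaussMoments


section B
variable {v : NNReal}

lemma gaussPDF_smul (v : NNReal) (g : ℝ → ℝ) (hv : v ≠ 0) :
    ∫ x, g x ∂(gaussianReal 0 v) = ∫ x, gaussianPDFReal 0 v x * g x := by
  rw [gaussianReal_of_var_ne_zero 0 hv]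
  have hmeas : Measurable fun x => Real.toNNReal (gaussianPDFReal 0 v x) :=
    (measurable_gaussianPDFReal 0 v).real_toNNReal
  have hd : (gaussianPDF 0 v) = fun x => ((Real.toNNReal (gaussianPDFReal 0 v x) : NNReal) : ENNReal) := by
    funext x
    rw [gaussianPDF, ENNReal.ofReal]
  rw [hd, integral_withDensity_eq_integral_smul hmeas]
  congr 1
  funext x
  rw [NNReal.smul_def, smul_eq_mul, Real.coe_toNNReal _ (gaussianPDFReal_nonneg 0 v x)]

lemma integrable_gaussPDF_iff (v : NNReal) (g : ℝ → ℝ) (hv : v ≠ 0) :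
    Integrable g (gaussianReal 0 v) ↔
      Integrable (fun x => gaussianPDFReal 0 v x * g x) := by
  rw [gaussianReal_of_var_ne_zero 0 hv]
  have hmeas : Measurable fun x => Real.toNNReal (gaussianPDFReal 0 v x) :=
    (measurable_gaussianPDFReal 0 v).real_toNNReal
  have hd : (gaussianPDF 0 v) = fun x => ((Real.toNNReal (gaussianPDFReal 0 v x) : NNReal) : ENNReal) := by
    funext x
    rw [gaussianPDF, ENNReal.ofReal]
  rw [hd, integrable_withDensity_iff_integrable_smul hmeas]
  constructor <;> intro h <;> refine h.congr ?_ <;> refine Eventually.of_forall fun x => ?_ <;>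
    simp only [NNReal.smul_def, smul_eq_mul, Real.coe_toNNReal _ (gaussianPDFReal_nonneg 0 v x)]

lemma neg_div_two_v (v : NNReal) (hv : v ≠ 0) (x : ℝ) :
    -x ^ 2 / (2 * (v : ℝ)) = -((2 * (v : ℝ))⁻¹ * x ^ 2) := by
  rw [div_eq_mul_inv]; ring

lemma integrable_id_gaussianReal (v : NNReal) :
    Integrable (fun x => x) (gaussianReal 0 v) := by
  by_cases hv : v = 0
  · subst hv; simp only [gaussianReal_zero_var]
    have h0 : (fun x : ℝ => x) =ᵐ[Measure.dirac (0 : ℝ)] (fun _ => (0 : ℝ)) := by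
      rw [MeasureTheory.ae_dirac_eq]; exact Filter.eventually_pure.2 rfl
    exact (integrable_const (0 : ℝ)).congr h0.symm
  · rw [integrable_gaussPDF_iff v _ hv]
    have hb : (0 : ℝ) < (2 * (v : ℝ))⁻¹ := by
      have : (0 : ℝ) < (v : ℝ) := lt_of_le_of_ne (v.coe_nonneg) (by exact_mod_cast (Ne.symm hv))
      positivity
    have h := (integrable_mul_exp_neg_mul_sq hb).const_mul (√(2 * π * (v : ℝ)))⁻¹
    refine h.congr (Eventually.of_forall fun x => ?_)
    rw [gaussianPDFReal_def]
    simp only [sub_zero]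
    rw [neg_div_two_v v hv x, neg_mul]
    ring

lemma integral_id_gaussianReal (v : NNReal) :
    ∫ x, x ∂(gaussianReal 0 v) = 0 := by
  have hmap : (gaussianReal 0 v).map (fun x => (-1 : ℝ) * x) = gaussianReal 0 v := by
    have := gaussianReal_map_const_mul (μ := 0) (v := v) (-1 : ℝ)
    simpa using this
  have hmeas : Measurable fun x : ℝ => (-1 : ℝ) * x := measurable_id.const_mul _
  have h1 : ∫ x, x ∂(gaussianReal 0 v) = ∫ x, x ∂((gaussianReal 0 v).map (fun x => (-1:ℝ) * x)) := by
    rw [hmap]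
  have h1' : ∫ x, x ∂((gaussianReal 0 v).map (fun x => (-1:ℝ) * x))
      = ∫ x, (fun y : ℝ => y) ((-1:ℝ) * x) ∂(gaussianReal 0 v) :=
    integral_map (f := fun y : ℝ => y) hmeas.aemeasurable aestronglyMeasurable_id
  rw [h1'] at h1
  simp only [neg_one_mul] at h1
  have h2 : ∫ x : ℝ, -x ∂(gaussianReal 0 v) = -∫ x : ℝ, x ∂(gaussianReal 0 v) := integral_neg _
  linarith [h1, h2]

lemma integrable_sq_gaussianReal (v : NNReal) :
    Integrable (fun x => x ^ 2) (gaussianReal 0 v) := by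
  by_cases hv : v = 0
  · subst hv; simp only [gaussianReal_zero_var]
    have h0 : (fun x : ℝ => x ^ 2) =ᵐ[Measure.dirac (0 : ℝ)] (fun _ => (0 : ℝ)) := by
      rw [MeasureTheory.ae_dirac_eq]; exact Filter.eventually_pure.2 (by norm_num)
    exact (integrable_const (0 : ℝ)).congr h0.symm
  · rw [integrable_gaussPDF_iff v _ hv]
    have hb : (0 : ℝ) < (2 * (v : ℝ))⁻¹ := by
      have : (0 : ℝ) < (v : ℝ) := lt_of_le_of_ne (v.coe_nonneg) (by exact_mod_cast (Ne.symm hv))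
      positivity
    have h := (integrable_sq_mul_exp_neg_mul_sq hb).const_mul (√(2 * π * (v : ℝ)))⁻¹
    refine h.congr (Eventually.of_forall fun x => ?_)
    rw [gaussianPDFReal_def]
    simp only [sub_zero]
    rw [neg_div_two_v v hv x, neg_mul]
    ring

lemma integral_sq_gaussianReal (v : NNReal) :
    ∫ x, x ^ 2 ∂(gaussianReal 0 v) = (v : ℝ) := by
  by_cases hv : v = 0
  · subst hv; simp [gaussianReal_zero_var, integral_dirac]
  · have hvpos : (0 : ℝ) < (v : ℝ) := lt_of_le_of_ne (v.coe_nonneg) (by exact_mod_cast (Ne.symm hv))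
    rw [gaussPDF_smul v _ hv]
    have hb : (0 : ℝ) < (2 * (v : ℝ))⁻¹ := by positivity
    have heq : (fun x : ℝ => gaussianPDFReal 0 v x * x ^ 2)
        = fun x => (√(2 * π * (v : ℝ)))⁻¹ * (x ^ 2 * Real.exp (-(2 * (v : ℝ))⁻¹ * x ^ 2)) := by
      funext x
      rw [gaussianPDFReal_def]
      simp only [sub_zero]
      rw [neg_div_two_v v hv x, neg_mul]
      ring
    rw [heq, integral_const_mul, integral_sq_mul_exp_neg_mul_sq hb]
    have h2b : (2 * (2 * (v : ℝ))⁻¹)⁻¹ = (v : ℝ) := by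
      field_simp
    have hpb : π / (2 * (v : ℝ))⁻¹ = 2 * π * (v : ℝ) := by
      field_simp
    rw [h2b, hpb]
    have hs : √(2 * π * (v : ℝ)) ≠ 0 := by positivity
    field_simp


end B

end AuxGauss

section C
open MeasureTheory ProbabilityTheory

variable {n : ℕ} {v : NNReal}

lemma map_eval_piGauss (v : NNReal) (i : Fin n) :
    (Measure.pi fun _ : Fin n => gaussianReal 0 v).map (fun x => x i) = gaussianReal 0 v := by
  refine Measure.ext fun s hs => ?_
  rw [Measure.map_apply (measurable_pi_apply i) hs]
  have hpre : (fun x : Fin n → ℝ => x i) ⁻¹' s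
      = Set.pi Set.univ (Function.update (fun _ : Fin n => (Set.univ : Set ℝ)) i s) :=
    Set.eval_preimage
  rw [hpre, Measure.pi_pi]
  rw [Finset.prod_eq_single i (fun j _ hj => by
      rw [Function.update_of_ne hj]; exact measure_univ)
    (fun h => absurd (Finset.mem_univ i) h)]
  rw [Function.update_self]

lemma integrable_comp_eval {f : ℝ → ℝ} (hfm : Measurable f)
    (hf : Integrable f (gaussianReal 0 v)) (i : Fin n) :
    Integrable (fun x : Fin n → ℝ => f (x i)) (Measure.pi fun _ : Fin n => gaussianReal 0 v) := by
  rw [← map_eval_piGauss v i] at hf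
  exact (integrable_map_measure hfm.aestronglyMeasurable
    (measurable_pi_apply i).aemeasurable).mp hf

lemma integral_comp_eval {f : ℝ → ℝ} (hfm : Measurable f) (i : Fin n) :
    ∫ x, f (x i) ∂(Measure.pi fun _ : Fin n => gaussianReal 0 v)
      = ∫ y, f y ∂(gaussianReal 0 v) := by
  have h := integral_map (μ := Measure.pi fun _ : Fin n => gaussianReal 0 v)
    (measurable_pi_apply i).aemeasurable hfm.aestronglyMeasurable
  rw [map_eval_piGauss v i] at h
  exact h.symm

lemma norm_sq_eq_sum (y : EuclideanSpace ℝ (Fin n)) : ‖y‖ ^ 2 = ∑ i, y i ^ 2 := by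
  rw [EuclideanSpace.norm_eq]
  rw [Real.sq_sqrt (by positivity)]
  simp [Real.norm_eq_abs, sq_abs]

lemma inner_eq_sum (y w : EuclideanSpace ℝ (Fin n)) :
    (inner ℝ y w : ℝ) = ∑ i, y i * w i := by
  simp [PiLp.inner_apply, RCLike.inner_apply, starRingEnd_apply, mul_comm]

lemma esymm_apply (x : Fin n → ℝ) (i : Fin n) :
    ((MeasurableEquiv.toLp 2 (Fin n → ℝ)) x) i = x i := rfl

instance gaussianE_prob (n : ℕ) (v : NNReal) : IsProbabilityMeasure (gaussianE n v) := by
  rw [gaussianE]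
  exact Measure.isProbabilityMeasure_map
    (MeasurableEquiv.toLp 2 (Fin n → ℝ)).measurable.aemeasurable

lemma integral_gaussianE (v : NNReal) (F : EuclideanSpace ℝ (Fin n) → ℝ) :
    ∫ w, F w ∂(gaussianE n v)
      = ∫ x, F ((MeasurableEquiv.toLp 2 (Fin n → ℝ)) x)
          ∂(Measure.pi fun _ : Fin n => gaussianReal 0 v) :=
  integral_map_equiv _ _

lemma integrable_gaussianE_iff (v : NNReal) (F : EuclideanSpace ℝ (Fin n) → ℝ) :
    Integrable F (gaussianE n v)
      ↔ Integrable (fun x => F ((MeasurableEquiv.toLp 2 (Fin n → ℝ)) x))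
          (Measure.pi fun _ : Fin n => gaussianReal 0 v) :=
  integrable_map_equiv _ _

lemma integrable_norm_sq_gaussianE (n : ℕ) (v : NNReal) :
    Integrable (fun w => ‖w‖ ^ 2) (gaussianE n v) := by
  rw [integrable_gaussianE_iff]
  have : (fun x : Fin n → ℝ => ‖(MeasurableEquiv.toLp 2 (Fin n → ℝ)) x‖ ^ 2)
      = fun x => ∑ i, x i ^ 2 := by
    funext x
    rw [norm_sq_eq_sum]
    simp [esymm_apply]
  rw [this]
  exact integrable_finset_sum _ fun i _ =>
    integrable_comp_eval (by measurability) (integrable_sq_gaussianReal v) i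

lemma integral_norm_sq_gaussianE (n : ℕ) (v : NNReal) :
    ∫ w, ‖w‖ ^ 2 ∂(gaussianE n v) = (n : ℝ) * v := by
  rw [integral_gaussianE]
  have : (fun x : Fin n → ℝ => ‖(MeasurableEquiv.toLp 2 (Fin n → ℝ)) x‖ ^ 2)
      = fun x => ∑ i, x i ^ 2 := by
    funext x
    rw [norm_sq_eq_sum]
    simp [esymm_apply]
  rw [this, integral_finset_sum _ fun i _ =>
    integrable_comp_eval (by measurability) (integrable_sq_gaussianReal v) i]
  have h : ∀ i : Fin n, ∫ x, x i ^ 2 ∂(Measure.pi fun _ : Fin n => gaussianReal 0 v) = (v : ℝ) :=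
    fun i => by
      rw [integral_comp_eval (f := fun a : ℝ => a ^ 2) (by measurability) i,
        integral_sq_gaussianReal]
  rw [Finset.sum_congr rfl fun i _ => h i, Finset.sum_const, Finset.card_univ]
  simp [mul_comm]

lemma integrable_inner_gaussianE (n : ℕ) (v : NNReal) (y : EuclideanSpace ℝ (Fin n)) :
    Integrable (fun w => (inner ℝ y w : ℝ)) (gaussianE n v) := by
  rw [integrable_gaussianE_iff]
  have : (fun x : Fin n → ℝ => (inner ℝ y ((MeasurableEquiv.toLp 2 (Fin n → ℝ)) x) : ℝ))
      = fun x => ∑ i, y i * x i := by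
    funext x
    rw [inner_eq_sum]
    simp [esymm_apply]
  rw [this]
  exact integrable_finset_sum _ fun i _ =>
    (integrable_comp_eval measurable_id (integrable_id_gaussianReal v) i).const_mul (y i)

lemma integral_inner_gaussianE (n : ℕ) (v : NNReal) (y : EuclideanSpace ℝ (Fin n)) :
    ∫ w, (inner ℝ y w : ℝ) ∂(gaussianE n v) = 0 := by
  rw [integral_gaussianE]
  have : (fun x : Fin n → ℝ => (inner ℝ y ((MeasurableEquiv.toLp 2 (Fin n → ℝ)) x) : ℝ))
      = fun x => ∑ i, y i * x i := by
    funext x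
    rw [inner_eq_sum]
    simp [esymm_apply]
  rw [this, integral_finset_sum _ fun i _ =>
    integrable_comp_eval (f := fun a : ℝ => y i * a) (measurable_id.const_mul (y i))
      ((integrable_id_gaussianReal v).const_mul (y i)) i]
  refine Finset.sum_eq_zero fun i _ => ?_
  rw [integral_comp_eval (f := fun a : ℝ => y i * a) (measurable_id.const_mul (y i)) i,
    integral_const_mul, _root_.integral_id_gaussianReal, mul_zero]

lemma integrable_norm_gaussianE (n : ℕ) (v : NNReal) :
    Integrable (fun w => ‖w‖) (gaussianE n v) := by
  refine Integrable.mono' ((integrable_const (1 : ℝ)).add (integrable_norm_sq_gaussianE n v))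
    continuous_norm.aestronglyMeasurable ?_
  refine Filter.Eventually.of_forall fun w => ?_
  rw [norm_norm]
  simp only [Pi.add_apply]
  nlinarith [sq_nonneg (‖w‖ - 1), norm_nonneg w]

end C

section D
open MeasureTheory ProbabilityTheory

lemma gaussianE_eq_map_smul (n : ℕ) (v : NNReal) :
    gaussianE n v = (stdGaussianE n).map (fun w => Real.sqrt v • w) := by
  set σ := Real.sqrt (v : ℝ) with hσ
  have hmp : MeasurePreserving (fun a : Fin n → ℝ => fun i => σ * a i)
      (Measure.pi fun _ : Fin n => gaussianReal 0 1)
      (Measure.pi fun _ : Fin n => gaussianReal 0 v) := by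
    refine measurePreserving_pi _ _ fun i => ?_
    refine ⟨measurable_id.const_mul σ, ?_⟩
    have h := gaussianReal_map_const_mul (μ := 0) (v := 1) σ
    have h2 : (⟨σ ^ 2, sq_nonneg _⟩ : NNReal) * 1 = v := by
      rw [mul_one]
      ext
      simp only [NNReal.coe_mk]
      rw [hσ, Real.sq_sqrt (v.coe_nonneg)]
      rfl
    rw [mul_zero] at h
    convert h using 2
    exact h2.symm
  rw [gaussianE, stdGaussianE, ← hmp.map_eq]
  rw [Measure.map_map (MeasurableEquiv.toLp 2 (Fin n → ℝ)).measurable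
    hmp.measurable]
  rw [Measure.map_map (measurable_const_smul σ)
    (MeasurableEquiv.toLp 2 (Fin n → ℝ)).measurable]
  rfl

lemma integral_gaussianE_smul (n : ℕ) (v : NNReal) (F : EuclideanSpace ℝ (Fin n) → ℝ)
    (hF : Continuous F) :
    ∫ w, F w ∂(gaussianE n v) = ∫ w, F (Real.sqrt v • w) ∂(stdGaussianE n) := by
  rw [gaussianE_eq_map_smul n v]
  exact integral_map (measurable_const_smul (Real.sqrt (v : ℝ))).aemeasurable
    hF.aestronglyMeasurable

end D

section Sup
open MeasureTheory

variable {n : ℕ} {S : Set (EuclideanSpace ℝ (Fin n))} {R : ℝ}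

lemma memSup_le (hb : ∀ X ∈ S, ‖X‖ ≤ R) (hR : 0 ≤ R)
    (w : EuclideanSpace ℝ (Fin n)) (X : EuclideanSpace ℝ (Fin n)) :
    (⨆ _ : X ∈ S, (inner ℝ X w : ℝ)) ≤ R * ‖w‖ := by
  by_cases hX : X ∈ S
  · rw [ciSup_pos hX]
    exact (real_inner_le_norm X w).trans
      (mul_le_mul_of_nonneg_right (hb X hX) (norm_nonneg w))
  · haveI : IsEmpty (X ∈ S) := ⟨hX⟩
    rw [Real.iSup_of_isEmpty]
    positivity

lemma sup_bddAbove (hb : ∀ X ∈ S, ‖X‖ ≤ R) (hR : 0 ≤ R) (w : EuclideanSpace ℝ (Fin n)) :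
    BddAbove (Set.range fun X => ⨆ _ : X ∈ S, (inner ℝ X w : ℝ)) := by
  refine ⟨R * ‖w‖, ?_⟩
  rintro _ ⟨X, rfl⟩
  exact memSup_le hb hR w X

lemma sup_le_R (hb : ∀ X ∈ S, ‖X‖ ≤ R) (hR : 0 ≤ R) (w : EuclideanSpace ℝ (Fin n)) :
    (⨆ X ∈ S, (inner ℝ X w : ℝ)) ≤ R * ‖w‖ :=
  Real.iSup_le (memSup_le hb hR w) (by positivity)

lemma le_sup_of_mem (hb : ∀ X ∈ S, ‖X‖ ≤ R) (hR : 0 ≤ R)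
    {Y : EuclideanSpace ℝ (Fin n)} (hY : Y ∈ S) (w : EuclideanSpace ℝ (Fin n)) :
    (inner ℝ Y w : ℝ) ≤ ⨆ X ∈ S, (inner ℝ X w : ℝ) := by
  have h2 := le_ciSup (sup_bddAbove hb hR w) Y
  rwa [ciSup_pos hY] at h2

lemma sup_lip (hb : ∀ X ∈ S, ‖X‖ ≤ R) (hR : 0 ≤ R) (w w' : EuclideanSpace ℝ (Fin n)) :
    (⨆ X ∈ S, (inner ℝ X w : ℝ)) ≤ (⨆ X ∈ S, (inner ℝ X w' : ℝ)) + R * ‖w - w'‖ := by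
  refine ciSup_le fun X => ?_
  by_cases hX : X ∈ S
  · rw [ciSup_pos hX]
    have h1 : (inner ℝ X w : ℝ) = inner ℝ X w' + (inner ℝ X (w - w') : ℝ) := by
      rw [inner_sub_right]; ring
    rw [h1]
    refine add_le_add (le_sup_of_mem hb hR hX w') ?_
    exact (real_inner_le_norm X (w - w')).trans
      (mul_le_mul_of_nonneg_right (hb X hX) (norm_nonneg _))
  · haveI : IsEmpty (X ∈ S) := ⟨hX⟩
    rw [Real.iSup_of_isEmpty]
    have h0 : (⨆ _ : X ∈ S, (inner ℝ X w' : ℝ)) ≤ ⨆ X ∈ S, (inner ℝ X w' : ℝ) :=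
      le_ciSup (sup_bddAbove hb hR w') X
    rw [Real.iSup_of_isEmpty] at h0
    have : (0 : ℝ) ≤ R * ‖w - w'‖ := by positivity
    linarith

lemma sup_continuous (hb : ∀ X ∈ S, ‖X‖ ≤ R) (hR : 0 ≤ R) :
    Continuous (fun w : EuclideanSpace ℝ (Fin n) => ⨆ X ∈ S, (inner ℝ X w : ℝ)) := by
  refine (LipschitzWith.of_dist_le_mul (K := R.toNNReal) fun w w' => ?_).continuous
  rw [Real.dist_eq, Real.coe_toNNReal R hR, dist_eq_norm]
  rw [abs_sub_le_iff]
  constructor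
  · linarith [sup_lip hb hR w w']
  · have := sup_lip hb hR w' w
    rw [norm_sub_rev] at this
    linarith

lemma sup_smul (hσ : 0 ≤ (σ : ℝ)) (w : EuclideanSpace ℝ (Fin n)) :
    (⨆ X ∈ S, (inner ℝ X (σ • w) : ℝ)) = σ * ⨆ X ∈ S, (inner ℝ X w : ℝ) := by
  rw [Real.mul_iSup_of_nonneg hσ]
  refine iSup_congr fun X => ?_
  rw [Real.mul_iSup_of_nonneg hσ]
  exact iSup_congr fun _ => real_inner_smul_right X w σ

end Sup

section Proj
variable {E : Type*} [NormedAddCommGroup E] [InnerProductSpace ℝ E]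

lemma nearest_inner_le {K : Set E} (hK : Convex ℝ K) {x p : E} (hp : p ∈ K)
    (hmin : ∀ y ∈ K, ‖x - p‖ ≤ ‖x - y‖) : ∀ y ∈ K, (inner ℝ (x - p) (y - p) : ℝ) ≤ 0 := by
  haveI : Nonempty K := ⟨⟨p, hp⟩⟩
  have heq : ‖x - p‖ = ⨅ w : K, ‖x - w‖ :=
    le_antisymm (le_ciInf fun w => hmin w w.2)
      (ciInf_le (⟨0, by rintro _ ⟨w, rfl⟩; exact norm_nonneg _⟩ : BddBelow (Set.range fun w : K => ‖x - (w : E)‖)) ⟨p, hp⟩)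
  exact (norm_eq_iInf_iff_real_inner_le_zero hK hp).mp heq

lemma nearest_firm {K : Set E} (hK : Convex ℝ K) {x₁ x₂ p₁ p₂ : E}
    (hp₁ : p₁ ∈ K) (hm₁ : ∀ y ∈ K, ‖x₁ - p₁‖ ≤ ‖x₁ - y‖)
    (hp₂ : p₂ ∈ K) (hm₂ : ∀ y ∈ K, ‖x₂ - p₂‖ ≤ ‖x₂ - y‖) :
    ‖p₁ - p₂‖ ^ 2 ≤ (inner ℝ (x₁ - x₂) (p₁ - p₂) : ℝ) := by
  have hA := nearest_inner_le hK hp₁ hm₁ p₂ hp₂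
  have hB := nearest_inner_le hK hp₂ hm₂ p₁ hp₁
  have hx : (inner ℝ (x₁ - x₂) (p₁ - p₂) : ℝ)
      = ‖p₁ - p₂‖ ^ 2 - (inner ℝ (x₁ - p₁) (p₂ - p₁) : ℝ)
        - (inner ℝ (x₂ - p₂) (p₁ - p₂) : ℝ) := by
    have h1 : x₁ - x₂ = (x₁ - p₁) + (p₁ - p₂) + (p₂ - x₂) := by abel
    rw [h1, inner_add_left, inner_add_left, real_inner_self_eq_norm_sq]
    have h2 : (inner ℝ (x₁ - p₁) (p₁ - p₂) : ℝ) = -(inner ℝ (x₁ - p₁) (p₂ - p₁) : ℝ) := by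
      rw [← inner_neg_right]
      congr 1
      abel
    have h3 : (inner ℝ (p₂ - x₂) (p₁ - p₂) : ℝ) = -(inner ℝ (x₂ - p₂) (p₁ - p₂) : ℝ) := by
      rw [← inner_neg_left]
      congr 1
      abel
    rw [h2, h3]
    ring
  linarith

lemma nearest_lip {K : Set E} (hK : Convex ℝ K) {x₁ x₂ p₁ p₂ : E}
    (hp₁ : p₁ ∈ K) (hm₁ : ∀ y ∈ K, ‖x₁ - p₁‖ ≤ ‖x₁ - y‖)
    (hp₂ : p₂ ∈ K) (hm₂ : ∀ y ∈ K, ‖x₂ - p₂‖ ≤ ‖x₂ - y‖) :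
    ‖p₁ - p₂‖ ≤ ‖x₁ - x₂‖ := by
  have h := nearest_firm hK hp₁ hm₁ hp₂ hm₂
  have hcs := real_inner_le_norm (x₁ - x₂) (p₁ - p₂)
  nlinarith [norm_nonneg (p₁ - p₂), norm_nonneg (x₁ - x₂)]

end Proj


/-- Utility of perturb-and-alternately-project, conditional form. -/
theorem perturb_and_alternately_project_utility
    (n q : ℕ) (hq : 1 ≤ q) (C : ℝ) (hC : 0 ≤ C)
    (Sl : Fin q → Set (EuclideanSpace ℝ (Fin n)))
    (hSl : ∀ ℓ, (Sl ℓ).Nonempty ∧ IsCompact (Sl ℓ) ∧ Convex ℝ (Sl ℓ))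
    (S : Set (EuclideanSpace ℝ (Fin n))) (hSdef : S = ⋂ ℓ, Sl ℓ) (hSne : S.Nonempty)
    (hSball : S ⊆ {X | ‖X‖ ^ 2 ≤ (n : ℝ) ^ C})
    (projS : EuclideanSpace ℝ (Fin n) → EuclideanSpace ℝ (Fin n))
    (hprojS : ∀ x, projS x ∈ S ∧ ∀ y ∈ S, ‖x - projS x‖ ≤ ‖x - y‖)
    (projl : Fin q → EuclideanSpace ℝ (Fin n) → EuclideanSpace ℝ (Fin n))
    (hprojl : ∀ ℓ x, projl ℓ x ∈ Sl ℓ ∧ ∀ y ∈ Sl ℓ, ‖x - projl ℓ x‖ ≤ ‖x - y‖)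
    (iter : ℕ → EuclideanSpace ℝ (Fin n) → EuclideanSpace ℝ (Fin n))
    (hiter0 : ∀ x, iter 0 x = x)
    (hiterSucc : ∀ (s : ℕ) x, iter (s + 1) x = (q : ℝ)⁻¹ • ∑ ℓ, projl ℓ (iter s x))
    (c : ℝ) (hc : c ∈ Set.Ioo (0 : ℝ) 1)
    (hcontract : ∀ x (s : ℕ), 1 ≤ s → ‖projS x - iter s x‖ ≤ c ^ s * ‖projS x - x‖)
    (ε δ Δ : ℝ) (hε : ε ∈ Set.Ioc (0 : ℝ) 1) (hδ : δ ∈ Set.Ioc (0 : ℝ) 1) (hΔ : 0 < Δ)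
    (σ2 : NNReal) (hσ2 : (σ2 : ℝ) = 2 * Real.log (2 / δ) * Δ ^ 2 / ε ^ 2)
    (t : ℕ) (ht : 1 ≤ t)
    (htLarge : 2 * c ^ (2 * t) * (4 * (σ2 : ℝ) * n + 2 * (n : ℝ) ^ C) ≤ (n : ℝ) ^ (-10 : ℝ))
    (A : EuclideanSpace ℝ (Fin n)) :
    ∫ w, ‖iter t (A + w) - projS A‖ ^ 2 ∂(gaussianE n σ2)
      ≤ 16 * Real.sqrt (Real.log (2 / δ)) / (3 * ε) * Δ * gaussComplexity S
        + 8 * c ^ (2 * t) * ‖A‖ ^ 2 + (n : ℝ) ^ (-10 : ℝ) := by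
  obtain ⟨Y₀, hY₀⟩ := hSne
  obtain ⟨hc0, hc1⟩ := hc
  have hε0 : (0 : ℝ) < ε := hε.1
  have hSconv : Convex ℝ S := hSdef ▸ convex_iInter fun ℓ => (hSl ℓ).2.2
  set R : ℝ := Real.sqrt ((n : ℝ) ^ C) with hRdef
  have hR0 : 0 ≤ R := Real.sqrt_nonneg _
  have hnC0 : (0 : ℝ) ≤ (n : ℝ) ^ C := Real.rpow_nonneg (Nat.cast_nonneg n) C
  have hRsq : R ^ 2 = (n : ℝ) ^ C := Real.sq_sqrt hnC0
  have hb : ∀ X ∈ S, ‖X‖ ≤ R := by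
    intro X hX
    have h1 : ‖X‖ ^ 2 ≤ (n : ℝ) ^ C := hSball hX
    have h2 := Real.sqrt_le_sqrt h1
    rwa [Real.sqrt_sq (norm_nonneg X)] at h2
  set P0 := projS A with hP0def
  have hP0S : P0 ∈ S := (hprojS A).1
  have hP0n : ‖P0‖ ≤ R := hb _ hP0S
  -- continuity of the iterates
  have hiterCont : ∀ s : ℕ, Continuous (iter s) := by
    intro s
    induction s with
    | zero =>
      have h : iter 0 = fun x => x := funext hiter0
      rw [h]; exact continuous_id
    | succ s ih =>
      have h : iter (s + 1) = fun x => (q : ℝ)⁻¹ • ∑ ℓ, projl ℓ (iter s x) :=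
        funext (hiterSucc s)
      rw [h]
      refine (continuous_const_smul ((q : ℝ)⁻¹)).comp (f := fun x => ∑ ℓ, projl ℓ (iter s x)) ?_
      refine continuous_finset_sum _ fun ℓ _ => ?_
      have hl : Continuous (projl ℓ) := by
        refine (LipschitzWith.of_dist_le_mul (K := 1) fun x y => ?_).continuous
        rw [dist_eq_norm, dist_eq_norm, NNReal.coe_one, one_mul]
        exact nearest_lip (hSl ℓ).2.2 (hprojl ℓ x).1 (hprojl ℓ x).2
          (hprojl ℓ y).1 (hprojl ℓ y).2
      exact hl.comp ih
  -- pointwise key bound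
  set D : ℝ := 2 * c ^ (2 * t) * (2 * (n : ℝ) ^ C + 4 * ‖A‖ ^ 2) with hDdef
  have key : ∀ w : EuclideanSpace ℝ (Fin n),
      ‖iter t (A + w) - P0‖ ^ 2
        ≤ D + 8 * c ^ (2 * t) * ‖w‖ ^ 2 + 2 * (⨆ X ∈ S, (inner ℝ X w : ℝ))
            - 2 * (inner ℝ P0 w : ℝ) := by
    intro w
    set X := A + w with hXdef
    set P1 := projS X with hP1def
    have hP1S : P1 ∈ S := (hprojS X).1
    have hfirm : ‖P1 - P0‖ ^ 2 ≤ (inner ℝ (X - A) (P1 - P0) : ℝ) :=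
      nearest_firm hSconv (hprojS X).1 (hprojS X).2 (hprojS A).1 (hprojS A).2
    have hXA : X - A = w := by rw [hXdef]; abel
    rw [hXA] at hfirm
    have hinner : (inner ℝ w (P1 - P0) : ℝ) = (inner ℝ P1 w : ℝ) - (inner ℝ P0 w : ℝ) := by
      rw [inner_sub_right, real_inner_comm w P1, real_inner_comm w P0]
    have hφ1 : (inner ℝ P1 w : ℝ) ≤ ⨆ X ∈ S, (inner ℝ X w : ℝ) := le_sup_of_mem hb hR0 hP1S w
    have h1 : ‖P1 - P0‖ ^ 2 ≤ (⨆ X ∈ S, (inner ℝ X w : ℝ)) - (inner ℝ P0 w : ℝ) := by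
      rw [hinner] at hfirm; linarith only [hfirm, hφ1]
    have hcontr := hcontract X t ht
    rw [← hP1def] at hcontr
    have hP1X : ‖P1 - X‖ ≤ R + ‖A‖ + ‖w‖ := by
      have e1 : ‖P1 - X‖ = ‖X - P1‖ := norm_sub_rev _ _
      have e2 : ‖X - P1‖ ≤ ‖X - P0‖ := (hprojS X).2 P0 hP0S
      have e3 : X - P0 = w + (A - P0) := by rw [hXdef]; abel
      have e4 : ‖w + (A - P0)‖ ≤ ‖w‖ + ‖A - P0‖ := norm_add_le _ _
      have e5 : ‖A - P0‖ ≤ ‖A‖ + ‖P0‖ := norm_sub_le _ _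
      have e6 : ‖X - P0‖ ≤ ‖w‖ + ‖A - P0‖ := by rw [e3]; exact e4
      rw [e1]
      linarith only [e2, e6, e5, hP0n]
    have s1 : ‖P1 - iter t X‖ ^ 2 ≤ (c ^ t) ^ 2 * ‖P1 - X‖ ^ 2 := by
      nlinarith only [hcontr, norm_nonneg (P1 - iter t X),
        sq_nonneg (c ^ t * ‖P1 - X‖ - ‖P1 - iter t X‖)]
    have s2 : ‖P1 - X‖ ^ 2 ≤ 2 * (n : ℝ) ^ C + 4 * ‖A‖ ^ 2 + 4 * ‖w‖ ^ 2 := by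
      nlinarith only [hP1X, norm_nonneg (P1 - X), hR0, norm_nonneg A, norm_nonneg w,
        sq_nonneg (R - ‖A‖ - ‖w‖), sq_nonneg (‖A‖ - ‖w‖), hRsq]
    have tri : ‖iter t X - P0‖ ≤ ‖P1 - iter t X‖ + ‖P1 - P0‖ := by
      have e : iter t X - P0 = -(P1 - iter t X) + (P1 - P0) := by abel
      rw [e]
      exact (norm_add_le _ _).trans (by rw [norm_neg])
    have s3 : ‖iter t X - P0‖ ^ 2 ≤ 2 * ‖P1 - iter t X‖ ^ 2 + 2 * ‖P1 - P0‖ ^ 2 := by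
      nlinarith only [tri, norm_nonneg (iter t X - P0), norm_nonneg (P1 - iter t X),
        norm_nonneg (P1 - P0), sq_nonneg (‖P1 - iter t X‖ - ‖P1 - P0‖)]
    have hc2t : c ^ (2 * t) = (c ^ t) ^ 2 := by rw [mul_comm 2 t, pow_mul]
    have s4 : (c ^ t) ^ 2 * ‖P1 - X‖ ^ 2
        ≤ (c ^ t) ^ 2 * (2 * (n : ℝ) ^ C + 4 * ‖A‖ ^ 2 + 4 * ‖w‖ ^ 2) :=
      mul_le_mul_of_nonneg_left s2 (sq_nonneg _)
    rw [hDdef, hc2t]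
    nlinarith only [s1, s3, s4, h1]
  -- integrability
  have hφcont : Continuous (fun w : EuclideanSpace ℝ (Fin n) => ⨆ X ∈ S, (inner ℝ X w : ℝ)) :=
    sup_continuous hb hR0
  have hφint : ∀ v : NNReal,
      Integrable (fun w => ⨆ X ∈ S, (inner ℝ X w : ℝ)) (gaussianE n v) := by
    intro v
    refine Integrable.mono' ((integrable_norm_gaussianE n v).const_mul R)
      hφcont.aestronglyMeasurable ?_
    refine Filter.Eventually.of_forall fun w => ?_
    rw [Real.norm_eq_abs, abs_le]
    constructor
    · have h1 := le_sup_of_mem hb hR0 hY₀ w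
      have h3 := abs_real_inner_le_norm Y₀ w
      have h4 : ‖Y₀‖ * ‖w‖ ≤ R * ‖w‖ :=
        mul_le_mul_of_nonneg_right (hb _ hY₀) (norm_nonneg w)
      have h5 := neg_abs_le (inner ℝ Y₀ w : ℝ)
      linarith only [h1, h3, h4, h5]
    · exact sup_le_R hb hR0 w
  have hf_int : Integrable (fun w => D + 8 * c ^ (2 * t) * ‖w‖ ^ 2
      + 2 * (⨆ X ∈ S, (inner ℝ X w : ℝ)) - 2 * (inner ℝ P0 w : ℝ)) (gaussianE n σ2) := by
    refine Integrable.sub ?_ ((integrable_inner_gaussianE n σ2 P0).const_mul 2)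
    refine Integrable.add ?_ ((hφint σ2).const_mul 2)
    exact (integrable_const D).add
      ((integrable_norm_sq_gaussianE n σ2).const_mul (8 * c ^ (2 * t)))
  have hg_cont : Continuous (fun w : EuclideanSpace ℝ (Fin n) => ‖iter t (A + w) - P0‖ ^ 2) := by
    have h1 : Continuous fun w : EuclideanSpace ℝ (Fin n) => iter t (A + w) - P0 :=
      ((hiterCont t).comp (continuous_const.add continuous_id)).sub continuous_const
    exact (h1.norm).pow 2
  have hg_int : Integrable (fun w => ‖iter t (A + w) - P0‖ ^ 2) (gaussianE n σ2) := by
    refine Integrable.mono' hf_int hg_cont.aestronglyMeasurable ?_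
    refine Filter.Eventually.of_forall fun w => ?_
    rw [Real.norm_eq_abs, abs_of_nonneg (by positivity)]
    exact key w
  have hmono := integral_mono hg_int hf_int key
  -- compute the integral of the bound
  have i0 : Integrable (fun w : EuclideanSpace ℝ (Fin n) => 8 * c ^ (2 * t) * ‖w‖ ^ 2)
      (gaussianE n σ2) := (integrable_norm_sq_gaussianE n σ2).const_mul (8 * c ^ (2 * t))
  have i1 : Integrable (fun w : EuclideanSpace ℝ (Fin n) => D + 8 * c ^ (2 * t) * ‖w‖ ^ 2)
      (gaussianE n σ2) := (integrable_const D).add i0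
  have iφ : Integrable (fun w : EuclideanSpace ℝ (Fin n) => 2 * ⨆ X ∈ S, (inner ℝ X w : ℝ))
      (gaussianE n σ2) := (hφint σ2).const_mul 2
  have i2 : Integrable (fun w : EuclideanSpace ℝ (Fin n) =>
      D + 8 * c ^ (2 * t) * ‖w‖ ^ 2 + 2 * ⨆ X ∈ S, (inner ℝ X w : ℝ)) (gaussianE n σ2) :=
    i1.add iφ
  have i3 : Integrable (fun w : EuclideanSpace ℝ (Fin n) => 2 * (inner ℝ P0 w : ℝ))
      (gaussianE n σ2) := (integrable_inner_gaussianE n σ2 P0).const_mul 2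
  have hIf : ∫ w, (D + 8 * c ^ (2 * t) * ‖w‖ ^ 2
      + 2 * (⨆ X ∈ S, (inner ℝ X w : ℝ)) - 2 * (inner ℝ P0 w : ℝ)) ∂(gaussianE n σ2)
      = D + 8 * c ^ (2 * t) * ((n : ℝ) * σ2)
        + 2 * ∫ w, (⨆ X ∈ S, (inner ℝ X w : ℝ)) ∂(gaussianE n σ2) := by
    rw [integral_sub i2 i3, integral_add i1 iφ, integral_add (integrable_const D) i0]
    rw [integral_const, integral_const_mul, integral_const_mul, integral_const_mul,
      integral_norm_sq_gaussianE, integral_inner_gaussianE]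
    simp [measure_univ]
  -- the Gaussian-complexity identity
  set σ : ℝ := Real.sqrt σ2 with hσdef
  have hσ0 : 0 ≤ σ := Real.sqrt_nonneg _
  have hIφ : ∫ w, (⨆ X ∈ S, (inner ℝ X w : ℝ)) ∂(gaussianE n σ2) = σ * gaussComplexity S := by
    rw [integral_gaussianE_smul n σ2 _ hφcont]
    have h1 : (fun w : EuclideanSpace ℝ (Fin n) =>
        ⨆ X ∈ S, (inner ℝ X ((Real.sqrt σ2 : ℝ) • w) : ℝ))
        = fun w => σ * ⨆ X ∈ S, (inner ℝ X w : ℝ) := by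
      funext w
      exact sup_smul hσ0 w
    rw [h1, gaussComplexity]
    have hstd : stdGaussianE n = gaussianE n 1 := rfl
    rw [integral_const_mul]
  -- nonnegativity of the Gaussian complexity
  have hGS : 0 ≤ gaussComplexity S := by
    rw [gaussComplexity]
    have hstd : stdGaussianE n = gaussianE n 1 := rfl
    have h0 : ∫ w, (inner ℝ Y₀ w : ℝ) ∂(stdGaussianE n) = 0 := by
      rw [hstd]; exact integral_inner_gaussianE n 1 Y₀
    rw [← h0]
    refine integral_mono ?_ ?_ ?_
    · rw [hstd]; exact integrable_inner_gaussianE n 1 Y₀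
    · rw [hstd]; exact hφint 1
    · exact fun w => le_sup_of_mem hb hR0 hY₀ w
  -- bound on sigma
  have hL0 : 0 ≤ Real.log (2 / δ) := by
    refine Real.log_nonneg ?_
    rw [le_div_iff₀ hδ.1]
    linarith [hδ.2]
  have h2σ : 2 * σ ≤ 16 * Real.sqrt (Real.log (2 / δ)) / (3 * ε) * Δ := by
    set L := Real.log (2 / δ) with hLdef
    have hLsq : Real.sqrt L ^ 2 = L := Real.sq_sqrt hL0
    have hRHS0 : 0 ≤ 16 * Real.sqrt L / (3 * ε) * Δ := by positivity
    have ha : 2 * σ = Real.sqrt (4 * σ2) := by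
      rw [show (4 : ℝ) * σ2 = 2 ^ 2 * σ2 by ring, Real.sqrt_mul (by norm_num) _,
        Real.sqrt_sq (by norm_num)]
    have hbb : 16 * Real.sqrt L / (3 * ε) * Δ
        = Real.sqrt ((16 * Real.sqrt L / (3 * ε) * Δ) ^ 2) := (Real.sqrt_sq hRHS0).symm
    rw [ha, hbb]
    refine Real.sqrt_le_sqrt ?_
    rw [hσ2]
    have h1 : (16 * Real.sqrt L / (3 * ε) * Δ) ^ 2 = 256 * L * Δ ^ 2 / (9 * ε ^ 2) := by
      rw [mul_pow, div_pow, mul_pow, mul_pow, hLsq]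
      ring
    rw [h1]
    have h2 : 4 * (2 * L * Δ ^ 2 / ε ^ 2) = 8 * L * Δ ^ 2 / ε ^ 2 := by ring
    rw [h2, div_le_div_iff₀ (by positivity) (by positivity)]
    nlinarith only [mul_nonneg (mul_nonneg hL0 (sq_nonneg Δ)) (sq_nonneg ε)]
  -- final assembly
  rw [hIφ] at hIf
  rw [hIf] at hmono
  have hGmul : 2 * (σ * gaussComplexity S)
      ≤ 16 * Real.sqrt (Real.log (2 / δ)) / (3 * ε) * Δ * gaussComplexity S := by
    have h := mul_le_mul_of_nonneg_right h2σ hGS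
    calc 2 * (σ * gaussComplexity S) = (2 * σ) * gaussComplexity S := by ring
      _ ≤ 16 * Real.sqrt (Real.log (2 / δ)) / (3 * ε) * Δ * gaussComplexity S := h
  have hD : D + 8 * c ^ (2 * t) * ((n : ℝ) * (σ2 : ℝ))
      ≤ 8 * c ^ (2 * t) * ‖A‖ ^ 2 + (n : ℝ) ^ (-10 : ℝ) := by
    rw [hDdef]
    nlinarith only [htLarge]
  linarith only [hmono, hGmul, hD]
end

section
/- Let M ∈ ℝ^{n×n} be a symmetric matrix with spectral decomposition M = ∑_i λ_i u_i u_iᵀ, and let M₊ := ∑_{i : λ_i > 0} λ_i u_i u_iᵀ be its positive part. Then for every R > 0, the Frobenius-norm projection of M onto the set S := {X ∈ ℝ^{n×n} : X symmetric positive semidefinite, ‖X‖_F ≤ R} equals min(1, R/‖M₊‖_F)·M₊ (interpreted as 0 when M₊ = 0). In particular, the projection of M onto the positive semidefinite cone is M₊, obtained by zeroing out the negative eigenvalues. -/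
open Matrix

/-- Frobenius (trace) inner product `⟨A, B⟩ = ∑_{i,j} A_{ij}·B_{ij}`. -/
def frobInner {n : ℕ} (A B : Matrix (Fin n) (Fin n) ℝ) : ℝ :=
  ∑ i, ∑ j, A i j * B i j

/-- Frobenius norm of a matrix. -/
noncomputable def frobNorm {n : ℕ} (A : Matrix (Fin n) (Fin n) ℝ) : ℝ :=
  Real.sqrt (∑ i, ∑ j, A i j ^ 2)
namespace ProjAux

variable {n : ℕ}

lemma frobInner_comm (A B : Matrix (Fin n) (Fin n) ℝ) : frobInner A B = frobInner B A := by
  unfold frobInner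
  exact Finset.sum_congr rfl fun i _ => Finset.sum_congr rfl fun j _ => mul_comm _ _

lemma frobInner_self_nonneg (A : Matrix (Fin n) (Fin n) ℝ) : 0 ≤ frobInner A A :=
  Finset.sum_nonneg fun i _ => Finset.sum_nonneg fun j _ => mul_self_nonneg _

lemma frobInner_self_eq_zero {A : Matrix (Fin n) (Fin n) ℝ} (h : frobInner A A = 0) : A = 0 := by
  unfold frobInner at h
  ext i j
  have h1 := (Finset.sum_eq_zero_iff_of_nonneg (fun i _ =>
    Finset.sum_nonneg fun j _ => mul_self_nonneg (A i j))).mp h i (Finset.mem_univ i)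
  have h2 := (Finset.sum_eq_zero_iff_of_nonneg (fun j _ =>
    mul_self_nonneg (A i j))).mp h1 j (Finset.mem_univ j)
  simpa using mul_self_eq_zero.mp h2

lemma frobInner_add_left (A B C : Matrix (Fin n) (Fin n) ℝ) :
    frobInner (A + B) C = frobInner A C + frobInner B C := by
  unfold frobInner
  rw [← Finset.sum_add_distrib]
  refine Finset.sum_congr rfl fun i _ => ?_
  rw [← Finset.sum_add_distrib]
  exact Finset.sum_congr rfl fun j _ => by simp [Matrix.add_apply, add_mul]

lemma frobInner_sub_left (A B C : Matrix (Fin n) (Fin n) ℝ) :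
    frobInner (A - B) C = frobInner A C - frobInner B C := by
  unfold frobInner
  rw [← Finset.sum_sub_distrib]
  refine Finset.sum_congr rfl fun i _ => ?_
  rw [← Finset.sum_sub_distrib]
  exact Finset.sum_congr rfl fun j _ => by simp [Matrix.sub_apply, sub_mul]

lemma frobInner_smul_left (c : ℝ) (A B : Matrix (Fin n) (Fin n) ℝ) :
    frobInner (c • A) B = c * frobInner A B := by
  unfold frobInner
  rw [Finset.mul_sum]
  refine Finset.sum_congr rfl fun i _ => ?_
  rw [Finset.mul_sum]
  exact Finset.sum_congr rfl fun j _ => by simp [Matrix.smul_apply, mul_assoc]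

lemma frobInner_add_right (A B C : Matrix (Fin n) (Fin n) ℝ) :
    frobInner A (B + C) = frobInner A B + frobInner A C := by
  rw [frobInner_comm, frobInner_add_left, frobInner_comm B A, frobInner_comm C A]

lemma frobInner_sub_right (A B C : Matrix (Fin n) (Fin n) ℝ) :
    frobInner A (B - C) = frobInner A B - frobInner A C := by
  rw [frobInner_comm, frobInner_sub_left, frobInner_comm B A, frobInner_comm C A]

lemma frobInner_smul_right (c : ℝ) (A B : Matrix (Fin n) (Fin n) ℝ) :
    frobInner A (c • B) = c * frobInner A B := by
  rw [frobInner_comm, frobInner_smul_left, frobInner_comm B A]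

lemma frobInner_sum_left {ι : Type*} (s : Finset ι) (F : ι → Matrix (Fin n) (Fin n) ℝ)
    (B : Matrix (Fin n) (Fin n) ℝ) :
    frobInner (∑ i ∈ s, F i) B = ∑ i ∈ s, frobInner (F i) B := by
  classical
  induction s using Finset.induction with
  | empty => simp [frobInner]
  | insert _ _ h ih => rw [Finset.sum_insert h, frobInner_add_left, ih, Finset.sum_insert h]

lemma frobInner_sum_right {ι : Type*} (s : Finset ι) (F : ι → Matrix (Fin n) (Fin n) ℝ)
    (B : Matrix (Fin n) (Fin n) ℝ) :
    frobInner B (∑ i ∈ s, F i) = ∑ i ∈ s, frobInner B (F i) := by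
  rw [frobInner_comm, frobInner_sum_left]
  exact Finset.sum_congr rfl fun i _ => frobInner_comm _ _

lemma frobNorm_eq (A : Matrix (Fin n) (Fin n) ℝ) :
    frobNorm A = Real.sqrt (frobInner A A) := by
  unfold frobNorm frobInner
  congr 1
  exact Finset.sum_congr rfl fun i _ => Finset.sum_congr rfl fun j _ => sq (A i j)

lemma frobNorm_nonneg (A : Matrix (Fin n) (Fin n) ℝ) : 0 ≤ frobNorm A := Real.sqrt_nonneg _

lemma frobNorm_sq (A : Matrix (Fin n) (Fin n) ℝ) : frobNorm A ^ 2 = frobInner A A := by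
  rw [frobNorm_eq, Real.sq_sqrt (frobInner_self_nonneg A)]

lemma frobInner_prod (A B : Matrix (Fin n) (Fin n) ℝ) :
    frobInner A B = ∑ p : Fin n × Fin n, A p.1 p.2 * B p.1 p.2 :=
  (Fintype.sum_prod_type (f := fun p => A p.1 p.2 * B p.1 p.2)).symm

lemma frobNorm_prod (A : Matrix (Fin n) (Fin n) ℝ) :
    frobNorm A = Real.sqrt (∑ p : Fin n × Fin n, A p.1 p.2 ^ 2) := by
  unfold frobNorm
  rw [Fintype.sum_prod_type (f := fun p => A p.1 p.2 ^ 2)]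

lemma frobInner_le (A B : Matrix (Fin n) (Fin n) ℝ) :
    frobInner A B ≤ frobNorm A * frobNorm B := by
  rw [frobInner_prod, frobNorm_prod, frobNorm_prod]
  have hcs := Finset.sum_mul_sq_le_sq_mul_sq Finset.univ
    (fun p : Fin n × Fin n => A p.1 p.2) (fun p : Fin n × Fin n => B p.1 p.2)
  calc ∑ p : Fin n × Fin n, A p.1 p.2 * B p.1 p.2
      ≤ |∑ p : Fin n × Fin n, A p.1 p.2 * B p.1 p.2| := le_abs_self _
    _ = Real.sqrt ((∑ p : Fin n × Fin n, A p.1 p.2 * B p.1 p.2) ^ 2) := by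
        rw [Real.sqrt_sq_eq_abs]
    _ ≤ Real.sqrt ((∑ p : Fin n × Fin n, A p.1 p.2 ^ 2) * ∑ p : Fin n × Fin n, B p.1 p.2 ^ 2) :=
        Real.sqrt_le_sqrt hcs
    _ = _ := Real.sqrt_mul (Finset.sum_nonneg fun p _ => sq_nonneg _) _

lemma expand_add (A B : Matrix (Fin n) (Fin n) ℝ) :
    frobInner (A + B) (A + B) = frobInner A A + 2 * frobInner A B + frobInner B B := by
  rw [frobInner_add_left, frobInner_add_right, frobInner_add_right, frobInner_comm B A]
  ring

lemma expand_sub (A B : Matrix (Fin n) (Fin n) ℝ) :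
    frobInner (A - B) (A - B) = frobInner A A - 2 * frobInner A B + frobInner B B := by
  rw [frobInner_sub_left, frobInner_sub_right, frobInner_sub_right, frobInner_comm B A]
  ring

lemma frobNorm_smul (t : ℝ) (A : Matrix (Fin n) (Fin n) ℝ) :
    frobNorm (t • A) = |t| * frobNorm A := by
  rw [frobNorm_eq, frobNorm_eq, frobInner_smul_left, frobInner_smul_right, ← mul_assoc,
    Real.sqrt_mul (mul_self_nonneg t), Real.sqrt_mul_self_eq_abs]

lemma frobNorm_add_le (A B : Matrix (Fin n) (Fin n) ℝ) :
    frobNorm (A + B) ≤ frobNorm A + frobNorm B := by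
  have h : frobInner (A + B) (A + B) ≤ (frobNorm A + frobNorm B) ^ 2 := by
    rw [expand_add]
    have h1 := frobInner_le A B
    nlinarith [frobNorm_sq A, frobNorm_sq B]
  calc frobNorm (A + B) = Real.sqrt (frobInner (A + B) (A + B)) := frobNorm_eq _
    _ ≤ Real.sqrt ((frobNorm A + frobNorm B) ^ 2) := Real.sqrt_le_sqrt h
    _ = _ := Real.sqrt_sq (add_nonneg (frobNorm_nonneg A) (frobNorm_nonneg B))

lemma frobInner_WW (v w : Fin n → ℝ) :
    frobInner (vecMulVec v v) (vecMulVec w w) = (v ⬝ᵥ w) ^ 2 := by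
  unfold frobInner
  simp only [vecMulVec_apply, dotProduct]
  rw [sq, Finset.sum_mul_sum]
  exact Finset.sum_congr rfl fun a _ => Finset.sum_congr rfl fun b _ => by ring

lemma frobInner_X_W (X : Matrix (Fin n) (Fin n) ℝ) (v : Fin n → ℝ) :
    frobInner X (vecMulVec v v) = v ⬝ᵥ (X *ᵥ v) := by
  unfold frobInner
  simp only [vecMulVec_apply, dotProduct, mulVec, Finset.mul_sum]
  exact Finset.sum_congr rfl fun a _ => Finset.sum_congr rfl fun b _ => by ring

lemma psd_quad_nonneg {X : Matrix (Fin n) (Fin n) ℝ} (hX : X.PosSemidef) (v : Fin n → ℝ) :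
    0 ≤ v ⬝ᵥ (X *ᵥ v) := by simpa using hX.dotProduct_mulVec_nonneg v

lemma psd_smul {X : Matrix (Fin n) (Fin n) ℝ} (hX : X.PosSemidef) {t : ℝ} (ht : 0 ≤ t) :
    (t • X).PosSemidef := by
  refine PosSemidef.of_dotProduct_mulVec_nonneg ?_ fun v => ?_
  · have h1 := hX.1
    unfold Matrix.IsHermitian at h1 ⊢
    rw [conjTranspose_smul, h1]
    simp
  · rw [smul_mulVec, dotProduct_smul]
    exact mul_nonneg ht (hX.dotProduct_mulVec_nonneg v)

lemma psd_add {X Y : Matrix (Fin n) (Fin n) ℝ} (hX : X.PosSemidef) (hY : Y.PosSemidef) :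
    (X + Y).PosSemidef := by
  refine PosSemidef.of_dotProduct_mulVec_nonneg ?_ fun v => ?_
  · unfold Matrix.IsHermitian at *
    rw [conjTranspose_add, hX.1, hY.1]
  · rw [add_mulVec, dotProduct_add]
    exact add_nonneg (hX.dotProduct_mulVec_nonneg v) (hY.dotProduct_mulVec_nonneg v)

lemma key1 (u : Fin n → Fin n → ℝ)
    (hortho : ∀ i j, u i ⬝ᵥ u j = if i = j then (1 : ℝ) else 0)
    (c d : Fin n → ℝ) :
    frobInner (∑ i, c i • vecMulVec (u i) (u i)) (∑ j, d j • vecMulVec (u j) (u j))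
      = ∑ i, c i * d i := by
  rw [frobInner_sum_left]
  refine Finset.sum_congr rfl fun i _ => ?_
  rw [frobInner_smul_left, frobInner_sum_right]
  have h : ∀ j, frobInner (vecMulVec (u i) (u i)) (d j • vecMulVec (u j) (u j))
      = if i = j then d j else 0 := fun j => by
    rw [frobInner_smul_right, frobInner_WW, hortho]
    split_ifs <;> norm_num
  rw [Finset.sum_congr rfl fun j _ => h j, Finset.sum_ite_eq Finset.univ i d]
  simp

lemma key2 (u : Fin n → Fin n → ℝ) (c : Fin n → ℝ) (X : Matrix (Fin n) (Fin n) ℝ) :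
    frobInner X (∑ i, c i • vecMulVec (u i) (u i))
      = ∑ i, c i * (u i ⬝ᵥ (X *ᵥ u i)) := by
  rw [frobInner_sum_right]
  exact Finset.sum_congr rfl fun i _ => by rw [frobInner_smul_right, frobInner_X_W]

end ProjAux

open ProjAux

/-- for a symmetric matrix `M = ∑ᵢ λᵢ uᵢuᵢᵀ` (with `u` an orthonormal
system of eigenvectors) and its positive part `M₊ = ∑_{i : λᵢ > 0} λᵢ uᵢuᵢᵀ`,
for every `R > 0` the Frobenius projection of `M` onto
`S = {X PSD : ‖X‖_F ≤ R}` equals `min(1, R/‖M₊‖_F)·M₊`; in particular the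
projection of `M` onto the PSD cone is `M₊`. -/
theorem projection_onto_psd_ball
    (n : ℕ) (M : Matrix (Fin n) (Fin n) ℝ) (hM : M.IsSymm)
    (lam : Fin n → ℝ) (u : Fin n → (Fin n → ℝ))
    (hortho : ∀ i j, u i ⬝ᵥ u j = if i = j then (1 : ℝ) else 0)
    (hdecomp : M = ∑ i, lam i • Matrix.vecMulVec (u i) (u i))
    (Mplus : Matrix (Fin n) (Fin n) ℝ)
    (hMplus : Mplus = ∑ i, max (lam i) 0 • Matrix.vecMulVec (u i) (u i)) :
    (∀ R : ℝ, 0 < R →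
      ∀ P : Matrix (Fin n) (Fin n) ℝ,
        (P.PosSemidef ∧ frobNorm P ≤ R ∧
          ∀ X : Matrix (Fin n) (Fin n) ℝ, X.PosSemidef → frobNorm X ≤ R →
            frobInner (M - P) (M - P) ≤ frobInner (M - X) (M - X))
          ↔ P = min 1 (R / frobNorm Mplus) • Mplus)
    ∧ Mplus.PosSemidef
    ∧ ∀ X : Matrix (Fin n) (Fin n) ℝ, X.PosSemidef →
        frobInner (M - Mplus) (M - Mplus) ≤ frobInner (M - X) (M - X) := by
  classical
  have hMplusPSD : Mplus.PosSemidef := by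
    refine PosSemidef.of_dotProduct_mulVec_nonneg ?_ ?_
    · unfold Matrix.IsHermitian
      rw [hMplus]
      ext i j
      simp only [conjTranspose_apply, Matrix.sum_apply, Matrix.smul_apply, vecMulVec_apply,
        smul_eq_mul, star_trivial]
      exact Finset.sum_congr rfl fun k _ => by ring
    · intro v
      have hsv : star v = v := by ext k; simp
      rw [hsv, ← frobInner_X_W, frobInner_comm, hMplus, frobInner_sum_right]
      refine Finset.sum_nonneg fun i _ => ?_
      rw [frobInner_smul_right, frobInner_WW]
      exact mul_nonneg (le_max_right _ _) (sq_nonneg _)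
  have hD : M - Mplus = ∑ i, min (lam i) 0 • vecMulVec (u i) (u i) := by
    rw [hdecomp, hMplus, ← Finset.sum_sub_distrib]
    refine Finset.sum_congr rfl fun i _ => ?_
    rw [← sub_smul]
    congr 1
    rcases le_total (lam i) 0 with h | h
    · rw [max_eq_right h, min_eq_left h, sub_zero]
    · rw [max_eq_left h, min_eq_right h, sub_self]
  have hDM : frobInner (M - Mplus) Mplus = 0 := by
    rw [hD, hMplus, key1 u hortho]
    refine Finset.sum_eq_zero fun i _ => ?_
    rcases le_total (lam i) 0 with h | h
    · rw [max_eq_right h, mul_zero]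
    · rw [min_eq_right h, zero_mul]
  have hDX : ∀ X : Matrix (Fin n) (Fin n) ℝ, X.PosSemidef → frobInner (M - Mplus) X ≤ 0 := by
    intro X hX
    rw [frobInner_comm, hD, key2]
    refine Finset.sum_nonpos fun i _ => ?_
    have h1 := psd_quad_nonneg hX (u i)
    have h2 : min (lam i) 0 ≤ 0 := min_le_right _ _
    nlinarith
  have hsplit : ∀ X : Matrix (Fin n) (Fin n) ℝ,
      frobInner (M - X) (M - X)
        = frobInner (M - Mplus) (M - Mplus)
          + 2 * frobInner (M - Mplus) (Mplus - X)
          + frobInner (Mplus - X) (Mplus - X) := by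
    intro X
    have h : M - X = (M - Mplus) + (Mplus - X) := by abel
    rw [h, expand_add]
  have hge : ∀ X : Matrix (Fin n) (Fin n) ℝ, X.PosSemidef →
      frobInner (M - Mplus) (M - Mplus) + frobInner (Mplus - X) (Mplus - X)
        ≤ frobInner (M - X) (M - X) := by
    intro X hX
    have h1 := hsplit X
    have h2 : frobInner (M - Mplus) (Mplus - X) = frobInner (M - Mplus) Mplus
        - frobInner (M - Mplus) X := frobInner_sub_right _ _ _
    have h3 := hDX X hX
    rw [hDM] at h2
    linarith
  have hpart3 : ∀ X : Matrix (Fin n) (Fin n) ℝ, X.PosSemidef →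
      frobInner (M - Mplus) (M - Mplus) ≤ frobInner (M - X) (M - X) := by
    intro X hX
    have h1 := hge X hX
    have h2 := frobInner_self_nonneg (Mplus - X)
    linarith
  refine ⟨?_, hMplusPSD, hpart3⟩
  intro R hR P
  set ρ := frobNorm Mplus with hρ
  have hρ0 : 0 ≤ ρ := frobNorm_nonneg _
  set t := min 1 (R / ρ) with ht
  have ht0 : 0 ≤ t := le_min zero_le_one (div_nonneg hR.le hρ0)
  have hPstarPSD : (t • Mplus).PosSemidef := psd_smul hMplusPSD ht0
  have hPstarNorm : frobNorm (t • Mplus) ≤ R := by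
    rw [frobNorm_smul, abs_of_nonneg ht0, ← hρ]
    rcases eq_or_lt_of_le hρ0 with h | h
    · rw [← h, mul_zero]; exact hR.le
    · have h2 : t ≤ R / ρ := min_le_right _ _
      calc t * ρ ≤ (R / ρ) * ρ := mul_le_mul_of_nonneg_right h2 (le_of_lt h)
        _ = R := div_mul_cancel₀ R h.ne'
  have hMplusval : frobInner Mplus Mplus = ρ ^ 2 := (frobNorm_sq Mplus).symm
  have hPstarVal : frobInner (M - t • Mplus) (M - t • Mplus)
      = frobInner (M - Mplus) (M - Mplus) + (1 - t) ^ 2 * ρ ^ 2 := by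
    have h : M - t • Mplus = (M - Mplus) + (1 - t) • Mplus := by
      rw [sub_smul, one_smul]; abel
    rw [h, expand_add, frobInner_smul_right, hDM, frobInner_smul_left, frobInner_smul_right,
      hMplusval]
    ring
  have hlow : ∀ X : Matrix (Fin n) (Fin n) ℝ, frobNorm X ≤ R →
      (1 - t) ^ 2 * ρ ^ 2 ≤ frobInner (Mplus - X) (Mplus - X) := by
    intro X hXR
    rcases le_or_gt ρ R with hcase | hcase
    · have hzero : (1 - t) ^ 2 * ρ ^ 2 = 0 := by
        rcases eq_or_lt_of_le hρ0 with h | h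
        · rw [← h]; ring
        · have h1 : t = 1 := by
            rw [ht]
            exact min_eq_left ((one_le_div h).mpr hcase)
          rw [h1]; ring
      rw [hzero]
      exact frobInner_self_nonneg _
    · have hρpos : 0 < ρ := lt_trans hR hcase
      have htval : t = R / ρ := min_eq_right ((div_le_one hρpos).mpr hcase.le)
      have hXnn : 0 ≤ frobNorm X := frobNorm_nonneg X
      have hXsq : frobInner X X = frobNorm X ^ 2 := (frobNorm_sq X).symm
      have hCS : frobInner Mplus X ≤ ρ * frobNorm X := frobInner_le Mplus X
      have hexp : frobInner (Mplus - X) (Mplus - X)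
          = ρ ^ 2 - 2 * frobInner Mplus X + frobNorm X ^ 2 := by
        rw [expand_sub, hMplusval, hXsq]
      have h1t : (1 - t) * ρ = ρ - R := by
        rw [htval]
        field_simp
      have hkey : (1 - t) ^ 2 * ρ ^ 2 = (ρ - R) ^ 2 := by
        rw [← mul_pow, h1t]
      rw [hkey, hexp]
      nlinarith [hCS, hXR, hXnn, hcase, sq_nonneg (frobNorm X - R), sq_nonneg (ρ - frobNorm X)]
  have hopt : ∀ X : Matrix (Fin n) (Fin n) ℝ, X.PosSemidef → frobNorm X ≤ R →
      frobInner (M - t • Mplus) (M - t • Mplus) ≤ frobInner (M - X) (M - X) := by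
    intro X hX hXR
    have h1 := hge X hX
    have h2 := hlow X hXR
    rw [hPstarVal]
    linarith
  constructor
  · rintro ⟨hPpsd, hPR, hPmin⟩
    have h1 : frobInner (M - P) (M - P) ≤ frobInner (M - t • Mplus) (M - t • Mplus) :=
      hPmin _ hPstarPSD hPstarNorm
    have h2 := hopt P hPpsd hPR
    set Q := (2⁻¹ : ℝ) • (P + t • Mplus) with hQ
    have hQpsd : Q.PosSemidef := psd_smul (psd_add hPpsd hPstarPSD) (by norm_num)
    have hQR : frobNorm Q ≤ R := by
      rw [hQ, frobNorm_smul]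
      have h3 := frobNorm_add_le P (t • Mplus)
      rw [abs_of_nonneg (by norm_num : (0:ℝ) ≤ 2⁻¹)]
      linarith
    have hMQ : M - Q = (2⁻¹ : ℝ) • ((M - P) + (M - t • Mplus)) := by
      rw [hQ]
      ext i j
      simp only [Matrix.sub_apply, Matrix.add_apply, Matrix.smul_apply, smul_eq_mul]
      ring
    have hQval : frobInner (M - Q) (M - Q)
        = 4⁻¹ * (frobInner (M - P) (M - P)
            + 2 * frobInner (M - P) (M - t • Mplus)
            + frobInner (M - t • Mplus) (M - t • Mplus)) := by
      rw [hMQ, frobInner_smul_left, frobInner_smul_right, expand_add]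
      ring
    have hPPstar : frobInner (P - t • Mplus) (P - t • Mplus)
        = frobInner (M - t • Mplus) (M - t • Mplus)
          - 2 * frobInner (M - t • Mplus) (M - P)
          + frobInner (M - P) (M - P) := by
      have h : P - t • Mplus = (M - t • Mplus) - (M - P) := by abel
      rw [h, expand_sub]
    have hcomm : frobInner (M - t • Mplus) (M - P) = frobInner (M - P) (M - t • Mplus) :=
      frobInner_comm _ _
    have hQmin := hPmin Q hQpsd hQR
    rw [hQval] at hQmin
    have hzero : frobInner (P - t • Mplus) (P - t • Mplus) ≤ 0 := by
      rw [hPPstar, hcomm]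
      linarith
    have hnn := frobInner_self_nonneg (P - t • Mplus)
    have hPeq : P - t • Mplus = 0 := frobInner_self_eq_zero (le_antisymm hzero hnn)
    exact sub_eq_zero.mp hPeq
  · rintro rfl
    exact ⟨hPstarPSD, hPstarNorm, hopt⟩
end

section
/- (Sum-of-squares sparse certificates, odd case) There is an absolute constant C > 0 such that the following holds for all n ≥ 2, all odd k ≥ 3 and all 1 ≤ t ≤ n. Let W ∈ (ℝⁿ)^{⊗k} be a random tensor with i.i.d. N(0,1) entries, and let S_{4k−4,n} := { Ẽ_μ[x^{⊗k}] : μ is a degree-(4k−4) pseudo-distribution on ℝ^{3n} satisfying P_t }. Then the Gaussian complexity of S_{4k−4,n} satisfies G(S_{4k−4,n}) = E_W sup_{X ∈ S_{4k−4,n}} ⟨X, W⟩ ≤ C · t^{k/2} · √(k·log n). -/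
open MeasureTheory ProbabilityTheory

/-- Pseudo-expectation `Ẽ_μ[f] = ∑_w μ(w)·f(w)` of a polynomial `f` with respect to a
finitely supported function `μ`. -/
noncomputable def pExp {σ : Type*} (μ : (σ → ℝ) →₀ ℝ) (f : MvPolynomial σ ℝ) : ℝ :=
  μ.sum fun w c => c * MvPolynomial.eval w f

/-- A polynomial is a sum of squares. -/
def IsSOSPoly {σ : Type*} (p : MvPolynomial σ ℝ) : Prop :=
  ∃ (r : ℕ) (q : Fin r → MvPolynomial σ ℝ), p = ∑ i, q i ^ 2

/-- `μ` is a degree-`ℓ` pseudo-distribution: it is finitely supported, has total mass `1`,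
and `Ẽ_μ[f²] ≥ 0` for every polynomial `f` of degree at most `ℓ/2`. -/
def IsPseudoDist {σ : Type*} (ℓ : ℕ) (μ : (σ → ℝ) →₀ ℝ) : Prop :=
  (μ.sum fun _ c => c) = 1 ∧
    ∀ f : MvPolynomial σ ℝ, 2 * f.totalDegree ≤ ℓ → 0 ≤ pExp μ (f ^ 2)

/-- `μ` satisfies the system `{g i ≥ 0}` at degree `ℓ`: for every subset `T` of the
constraints and every sum-of-squares `h` with `deg(h·∏_{i∈T} g i) ≤ ℓ`,
`Ẽ_μ[h·∏_{i∈T} g i] ≥ 0`. -/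
def SatisfiesSystem {σ ι : Type*} (ℓ : ℕ) (μ : (σ → ℝ) →₀ ℝ)
    (g : ι → MvPolynomial σ ℝ) : Prop :=
  ∀ (T : Finset ι) (h : MvPolynomial σ ℝ), IsSOSPoly h →
    (h * ∏ i ∈ T, g i).totalDegree ≤ ℓ →
      0 ≤ pExp μ (h * ∏ i ∈ T, g i)

/-- Index set of the constraints of the system `P_t` (in variables `x, s, y ∈ ℝⁿ`,
encoded on `Fin 3 × Fin n` with `x i = X (0,i)`, `s i = X (1,i)`, `y i = X (2,i)`). -/
inductive PtIdx (n : ℕ) where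
  | normUB
  | boolLB (i : Fin n)
  | boolUB (i : Fin n)
  | suppLB (i : Fin n)
  | suppUB (i : Fin n)
  | sparsity
  | absPos (i : Fin n)
  | absNeg (i : Fin n)
  | sqLB (i : Fin n)
  | sqUB (i : Fin n)

/-- The system `P_t` of polynomial constraints (each polynomial is constrained to be `≥ 0`;
equalities are encoded by two opposite inequalities): `‖x‖² ≤ 1`; `s_i² = s_i`;
`x_i·s_i = x_i`; `∑ s_i ≤ t`; `x_i ≤ y_i`; `−x_i ≤ y_i`; `x_i² = y_i²`. -/
noncomputable def PtSys (n : ℕ) (t : ℝ) : PtIdx n → MvPolynomial (Fin 3 × Fin n) ℝ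
  | .normUB => MvPolynomial.C 1 - ∑ i : Fin n, MvPolynomial.X (0, i) ^ 2
  | .boolLB i => MvPolynomial.X (1, i) - MvPolynomial.X (1, i) ^ 2
  | .boolUB i => MvPolynomial.X (1, i) ^ 2 - MvPolynomial.X (1, i)
  | .suppLB i => MvPolynomial.X (0, i) - MvPolynomial.X (0, i) * MvPolynomial.X (1, i)
  | .suppUB i => MvPolynomial.X (0, i) * MvPolynomial.X (1, i) - MvPolynomial.X (0, i)
  | .sparsity => MvPolynomial.C t - ∑ i : Fin n, MvPolynomial.X (1, i)
  | .absPos i => MvPolynomial.X (2, i) - MvPolynomial.X (0, i)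
  | .absNeg i => MvPolynomial.X (2, i) + MvPolynomial.X (0, i)
  | .sqLB i => MvPolynomial.X (0, i) ^ 2 - MvPolynomial.X (2, i) ^ 2
  | .sqUB i => MvPolynomial.X (2, i) ^ 2 - MvPolynomial.X (0, i) ^ 2

/-- The set `S_{4k−4,n}` of `k`-th moment tensors `Ẽ_μ[x^{⊗k}]` of degree-`(4k−4)`
pseudo-distributions satisfying `P_t`. -/
noncomputable def momentSet (n k : ℕ) (t : ℝ) : Set ((Fin k → Fin n) → ℝ) :=
  {X | ∃ μ : (Fin 3 × Fin n → ℝ) →₀ ℝ,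
    IsPseudoDist (4 * k - 4) μ ∧ SatisfiesSystem (4 * k - 4) μ (PtSys n t) ∧
    ∀ α : Fin k → Fin n, X α = pExp μ (∏ j, MvPolynomial.X (0, α j))}

namespace SosAux

open MvPolynomial

variable {n k : ℕ} {t : ℝ} {μ : (Fin 3 × Fin n → ℝ) →₀ ℝ}

/-! ### pExp toolkit -/

lemma pExp_def (f : MvPolynomial (Fin 3 × Fin n) ℝ) :
    pExp μ f = ∑ w ∈ μ.support, μ w * eval w f := rfl

lemma pExp_add (f g : MvPolynomial (Fin 3 × Fin n) ℝ) :
    pExp μ (f + g) = pExp μ f + pExp μ g := by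
  simp [pExp_def, mul_add, Finset.sum_add_distrib]

lemma pExp_zero : pExp μ (0 : MvPolynomial (Fin 3 × Fin n) ℝ) = 0 := by
  simp [pExp_def]

lemma pExp_neg (f : MvPolynomial (Fin 3 × Fin n) ℝ) : pExp μ (-f) = - pExp μ f := by
  simp [pExp_def, Finset.sum_neg_distrib]

lemma pExp_sub (f g : MvPolynomial (Fin 3 × Fin n) ℝ) :
    pExp μ (f - g) = pExp μ f - pExp μ g := by
  rw [sub_eq_add_neg, pExp_add, pExp_neg]; ring

lemma pExp_C_mul (c : ℝ) (f : MvPolynomial (Fin 3 × Fin n) ℝ) :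
    pExp μ (C c * f) = c * pExp μ f := by
  simp only [pExp_def, eval_mul, eval_C, Finset.mul_sum]
  exact Finset.sum_congr rfl fun w _ => by ring

lemma pExp_sum {ι : Type*} (s : Finset ι) (f : ι → MvPolynomial (Fin 3 × Fin n) ℝ) :
    pExp μ (∑ i ∈ s, f i) = ∑ i ∈ s, pExp μ (f i) := by
  simp only [pExp_def, map_sum, Finset.mul_sum]
  exact Finset.sum_comm

lemma pExp_one (hpd : IsPseudoDist (4 * k - 4) μ) :
    pExp μ (1 : MvPolynomial (Fin 3 × Fin n) ℝ) = 1 := by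
  have : pExp μ (1 : MvPolynomial (Fin 3 × Fin n) ℝ) = μ.sum fun _ c => c := by
    simp [pExp, Finsupp.sum]
  rw [this, hpd.1]

/-! ### variables and degree bounds -/

noncomputable def Xp (i : Fin n) : MvPolynomial (Fin 3 × Fin n) ℝ := X (0, i)
noncomputable def Sp (i : Fin n) : MvPolynomial (Fin 3 × Fin n) ℝ := X (1, i)

noncomputable def xProd {r : ℕ} (β : Fin r → Fin n) : MvPolynomial (Fin 3 × Fin n) ℝ :=
  ∏ j, Xp (β j)

noncomputable def sProd {r : ℕ} (β : Fin r → Fin n) : MvPolynomial (Fin 3 × Fin n) ℝ :=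
  ∏ j, Sp (β j)

noncomputable def P2 (n : ℕ) : MvPolynomial (Fin 3 × Fin n) ℝ := ∑ i : Fin n, Xp i ^ 2
noncomputable def PS (n : ℕ) : MvPolynomial (Fin 3 × Fin n) ℝ := ∑ i : Fin n, Sp i ^ 2

lemma deg_mul_le {p q : MvPolynomial (Fin 3 × Fin n) ℝ} {a b : ℕ}
    (hp : p.totalDegree ≤ a) (hq : q.totalDegree ≤ b) : (p * q).totalDegree ≤ a + b :=
  le_trans (totalDegree_mul _ _) (add_le_add hp hq)

lemma deg_Xp (i : Fin n) : (Xp i).totalDegree ≤ 1 := le_of_eq (totalDegree_X _)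
lemma deg_Sp (i : Fin n) : (Sp i).totalDegree ≤ 1 := le_of_eq (totalDegree_X _)

lemma deg_xProd {r : ℕ} (β : Fin r → Fin n) : (xProd β).totalDegree ≤ r := by
  refine le_trans (totalDegree_finset_prod _ _) ?_
  calc ∑ j : Fin r, (Xp (β j)).totalDegree ≤ ∑ _j : Fin r, 1 :=
        Finset.sum_le_sum fun j _ => deg_Xp _
  _ = r := by simp

lemma deg_sProd {r : ℕ} (β : Fin r → Fin n) : (sProd β).totalDegree ≤ r := by
  refine le_trans (totalDegree_finset_prod _ _) ?_
  calc ∑ j : Fin r, (Sp (β j)).totalDegree ≤ ∑ _j : Fin r, 1 :=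
        Finset.sum_le_sum fun j _ => deg_Sp _
  _ = r := by simp

lemma deg_P2 : (P2 n).totalDegree ≤ 2 := by
  refine totalDegree_finsetSum_le fun i _ => ?_
  calc (Xp (n := n) i ^ 2).totalDegree ≤ 2 * (Xp (n := n) i).totalDegree :=
        totalDegree_pow _ _
  _ ≤ 2 := by have := deg_Xp (n := n) i; omega

lemma deg_PS : (PS n).totalDegree ≤ 2 := by
  refine totalDegree_finsetSum_le fun i _ => ?_
  calc (Sp (n := n) i ^ 2).totalDegree ≤ 2 * (Sp (n := n) i).totalDegree :=
        totalDegree_pow _ _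
  _ ≤ 2 := by have := deg_Sp (n := n) i; omega

lemma deg_pow_le {p : MvPolynomial (Fin 3 × Fin n) ℝ} {a r : ℕ} (hp : p.totalDegree ≤ a) :
    (p ^ r).totalDegree ≤ r * a :=
  le_trans (totalDegree_pow _ _) (Nat.mul_le_mul_left _ hp)

lemma deg_sub_le {p q : MvPolynomial (Fin 3 × Fin n) ℝ} {a : ℕ}
    (hp : p.totalDegree ≤ a) (hq : q.totalDegree ≤ a) : (p - q).totalDegree ≤ a := by
  rw [sub_eq_add_neg]
  refine le_trans (totalDegree_add _ _) ?_
  rw [totalDegree_neg]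
  exact max_le hp hq

lemma deg_con (c : PtIdx n) : (PtSys n t c).totalDegree ≤ 2 := by
  cases c with
  | normUB =>
      refine deg_sub_le (by simp [totalDegree_C]) ?_
      refine totalDegree_finsetSum_le fun i _ => ?_
      calc (X (0,i) ^ 2 : MvPolynomial (Fin 3 × Fin n) ℝ).totalDegree
          ≤ 2 * (X (0,i) : MvPolynomial (Fin 3 × Fin n) ℝ).totalDegree := totalDegree_pow _ _
      _ ≤ 2 := by rw [totalDegree_X]
  | boolLB i =>
      refine deg_sub_le ?_ ?_
      · rw [totalDegree_X]; omega
      · calc (X (1,i) ^ 2 : MvPolynomial (Fin 3 × Fin n) ℝ).totalDegree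
            ≤ 2 * (X (1,i) : MvPolynomial (Fin 3 × Fin n) ℝ).totalDegree := totalDegree_pow _ _
        _ ≤ 2 := by rw [totalDegree_X]
  | boolUB i =>
      refine deg_sub_le ?_ ?_
      · calc (X (1,i) ^ 2 : MvPolynomial (Fin 3 × Fin n) ℝ).totalDegree
            ≤ 2 * (X (1,i) : MvPolynomial (Fin 3 × Fin n) ℝ).totalDegree := totalDegree_pow _ _
        _ ≤ 2 := by rw [totalDegree_X]
      · rw [totalDegree_X]; omega
  | suppLB i =>
      refine deg_sub_le ?_ ?_
      · rw [totalDegree_X]; omega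
      · exact deg_mul_le (le_of_eq (totalDegree_X _)) (le_of_eq (totalDegree_X _))
  | suppUB i =>
      refine deg_sub_le ?_ ?_
      · exact deg_mul_le (le_of_eq (totalDegree_X _)) (le_of_eq (totalDegree_X _))
      · rw [totalDegree_X]; omega
  | sparsity =>
      refine deg_sub_le (by simp [totalDegree_C]) ?_
      refine totalDegree_finsetSum_le fun i _ => ?_
      rw [totalDegree_X]; omega
  | absPos i => exact deg_sub_le (by rw [totalDegree_X]; omega) (by rw [totalDegree_X]; omega)
  | absNeg i =>
      refine le_trans (totalDegree_add _ _) ?_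
      refine max_le (by rw [totalDegree_X]; omega) (by rw [totalDegree_X]; omega)
  | sqLB i =>
      refine deg_sub_le ?_ ?_ <;>
      · calc (MvPolynomial.X _ ^ 2 : MvPolynomial (Fin 3 × Fin n) ℝ).totalDegree
            ≤ 2 * (MvPolynomial.X _ : MvPolynomial (Fin 3 × Fin n) ℝ).totalDegree :=
              totalDegree_pow _ _
        _ ≤ 2 := by rw [totalDegree_X]
  | sqUB i =>
      refine deg_sub_le ?_ ?_ <;>
      · calc (MvPolynomial.X _ ^ 2 : MvPolynomial (Fin 3 × Fin n) ℝ).totalDegree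
            ≤ 2 * (MvPolynomial.X _ : MvPolynomial (Fin 3 × Fin n) ℝ).totalDegree :=
              totalDegree_pow _ _
        _ ≤ 2 := by rw [totalDegree_X]

/-! ### basic positivity -/

lemma sos_sq (f : MvPolynomial (Fin 3 × Fin n) ℝ) : IsSOSPoly (f ^ 2) :=
  ⟨1, fun _ => f, by rw [Fin.sum_univ_one]⟩

lemma L_sq (hk : 3 ≤ k) (hpd : IsPseudoDist (4 * k - 4) μ)
    (f : MvPolynomial (Fin 3 × Fin n) ℝ) (hf : f.totalDegree ≤ 2 * k - 2) :
    0 ≤ pExp μ (f ^ 2) :=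
  hpd.2 f (by omega)

lemma L_con (hsat : SatisfiesSystem (4 * k - 4) μ (PtSys n t)) (c : PtIdx n)
    (f : MvPolynomial (Fin 3 × Fin n) ℝ)
    (hd : (f ^ 2 * PtSys n t c).totalDegree ≤ 4 * k - 4) :
    0 ≤ pExp μ (f ^ 2 * PtSys n t c) := by
  have := hsat {c} (f ^ 2) (sos_sq f)
    (by rwa [Finset.prod_singleton])
  rwa [Finset.prod_singleton] at this

lemma L_con' (hk : 3 ≤ k) (hsat : SatisfiesSystem (4 * k - 4) μ (PtSys n t)) (c : PtIdx n)
    (f : MvPolynomial (Fin 3 × Fin n) ℝ) (hf : f.totalDegree ≤ 2 * k - 3) :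
    0 ≤ pExp μ (f ^ 2 * PtSys n t c) := by
  refine L_con hsat c f (le_trans (totalDegree_mul _ _) ?_)
  have h1 : (f ^ 2).totalDegree ≤ 2 * f.totalDegree := totalDegree_pow _ _
  have h2 := deg_con (t := t) c
  omega


/-! ### equality pairs and substitution -/

lemma exists_le_sum_eq {A : Type*} (v : A →₀ ℕ) (j : ℕ) (hj : j ≤ v.sum fun _ e => e) :
    ∃ u : A →₀ ℕ, u ≤ v ∧ (u.sum fun _ e => e) = j := by
  induction j with
  | zero => exact ⟨0, zero_le, by simp⟩
  | succ j ih =>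
      obtain ⟨u, hu, hsum⟩ := ih (le_trans (Nat.le_succ j) hj)
      have hsupp : u.support ⊆ v.support := fun a ha => by
        have h1 : u a ≠ 0 := Finsupp.mem_support_iff.mp ha
        have h2 : u a ≤ v a := hu a
        exact Finsupp.mem_support_iff.mpr (by omega)
      have husum : (u.sum fun _ e => e) = ∑ a ∈ v.support, u a := by
        rw [Finsupp.sum_of_support_subset u hsupp _ (fun a _ => rfl)]
      have hvsum : (v.sum fun _ e => e) = ∑ a ∈ v.support, v a := rfl
      have hexists : ∃ a ∈ v.support, u a < v a := by
        by_contra hcon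
        push_neg at hcon
        have : ∑ a ∈ v.support, v a ≤ ∑ a ∈ v.support, u a := Finset.sum_le_sum hcon
        omega
      obtain ⟨a, _, halt⟩ := hexists
      refine ⟨u + Finsupp.single a 1, ?_, ?_⟩
      · intro b
        simp only [Finsupp.coe_add, Pi.add_apply]
        rcases eq_or_ne b a with rfl | hne
        · simp only [Finsupp.single_eq_same]; omega
        · simp only [Finsupp.single_eq_of_ne' (Ne.symm hne), add_zero]; exact hu b
      · rw [Finsupp.sum_add_index' (fun _ => rfl) (fun _ _ _ => rfl), hsum,
          Finsupp.sum_single_index rfl]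

lemma monomial_split (v : (Fin 3 × Fin n) →₀ ℕ) (c : ℝ) (k : ℕ) (hv : (v.sum fun _ e => e) ≤ 2 * k) :
    ∃ a b : MvPolynomial (Fin 3 × Fin n) ℝ, a.totalDegree ≤ k ∧ b.totalDegree ≤ k ∧
      (monomial v c : MvPolynomial (Fin 3 × Fin n) ℝ) = a * b := by
  set d : ℕ := v.sum fun _ e => e with hd
  obtain ⟨u, hu, hus⟩ := exists_le_sum_eq v (d / 2) (Nat.div_le_self _ _)
  have hadd : u + (v - u) = v := by
    ext a
    have := hu a
    simp only [Finsupp.coe_add, Pi.add_apply, Finsupp.coe_tsub, Pi.sub_apply]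
    omega
  have hsub : ((v - u).sum fun _ e => e) = d - d / 2 := by
    have := Finsupp.sum_add_index' (f := u) (g := v - u)
      (h := fun (_ : Fin 3 × Fin n) (e : ℕ) => e) (fun _ => rfl) (fun _ _ _ => rfl)
    rw [hadd] at this
    omega
  refine ⟨monomial u c, monomial (v - u) 1, ?_, ?_, ?_⟩
  · exact le_trans (totalDegree_monomial_le _ _)
      (by rw [show (fun (_ : Fin 3 × Fin n) ↦ id) = (fun (_ : Fin 3 × Fin n) (e : ℕ) => e) from rfl,
            hus]; omega)
  · exact le_trans (totalDegree_monomial_le _ _)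
      (by rw [show (fun (_ : Fin 3 × Fin n) ↦ id) = (fun (_ : Fin 3 × Fin n) (e : ℕ) => e) from rfl,
            hsub]; omega)
  · rw [monomial_mul, hadd, mul_one]

lemma L_pair_sq_zero (hk : 3 ≤ k) (hsat : SatisfiesSystem (4 * k - 4) μ (PtSys n t))
    (c c' : PtIdx n) (hpair : PtSys n t c' = - PtSys n t c)
    (f : MvPolynomial (Fin 3 × Fin n) ℝ) (hf : f.totalDegree ≤ 2 * k - 3) :
    pExp μ (f ^ 2 * PtSys n t c) = 0 := by
  have h1 := L_con' hk hsat c f hf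
  have h2 := L_con' hk hsat c' f hf
  rw [hpair] at h2
  have heq : f ^ 2 * -PtSys n t c = -(f ^ 2 * PtSys n t c) := by ring
  rw [heq, pExp_neg] at h2
  linarith

lemma L_pair_mul_zero (hk : 3 ≤ k) (hsat : SatisfiesSystem (4 * k - 4) μ (PtSys n t))
    (c c' : PtIdx n) (hpair : PtSys n t c' = - PtSys n t c)
    (p : MvPolynomial (Fin 3 × Fin n) ℝ) (hp : p.totalDegree ≤ 2 * k) :
    pExp μ (PtSys n t c * p) = 0 := by
  have hmono : ∀ v ∈ p.support, pExp μ (PtSys n t c * monomial v (coeff v p)) = 0 := by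
    intro v hv
    have hvd : (v.sum fun _ e => e) ≤ 2 * k := le_trans (le_totalDegree hv) hp
    obtain ⟨a, b, ha, hb, hab⟩ := monomial_split v (coeff v p) k hvd
    have hzero : ∀ f : MvPolynomial (Fin 3 × Fin n) ℝ, f.totalDegree ≤ k →
        pExp μ (f ^ 2 * PtSys n t c) = 0 := fun f hf =>
      L_pair_sq_zero hk hsat c c' hpair f (by omega)
    have key : PtSys n t c * (a * b) + PtSys n t c * (a * b)
        = (a + b) ^ 2 * PtSys n t c - a ^ 2 * PtSys n t c - b ^ 2 * PtSys n t c := by ring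
    have := congrArg (pExp μ) key
    rw [pExp_add, pExp_sub, pExp_sub, hzero a ha, hzero b hb,
      hzero (a + b) (le_trans (totalDegree_add _ _) (max_le ha hb))] at this
    rw [hab]
    linarith
  calc pExp μ (PtSys n t c * p)
      = pExp μ (∑ v ∈ p.support, PtSys n t c * monomial v (coeff v p)) := by
        rw [← Finset.mul_sum, ← as_sum]
  _ = ∑ v ∈ p.support, pExp μ (PtSys n t c * monomial v (coeff v p)) := pExp_sum _ _
  _ = 0 := Finset.sum_eq_zero hmono

lemma pair_supp (i : Fin n) : PtSys n t (.suppLB i) = - PtSys n t (.suppUB i) := by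
  show MvPolynomial.X (0, i) - MvPolynomial.X (0, i) * MvPolynomial.X (1, i)
      = -(MvPolynomial.X (0, i) * MvPolynomial.X (1, i) - MvPolynomial.X (0, i))
  ring

lemma pair_bool (i : Fin n) : PtSys n t (.boolLB i) = - PtSys n t (.boolUB i) := by
  show MvPolynomial.X (1, i) - MvPolynomial.X (1, i) ^ 2
      = -(MvPolynomial.X (1, i) ^ 2 - MvPolynomial.X (1, i))
  ring

lemma L_subst_x (hk : 3 ≤ k) (hsat : SatisfiesSystem (4 * k - 4) μ (PtSys n t))
    (i : Fin n) (p : MvPolynomial (Fin 3 × Fin n) ℝ) (hp : p.totalDegree ≤ 2 * k) :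
    pExp μ (Xp i * Sp i * p) = pExp μ (Xp i * p) := by
  have h0 := L_pair_mul_zero hk hsat (.suppUB i) (.suppLB i) (pair_supp i) p hp
  have heq : PtSys n t (.suppUB i) * p = Xp i * Sp i * p - Xp i * p := by
    show (MvPolynomial.X (0, i) * MvPolynomial.X (1, i) - MvPolynomial.X (0, i)) * p
        = Xp i * Sp i * p - Xp i * p
    rw [Xp, Sp]; ring
  rw [heq, pExp_sub] at h0
  linarith

lemma L_subst_s (hk : 3 ≤ k) (hsat : SatisfiesSystem (4 * k - 4) μ (PtSys n t))
    (i : Fin n) (p : MvPolynomial (Fin 3 × Fin n) ℝ) (hp : p.totalDegree ≤ 2 * k) :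
    pExp μ (Sp i ^ 2 * p) = pExp μ (Sp i * p) := by
  have h0 := L_pair_mul_zero hk hsat (.boolUB i) (.boolLB i) (pair_bool i) p hp
  have heq : PtSys n t (.boolUB i) * p = Sp i ^ 2 * p - Sp i * p := by
    show (MvPolynomial.X (1, i) ^ 2 - MvPolynomial.X (1, i)) * p = Sp i ^ 2 * p - Sp i * p
    rw [Sp]; ring
  rw [heq, pExp_sub] at h0
  linarith


/-! ### tuple sums and product expansions -/

lemma sum_arrow_succ {M : Type*} [AddCommMonoid M] {r : ℕ} (F : (Fin (r + 1) → Fin n) → M) :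
    ∑ β : Fin (r + 1) → Fin n, F β = ∑ j : Fin n, ∑ δ : Fin r → Fin n, F (Fin.cons j δ) := by
  calc ∑ β : Fin (r + 1) → Fin n, F β
      = ∑ p : Fin n × (Fin r → Fin n), F (Fin.cons p.1 p.2) :=
        (Fintype.sum_equiv (Fin.consEquiv fun _ => Fin n)
          (fun p => F (Fin.cons p.1 p.2)) F (fun p => rfl)).symm
  _ = ∑ j : Fin n, ∑ δ : Fin r → Fin n, F (Fin.cons j δ) := Fintype.sum_prod_type _

lemma pow_sum_eq_sum_tuple {R : Type*} [CommSemiring R] (r : ℕ) (f : Fin n → R) :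
    (∑ i, f i) ^ r = ∑ β : Fin r → Fin n, ∏ l, f (β l) := by
  induction r with
  | zero => simp
  | succ r ih =>
      rw [sum_arrow_succ (fun β => ∏ l, f (β l))]
      have hterm : ∀ (j : Fin n) (δ : Fin r → Fin n),
          (∏ l : Fin (r + 1), f (Fin.cons (α := fun _ => Fin n) j δ l))
            = f j * ∏ l : Fin r, f (δ l) := by
        intro j δ
        simp [Fin.prod_univ_succ]
      calc (∑ i, f i) ^ (r + 1) = (∑ i, f i) * (∑ i, f i) ^ r := by ring
      _ = ∑ j : Fin n, f j * ∑ β : Fin r → Fin n, ∏ l, f (β l) := by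
          rw [ih, Finset.sum_mul]
      _ = ∑ j : Fin n, ∑ δ : Fin r → Fin n, f j * ∏ l, f (δ l) := by
          refine Finset.sum_congr rfl fun j _ => ?_
          rw [Finset.mul_sum]
      _ = ∑ j : Fin n, ∑ δ : Fin r → Fin n, ∏ l : Fin (r + 1),
            f (Fin.cons (α := fun _ => Fin n) j δ l) := by
          refine Finset.sum_congr rfl fun j _ => Finset.sum_congr rfl fun δ _ => ?_
          rw [hterm]

lemma P2_pow_eq (r : ℕ) : (P2 n) ^ r = ∑ β : Fin r → Fin n, (xProd β) ^ 2 := by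
  rw [P2, pow_sum_eq_sum_tuple]
  refine Finset.sum_congr rfl fun β _ => ?_
  rw [xProd, Finset.prod_pow]

lemma PS_pow_eq (r : ℕ) : (PS n) ^ r = ∑ β : Fin r → Fin n, (sProd β) ^ 2 := by
  rw [PS, pow_sum_eq_sum_tuple]
  refine Finset.sum_congr rfl fun β _ => ?_
  rw [sProd, Finset.prod_pow]

/-! ### telescoping bounds -/

lemma L_P2_pow_nonneg (hk : 3 ≤ k) (hpd : IsPseudoDist (4 * k - 4) μ) (r : ℕ) (hr : r ≤ k) :
    0 ≤ pExp μ ((P2 n) ^ r) := by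
  rw [P2_pow_eq, pExp_sum]
  refine Finset.sum_nonneg fun β _ => L_sq hk hpd _ (le_trans (deg_xProd β) (by omega))

lemma L_P2_pow_le_one (hk : 3 ≤ k) (hpd : IsPseudoDist (4 * k - 4) μ)
    (hsat : SatisfiesSystem (4 * k - 4) μ (PtSys n t)) (r : ℕ) (hr : r ≤ k) :
    pExp μ ((P2 n) ^ r) ≤ 1 := by
  induction r with
  | zero => rw [pow_zero, pExp_one hpd]
  | succ r ih =>
      have hrk : r ≤ k := by omega
      have hcon : 0 ≤ pExp μ ((P2 n) ^ r * PtSys n t .normUB) := by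
        rw [P2_pow_eq, Finset.sum_mul, pExp_sum]
        refine Finset.sum_nonneg fun β _ => ?_
        exact L_con' hk hsat _ _ (le_trans (deg_xProd β) (by omega))
      have heq : (P2 n) ^ r * PtSys n t .normUB = (P2 n) ^ r - (P2 n) ^ (r + 1) := by
        show (P2 n) ^ r * (MvPolynomial.C 1 - ∑ i : Fin n, MvPolynomial.X (0, i) ^ 2) = _
        have : (∑ i : Fin n, (MvPolynomial.X (0, i) : MvPolynomial (Fin 3 × Fin n) ℝ) ^ 2)
            = P2 n := rfl
        rw [this, map_one]
        ring
      rw [heq, pExp_sub] at hcon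
      have := ih hrk
      linarith

lemma L_PS_pow_nonneg (hk : 3 ≤ k) (hpd : IsPseudoDist (4 * k - 4) μ) (r : ℕ) (hr : r ≤ k) :
    0 ≤ pExp μ ((PS n) ^ r) := by
  rw [PS_pow_eq, pExp_sum]
  refine Finset.sum_nonneg fun β _ => L_sq hk hpd _ (le_trans (deg_sProd β) (by omega))

lemma L_PS_pow_le (hk : 3 ≤ k) (hpd : IsPseudoDist (4 * k - 4) μ)
    (hsat : SatisfiesSystem (4 * k - 4) μ (PtSys n t)) (ht : 1 ≤ t) (r : ℕ) (hr : r ≤ k) :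
    pExp μ ((PS n) ^ r) ≤ t ^ r := by
  induction r with
  | zero => rw [pow_zero, pExp_one hpd, pow_zero]
  | succ r ih =>
      have hrk : r ≤ k := by omega
      have hsub : pExp μ ((PS n) ^ (r + 1)) = pExp μ ((∑ j : Fin n, Sp j) * (PS n) ^ r) := by
        calc pExp μ ((PS n) ^ (r + 1)) = pExp μ (∑ j : Fin n, Sp j ^ 2 * (PS n) ^ r) := by
              congr 1
              rw [pow_succ, mul_comm, PS, Finset.sum_mul]
        _ = ∑ j : Fin n, pExp μ (Sp j ^ 2 * (PS n) ^ r) := pExp_sum _ _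
        _ = ∑ j : Fin n, pExp μ (Sp j * (PS n) ^ r) := by
              refine Finset.sum_congr rfl fun j _ => ?_
              refine L_subst_s hk hsat j _ (le_trans (deg_pow_le deg_PS) (by omega))
        _ = pExp μ (∑ j : Fin n, Sp j * (PS n) ^ r) := (pExp_sum _ _).symm
        _ = pExp μ ((∑ j : Fin n, Sp j) * (PS n) ^ r) := by rw [Finset.sum_mul]
      have hcon : 0 ≤ pExp μ ((PS n) ^ r * PtSys n t .sparsity) := by
        rw [PS_pow_eq, Finset.sum_mul, pExp_sum]
        refine Finset.sum_nonneg fun β _ => ?_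
        exact L_con' hk hsat _ _ (le_trans (deg_sProd β) (by omega))
      have heq : (PS n) ^ r * PtSys n t .sparsity
          = MvPolynomial.C t * (PS n) ^ r - (∑ j : Fin n, Sp j) * (PS n) ^ r := by
        show (PS n) ^ r * (MvPolynomial.C t - ∑ i : Fin n, MvPolynomial.X (1, i)) = _
        have : (∑ i : Fin n, (MvPolynomial.X (1, i) : MvPolynomial (Fin 3 × Fin n) ℝ))
            = ∑ j : Fin n, Sp j := rfl
        rw [this]
        ring
      rw [heq, pExp_sub, pExp_C_mul] at hcon
      have hPSr := L_PS_pow_nonneg hk hpd r hrk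
      have ht0 : (0:ℝ) ≤ t := by linarith
      calc pExp μ ((PS n) ^ (r + 1)) ≤ t * pExp μ ((PS n) ^ r) := by rw [hsub]; linarith
      _ ≤ t * t ^ r := by
            have := ih hrk
            nlinarith
      _ = t ^ (r + 1) := by ring


/-! ### Lagrange identity -/

lemma lagrange {R : Type*} [CommRing R] (a b : Fin n → R) :
    (∑ j, a j ^ 2) * (∑ j, b j ^ 2) * 2
      = (∑ j, a j * b j) ^ 2 * 2
        + ∑ j : Fin n, ∑ j' : Fin n, (a j * b j' - a j' * b j) ^ 2 := by
  have h1 : (∑ j, a j ^ 2) * (∑ j, b j ^ 2)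
      = ∑ j : Fin n, ∑ j' : Fin n, a j ^ 2 * b j' ^ 2 := Finset.sum_mul_sum _ _ _ _
  have h1' : (∑ j, a j ^ 2) * (∑ j, b j ^ 2)
      = ∑ j : Fin n, ∑ j' : Fin n, a j' ^ 2 * b j ^ 2 := by
    rw [h1]; exact Finset.sum_comm
  have h2 : (∑ j, a j * b j) ^ 2
      = ∑ j : Fin n, ∑ j' : Fin n, (a j * b j) * (a j' * b j') := by
    rw [sq]; exact Finset.sum_mul_sum _ _ _ _

  calc (∑ j, a j ^ 2) * (∑ j, b j ^ 2) * 2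
      = ∑ j : Fin n, ∑ j' : Fin n, (a j ^ 2 * b j' ^ 2 + a j' ^ 2 * b j ^ 2) := by
        rw [mul_two]
        nth_rewrite 1 [h1]
        rw [h1']
        simp only [Finset.sum_add_distrib]
  _ = ∑ j : Fin n, ∑ j' : Fin n,
        ((a j * b j) * (a j' * b j') + (a j * b j) * (a j' * b j')
          + (a j * b j' - a j' * b j) ^ 2) :=
      Finset.sum_congr rfl fun j _ => Finset.sum_congr rfl fun j' _ => by ring
  _ = (∑ j, a j * b j) ^ 2 * 2
        + ∑ j : Fin n, ∑ j' : Fin n, (a j * b j' - a j' * b j) ^ 2 := by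
      rw [h2, mul_two]
      simp only [Finset.sum_add_distrib]

lemma deg_sum_C_xProd {r : ℕ} (u : (Fin r → Fin n) → ℝ) :
    (∑ δ : Fin r → Fin n, (C (u δ) : MvPolynomial (Fin 3 × Fin n) ℝ) * xProd δ).totalDegree
      ≤ r :=
  totalDegree_finsetSum_le fun δ _ => by
    have := deg_mul_le (le_of_eq (totalDegree_C (u δ))) (deg_xProd δ)
    simpa using this

lemma xProd_cons {r : ℕ} (j : Fin n) (δ : Fin r → Fin n) :
    xProd (Fin.cons (α := fun _ => Fin n) j δ) = Xp j * xProd δ := by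
  simp [xProd, Fin.prod_univ_succ]

/-! ### the main recursion -/

set_option maxHeartbeats 800000 in
lemma REC (hk : 3 ≤ k) (hpd : IsPseudoDist (4 * k - 4) μ)
    (hsat : SatisfiesSystem (4 * k - 4) μ (PtSys n t)) (M : ℝ) :
    ∀ (p : ℕ) (ι : Type) [Fintype ι] (ς : ι → MvPolynomial (Fin 3 × Fin n) ℝ),
      (∀ i, (ς i).totalDegree + p ≤ k) → ∀ (u : ι → (Fin p → Fin n) → ℝ),
      (∀ i δ, |u i δ| ≤ M) →
      pExp μ (∑ i, (ς i) ^ 2 * (∑ δ : Fin p → Fin n, C (u i δ) * xProd δ) ^ 2)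
        ≤ M ^ 2 * pExp μ ((∑ i, (ς i) ^ 2) * (PS n) ^ p) := by
  intro p
  induction p with
  | zero =>
      intro ι instι ς hς u hu
      have hinner : ∀ i : ι, (∑ δ : Fin 0 → Fin n, (C (u i δ) : MvPolynomial (Fin 3 × Fin n) ℝ)
          * xProd δ) = C (u i default) := by
        intro i
        rw [Fintype.sum_unique]
        have : xProd (default : Fin 0 → Fin n) = 1 := by
          simp [xProd]
        rw [this, mul_one]
      have hL : pExp μ (∑ i, (ς i) ^ 2 * (∑ δ : Fin 0 → Fin n, C (u i δ) * xProd δ) ^ 2)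
          = ∑ i, (u i default) ^ 2 * pExp μ ((ς i) ^ 2) := by
        rw [pExp_sum]
        refine Finset.sum_congr rfl fun i _ => ?_
        rw [hinner i]
        have : (ς i) ^ 2 * (C (u i default)) ^ 2
            = C ((u i default) ^ 2) * (ς i) ^ 2 := by
          rw [map_pow]; ring
        rw [this, pExp_C_mul]
      have hR : M ^ 2 * pExp μ ((∑ i, (ς i) ^ 2) * (PS n) ^ 0)
          = ∑ i, M ^ 2 * pExp μ ((ς i) ^ 2) := by
        rw [pow_zero, mul_one, pExp_sum, Finset.mul_sum]
      rw [hL, hR]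
      refine Finset.sum_le_sum fun i _ => ?_
      have hnn : 0 ≤ pExp μ ((ς i) ^ 2) :=
        L_sq hk hpd _ (by have := hς i; omega)
      have hsq : (u i default) ^ 2 ≤ M ^ 2 := by
        have h1 := hu i default
        have h2 := abs_nonneg (u i default)
        nlinarith [le_abs_self (u i default), neg_abs_le (u i default)]
      nlinarith
  | succ p ih =>
      intro ι instι ς hς u hu
      set rr : ι → Fin n → MvPolynomial (Fin 3 × Fin n) ℝ :=
        fun i j => ∑ δ : Fin p → Fin n, C (u i (Fin.cons j δ)) * xProd δ with hrr
      set e : ι → MvPolynomial (Fin 3 × Fin n) ℝ :=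
        fun i => ∑ δ : Fin (p+1) → Fin n, C (u i δ) * xProd δ with he
      set eh : ι → MvPolynomial (Fin 3 × Fin n) ℝ :=
        fun i => ∑ j, Xp j * Sp j * rr i j with heh
      have hdς : ∀ i, (ς i).totalDegree + p + 1 ≤ k := fun i => by have := hς i; omega
      have hdrr : ∀ i j, (rr i j).totalDegree ≤ p := fun i j => deg_sum_C_xProd _
      have hde : ∀ i, (e i).totalDegree ≤ p + 1 := fun i => deg_sum_C_xProd _
      have hdeh : ∀ i, (eh i).totalDegree ≤ p + 2 := fun i =>
        totalDegree_finsetSum_le fun j _ => by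
          have h1 := deg_mul_le (deg_mul_le (deg_Xp j) (deg_Sp j)) (hdrr i j)
          omega
      have hsplit : ∀ i, e i = ∑ j, Xp j * rr i j := by
        intro i
        show (∑ δ : Fin (p + 1) → Fin n, (C (u i δ) : MvPolynomial (Fin 3 × Fin n) ℝ)
          * xProd δ) = _
        rw [sum_arrow_succ (fun δ => (C (u i δ) : MvPolynomial (Fin 3 × Fin n) ℝ) * xProd δ)]
        refine Finset.sum_congr rfl fun j _ => ?_
        rw [show rr i j = ∑ δ : Fin p → Fin n,
          (C (u i (Fin.cons j δ)) : MvPolynomial (Fin 3 × Fin n) ℝ) * xProd δ from rfl,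
          Finset.mul_sum]
        refine Finset.sum_congr rfl fun δ _ => ?_
        rw [xProd_cons]
        ring
      -- substitution step
      have hsubstep : ∀ (m : ι → MvPolynomial (Fin 3 × Fin n) ℝ),
          (∀ i, (m i).totalDegree ≤ p + 2) →
          pExp μ (∑ i, (ς i) ^ 2 * (m i * e i)) = pExp μ (∑ i, (ς i) ^ 2 * (m i * eh i)) := by
        intro m hdm
        have hz : ∀ (i : ι) (j : Fin n),
            pExp μ (Xp j * Sp j * ((ς i) ^ 2 * m i * rr i j))
              = pExp μ (Xp j * ((ς i) ^ 2 * m i * rr i j)) := by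
          intro i j
          refine L_subst_x hk hsat j _ ?_
          have h1 : ((ς i) ^ 2).totalDegree ≤ 2 * (ς i).totalDegree := totalDegree_pow _ _
          have h2 := deg_mul_le (deg_mul_le h1 (hdm i)) (hdrr i j)
          have := hς i
          omega
        have key : pExp μ (∑ i, (ς i) ^ 2 * (m i * e i))
              - pExp μ (∑ i, (ς i) ^ 2 * (m i * eh i))
            = ∑ i, ∑ j, (pExp μ (Xp j * ((ς i) ^ 2 * m i * rr i j))
              - pExp μ (Xp j * Sp j * ((ς i) ^ 2 * m i * rr i j))) := by
          rw [pExp_sum, pExp_sum, ← Finset.sum_sub_distrib]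
          refine Finset.sum_congr rfl fun i _ => ?_
          rw [← pExp_sub]
          have hid : (ς i) ^ 2 * (m i * e i) - (ς i) ^ 2 * (m i * eh i)
              = ∑ j, (Xp j * ((ς i) ^ 2 * m i * rr i j)
                  - Xp j * Sp j * ((ς i) ^ 2 * m i * rr i j)) := by
            rw [hsplit i, heh]
            simp only [Finset.mul_sum, ← Finset.sum_sub_distrib]
            exact Finset.sum_congr rfl fun j _ => by ring
          rw [hid, pExp_sum]
          exact Finset.sum_congr rfl fun j _ => by rw [pExp_sub]
        have : pExp μ (∑ i, (ς i) ^ 2 * (m i * e i))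
            - pExp μ (∑ i, (ς i) ^ 2 * (m i * eh i)) = 0 := by
          rw [key]
          refine Finset.sum_eq_zero fun i _ => Finset.sum_eq_zero fun j _ => ?_
          rw [hz i j]; ring
        linarith
      -- step A and B
      have hA : pExp μ (∑ i, (ς i) ^ 2 * (e i) ^ 2)
          = pExp μ (∑ i, (ς i) ^ 2 * (eh i) ^ 2) := by
        have e1 : pExp μ (∑ i, (ς i) ^ 2 * (e i) ^ 2)
            = pExp μ (∑ i, (ς i) ^ 2 * (e i * e i)) := by
          exact congrArg (pExp μ) (Finset.sum_congr rfl fun i _ => by ring)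
        have e2 : pExp μ (∑ i, (ς i) ^ 2 * (eh i * e i))
            = pExp μ (∑ i, (ς i) ^ 2 * (eh i * eh i)) := hsubstep eh hdeh
        have e3 : pExp μ (∑ i, (ς i) ^ 2 * (e i * e i))
            = pExp μ (∑ i, (ς i) ^ 2 * (e i * eh i)) := hsubstep e (fun i => by
            have := hde i; omega)
        have e4 : pExp μ (∑ i, (ς i) ^ 2 * (e i * eh i))
            = pExp μ (∑ i, (ς i) ^ 2 * (eh i * e i)) := by
          exact congrArg (pExp μ) (Finset.sum_congr rfl fun i _ => by ring)
        have e5 : pExp μ (∑ i, (ς i) ^ 2 * (eh i * eh i))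
            = pExp μ (∑ i, (ς i) ^ 2 * (eh i) ^ 2) := by
          exact congrArg (pExp μ) (Finset.sum_congr rfl fun i _ => by ring)
        rw [e1, e3, e4, e2, e5]
      -- Lagrange step
      set Q : ι → MvPolynomial (Fin 3 × Fin n) ℝ :=
        fun i => ∑ j, (Sp j * rr i j) ^ 2 with hQ
      have hlag : pExp μ (∑ i, (ς i) ^ 2 * (eh i) ^ 2)
          ≤ pExp μ (∑ i, (ς i) ^ 2 * (P2 n * Q i)) := by
        have hident : ∀ i : ι,
            (ς i) ^ 2 * (P2 n * Q i) * 2 - (ς i) ^ 2 * (eh i) ^ 2 * 2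
              = ∑ j : Fin n, ∑ j' : Fin n,
                  (ς i * (Xp j * (Sp j' * rr i j') - Xp j' * (Sp j * rr i j))) ^ 2 := by
          intro i
          have hl := lagrange (R := MvPolynomial (Fin 3 × Fin n) ℝ)
            (fun j => Xp j) (fun j => Sp j * rr i j)
          have hehi : eh i = ∑ j, Xp j * (Sp j * rr i j) := by
            rw [heh]
            exact Finset.sum_congr rfl fun j _ => by ring
          have hP2 : P2 n = ∑ j, (Xp j) ^ 2 := rfl
          calc (ς i) ^ 2 * (P2 n * Q i) * 2 - (ς i) ^ 2 * (eh i) ^ 2 * 2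
              = (ς i) ^ 2 * ((∑ j, (Xp j) ^ 2) * (∑ j, (Sp j * rr i j) ^ 2) * 2
                  - (∑ j, Xp j * (Sp j * rr i j)) ^ 2 * 2) := by
                rw [hehi, hP2, hQ]; ring
          _ = (ς i) ^ 2 * (∑ j : Fin n, ∑ j' : Fin n,
                (Xp j * (Sp j' * rr i j') - Xp j' * (Sp j * rr i j)) ^ 2) := by
                rw [hl]; ring
          _ = ∑ j : Fin n, ∑ j' : Fin n,
                (ς i * (Xp j * (Sp j' * rr i j') - Xp j' * (Sp j * rr i j))) ^ 2 := by
                rw [Finset.mul_sum]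
                refine Finset.sum_congr rfl fun j _ => ?_
                rw [Finset.mul_sum]
                exact Finset.sum_congr rfl fun j' _ => by ring
        have hnn : 0 ≤ pExp μ (∑ i, ((ς i) ^ 2 * (P2 n * Q i) * 2
            - (ς i) ^ 2 * (eh i) ^ 2 * 2)) := by
          have : (∑ i, ((ς i) ^ 2 * (P2 n * Q i) * 2 - (ς i) ^ 2 * (eh i) ^ 2 * 2))
              = ∑ i, ∑ j : Fin n, ∑ j' : Fin n,
                  (ς i * (Xp j * (Sp j' * rr i j') - Xp j' * (Sp j * rr i j))) ^ 2 := by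
            exact Finset.sum_congr rfl fun i _ => hident i
          rw [this, pExp_sum]
          refine Finset.sum_nonneg fun i _ => ?_
          rw [pExp_sum]
          refine Finset.sum_nonneg fun j _ => ?_
          rw [pExp_sum]
          refine Finset.sum_nonneg fun j' _ => ?_
          refine L_sq hk hpd _ ?_
          have hd1 : (Xp j * (Sp j' * rr i j') - Xp j' * (Sp j * rr i j)).totalDegree
              ≤ p + 2 := by
            refine deg_sub_le ?_ ?_
            · have h2 := deg_mul_le (deg_Xp j) (deg_mul_le (deg_Sp j') (hdrr i j')); omega
            · have h2 := deg_mul_le (deg_Xp j') (deg_mul_le (deg_Sp j) (hdrr i j)); omega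
          have hd2 := deg_mul_le (le_refl (ς i).totalDegree) hd1
          have := hς i
          omega
        have hsplit2 : pExp μ (∑ i, ((ς i) ^ 2 * (P2 n * Q i) * 2
            - (ς i) ^ 2 * (eh i) ^ 2 * 2))
            = 2 * pExp μ (∑ i, (ς i) ^ 2 * (P2 n * Q i))
              - 2 * pExp μ (∑ i, (ς i) ^ 2 * (eh i) ^ 2) := by
          rw [pExp_sum, pExp_sum, pExp_sum, Finset.mul_sum, Finset.mul_sum,
            ← Finset.sum_sub_distrib]
          refine Finset.sum_congr rfl fun i _ => ?_
          rw [pExp_sub]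
          have l1 : (ς i) ^ 2 * (P2 n * Q i) * 2
              = C (2:ℝ) * ((ς i) ^ 2 * (P2 n * Q i)) := by
            rw [show ((C (2:ℝ)) : MvPolynomial (Fin 3 × Fin n) ℝ) = 2 from map_ofNat C 2]
            ring
          have l2 : (ς i) ^ 2 * (eh i) ^ 2 * 2
              = C (2:ℝ) * ((ς i) ^ 2 * (eh i) ^ 2) := by
            rw [show ((C (2:ℝ)) : MvPolynomial (Fin 3 × Fin n) ℝ) = 2 from map_ofNat C 2]
            ring
          rw [l1, l2, pExp_C_mul, pExp_C_mul]
        rw [hsplit2] at hnn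
        linarith
      -- normUB step
      have hnorm : pExp μ (∑ i, (ς i) ^ 2 * (P2 n * Q i))
          ≤ pExp μ (∑ i, (ς i) ^ 2 * Q i) := by
        have hid : ∀ i : ι, (ς i) ^ 2 * Q i - (ς i) ^ 2 * (P2 n * Q i)
            = ∑ j, ((ς i * Sp j * rr i j) ^ 2 * PtSys n t .normUB) := by
          intro i
          have hnu : PtSys n t .normUB = 1 - P2 n := by
            show MvPolynomial.C 1 - _ = 1 - P2 n
            rw [map_one]; rfl
          rw [hnu, hQ, Finset.mul_sum, Finset.mul_sum, Finset.mul_sum,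
            ← Finset.sum_sub_distrib]
          exact Finset.sum_congr rfl fun j _ => by ring
        have hnn : 0 ≤ pExp μ (∑ i, ((ς i) ^ 2 * Q i - (ς i) ^ 2 * (P2 n * Q i))) := by
          have : (∑ i, ((ς i) ^ 2 * Q i - (ς i) ^ 2 * (P2 n * Q i)))
              = ∑ i, ∑ j, ((ς i * Sp j * rr i j) ^ 2 * PtSys n t .normUB) :=
            Finset.sum_congr rfl fun i _ => hid i
          rw [this, pExp_sum]
          refine Finset.sum_nonneg fun i _ => ?_
          rw [pExp_sum]
          refine Finset.sum_nonneg fun j _ => ?_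
          refine L_con' hk hsat _ _ ?_
          have hd := deg_mul_le (deg_mul_le (le_refl (ς i).totalDegree) (deg_Sp j)) (hdrr i j)
          have := hς i
          omega
        have hsplit3 : pExp μ (∑ i, ((ς i) ^ 2 * Q i - (ς i) ^ 2 * (P2 n * Q i)))
            = pExp μ (∑ i, (ς i) ^ 2 * Q i) - pExp μ (∑ i, (ς i) ^ 2 * (P2 n * Q i)) := by
          rw [pExp_sum,
            Finset.sum_congr rfl (fun i _ => pExp_sub ((ς i) ^ 2 * Q i) ((ς i) ^ 2 * (P2 n * Q i))),
            Finset.sum_sub_distrib, ← pExp_sum, ← pExp_sum]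
        rw [hsplit3] at hnn
        linarith
      -- reshape to the product index type
      have hre : pExp μ (∑ i, (ς i) ^ 2 * Q i)
          = pExp μ (∑ q : ι × Fin n, (ς q.1 * Sp q.2) ^ 2
              * (∑ δ : Fin p → Fin n, C (u q.1 (Fin.cons q.2 δ)) * xProd δ) ^ 2) := by
        congr 1
        rw [Fintype.sum_prod_type]
        refine Finset.sum_congr rfl fun i _ => ?_
        rw [show Q i = ∑ j, (Sp j * rr i j) ^ 2 from rfl, Finset.mul_sum]
        refine Finset.sum_congr rfl fun j _ => ?_
        rw [show rr i j = ∑ δ : Fin p → Fin n,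
          (C (u i (Fin.cons j δ)) : MvPolynomial (Fin 3 × Fin n) ℝ) * xProd δ from rfl]
        ring
      have hIH := ih (ι × Fin n) (fun q => ς q.1 * Sp q.2)
        (fun q => by
          show (ς q.1 * Sp q.2).totalDegree + p ≤ k
          have h1 := deg_mul_le (le_refl (ς q.1).totalDegree) (deg_Sp q.2)
          have := hς q.1
          omega)
        (fun q δ => u q.1 (Fin.cons q.2 δ)) (fun q δ => hu q.1 _)
      have hq : (∑ q : ι × Fin n, (ς q.1 * Sp q.2) ^ 2) = (∑ i, (ς i) ^ 2) * PS n := by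
        rw [Fintype.sum_prod_type, PS, Finset.sum_mul_sum]
        exact Finset.sum_congr rfl fun i _ => Finset.sum_congr rfl fun j _ => by ring
      have hpoly : (∑ q : ι × Fin n, (ς q.1 * Sp q.2) ^ 2) * (PS n) ^ p
          = (∑ i, (ς i) ^ 2) * (PS n) ^ (p + 1) := by
        rw [hq, pow_succ]
        ring
      calc pExp μ (∑ i, (ς i) ^ 2 * (∑ δ : Fin (p+1) → Fin n, C (u i δ) * xProd δ) ^ 2)
          = pExp μ (∑ i, (ς i) ^ 2 * (e i) ^ 2) := rfl
      _ = pExp μ (∑ i, (ς i) ^ 2 * (eh i) ^ 2) := hA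
      _ ≤ pExp μ (∑ i, (ς i) ^ 2 * (P2 n * Q i)) := hlag
      _ ≤ pExp μ (∑ i, (ς i) ^ 2 * Q i) := hnorm
      _ = pExp μ (∑ q : ι × Fin n, (ς q.1 * Sp q.2) ^ 2
            * (∑ δ : Fin p → Fin n, C (u q.1 (Fin.cons q.2 δ)) * xProd δ) ^ 2) := hre
      _ ≤ M ^ 2 * pExp μ ((∑ q : ι × Fin n, (ς q.1 * Sp q.2) ^ 2) * (PS n) ^ p) := hIH
      _ = M ^ 2 * pExp μ ((∑ i, (ς i) ^ 2) * (PS n) ^ (p + 1)) := by rw [hpoly]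


/-! ### decoration of the x-part -/

lemma xProd_succ {r : ℕ} (β : Fin (r + 1) → Fin n) :
    xProd β = Xp (β 0) * xProd (Fin.tail β) := by
  rw [xProd, xProd, Fin.prod_univ_succ]
  rfl

lemma sProd_succ {r : ℕ} (β : Fin (r + 1) → Fin n) :
    sProd β = Sp (β 0) * sProd (Fin.tail β) := by
  rw [sProd, sProd, Fin.prod_univ_succ]
  rfl

lemma L_decor (hk : 3 ≤ k) (hsat : SatisfiesSystem (4 * k - 4) μ (PtSys n t)) :
    ∀ (r : ℕ) (β : Fin r → Fin n) (p : MvPolynomial (Fin 3 × Fin n) ℝ),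
      p.totalDegree + 2 * r ≤ 2 * k →
      pExp μ (xProd β * p) = pExp μ (xProd β * sProd β * p) := by
  intro r
  induction r with
  | zero =>
      intro β p _
      have h1 : xProd β = 1 := by simp [xProd]
      have h2 : sProd β = 1 := by simp [sProd]
      rw [h1, h2]
      simp
  | succ r ih =>
      intro β p hp
      have hdt : (xProd (Fin.tail β) * p).totalDegree ≤ 2 * k := by
        have := deg_mul_le (deg_xProd (Fin.tail β)) (le_refl p.totalDegree)
        omega
      have hstep1 : pExp μ (xProd β * p)
          = pExp μ (Xp (β 0) * Sp (β 0) * (xProd (Fin.tail β) * p)) := by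
        have hsub := L_subst_x hk hsat (β 0) (xProd (Fin.tail β) * p) hdt
        have hgoalL : pExp μ (xProd β * p)
            = pExp μ (Xp (β 0) * (xProd (Fin.tail β) * p)) := by
          congr 1
          rw [xProd_succ]
          ring
        rw [hgoalL, ← hsub]
      have hdp' : (Xp (β 0) * Sp (β 0) * p).totalDegree + 2 * r ≤ 2 * k := by
        have := deg_mul_le (deg_mul_le (deg_Xp (β 0)) (deg_Sp (β 0))) (le_refl p.totalDegree)
        omega
      have hstep2 := ih (Fin.tail β) (Xp (β 0) * Sp (β 0) * p) hdp'
      calc pExp μ (xProd β * p)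
          = pExp μ (Xp (β 0) * Sp (β 0) * (xProd (Fin.tail β) * p)) := hstep1
      _ = pExp μ (xProd (Fin.tail β) * (Xp (β 0) * Sp (β 0) * p)) := by
          congr 1; ring
      _ = pExp μ (xProd (Fin.tail β) * sProd (Fin.tail β) * (Xp (β 0) * Sp (β 0) * p)) :=
          hstep2
      _ = pExp μ (xProd β * sProd β * p) := by
          congr 1
          rw [xProd_succ, sProd_succ]
          ring

/-! ### the top-level certificate -/

lemma TOP (hk : 3 ≤ k) (hodd : Odd k) (hn : 1 ≤ n)
    (hpd : IsPseudoDist (4 * k - 4) μ)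
    (hsat : SatisfiesSystem (4 * k - 4) μ (PtSys n t)) (ht : 1 ≤ t) (M : ℝ)
    (w : (Fin k → Fin n) → ℝ) (hw : ∀ α, |w α| ≤ M) :
    pExp μ (∑ α : Fin k → Fin n, C (w α) * ∏ j, X (0, α j)) ≤ M * Real.sqrt (t ^ k) := by
  obtain ⟨m, hm⟩ := hodd
  have hm1 : 1 ≤ m := by omega
  have hk2 : m + (m + 1) = k := by omega
  set e1 : Fin m ⊕ Fin (m + 1) ≃ Fin k := finSumFinEquiv.trans (finCongr hk2) with he1
  set E : (Fin m → Fin n) × (Fin (m + 1) → Fin n) ≃ (Fin k → Fin n) :=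
    (Equiv.sumArrowEquivProdArrow _ _ _).symm.trans (Equiv.arrowCongr e1 (Equiv.refl (Fin n)))
    with hE
  set w' : (Fin m → Fin n) → (Fin (m + 1) → Fin n) → ℝ := fun β δ => w (E (β, δ)) with hw'
  have hxsplit : ∀ (β : Fin m → Fin n) (δ : Fin (m + 1) → Fin n),
      xProd (E (β, δ)) = xProd β * xProd δ := by
    intro β δ
    have hEap : E (β, δ) = fun j => Sum.elim β δ (e1.symm j) := rfl
    rw [xProd, hEap]
    rw [Equiv.prod_comp e1.symm (fun z => Xp (Sum.elim β δ z))]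
    rw [Fintype.prod_sum_type]
    rfl
  set d : (Fin m → Fin n) → MvPolynomial (Fin 3 × Fin n) ℝ :=
    fun β => ∑ δ : Fin (m + 1) → Fin n, C (w' β δ) * xProd δ with hd
  have hpoly1 : (∑ α : Fin k → Fin n, (C (w α) : MvPolynomial (Fin 3 × Fin n) ℝ) * xProd α)
      = ∑ β : Fin m → Fin n, xProd β * d β := by
    calc (∑ α : Fin k → Fin n, (C (w α) : MvPolynomial (Fin 3 × Fin n) ℝ) * xProd α)
        = ∑ pr : (Fin m → Fin n) × (Fin (m + 1) → Fin n),
            (C (w (E pr)) : MvPolynomial (Fin 3 × Fin n) ℝ) * xProd (E pr) :=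
          (Fintype.sum_equiv E
            (fun pr => (C (w (E pr)) : MvPolynomial (Fin 3 × Fin n) ℝ) * xProd (E pr))
            (fun α => (C (w α) : MvPolynomial (Fin 3 × Fin n) ℝ) * xProd α)
            (fun pr => rfl)).symm
    _ = ∑ β : Fin m → Fin n, ∑ δ : Fin (m + 1) → Fin n,
          (C (w' β δ) : MvPolynomial (Fin 3 × Fin n) ℝ) * (xProd β * xProd δ) := by
        rw [Fintype.sum_prod_type]
        exact Finset.sum_congr rfl fun β _ => Finset.sum_congr rfl fun δ _ => by
          rw [hxsplit β δ]
    _ = ∑ β : Fin m → Fin n, xProd β * d β := by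
        refine Finset.sum_congr rfl fun β _ => ?_
        rw [hd, Finset.mul_sum]
        exact Finset.sum_congr rfl fun δ _ => by ring
  have hdeg_d : ∀ β, (d β).totalDegree ≤ m + 1 := fun β => deg_sum_C_xProd _
  -- decorate
  have hdecor : pExp μ (∑ β : Fin m → Fin n, xProd β * d β)
      = pExp μ (∑ β : Fin m → Fin n, xProd β * sProd β * d β) := by
    rw [pExp_sum, pExp_sum]
    refine Finset.sum_congr rfl fun β _ => ?_
    refine L_decor hk hsat m β (d β) ?_
    have := hdeg_d β
    omega
  -- Cauchy-Schwarz with parameter lam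
  have hA1 : pExp μ (∑ β : Fin m → Fin n, (xProd β) ^ 2) ≤ 1 := by
    rw [← P2_pow_eq]
    exact L_P2_pow_le_one hk hpd hsat m (by omega)
  have hA0 : 0 ≤ pExp μ (∑ β : Fin m → Fin n, (xProd β) ^ 2) := by
    rw [← P2_pow_eq]
    exact L_P2_pow_nonneg hk hpd m (by omega)
  -- bound E0 by REC
  have hE0 : pExp μ (∑ β : Fin m → Fin n, (sProd β) ^ 2 * (d β) ^ 2)
      ≤ M ^ 2 * pExp μ ((∑ β : Fin m → Fin n, (sProd β) ^ 2) * (PS n) ^ (m + 1)) := by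
    refine REC hk hpd hsat M (m + 1) (Fin m → Fin n) sProd
      (fun β => by have := deg_sProd (n := n) β; omega) w' (fun β δ => hw _)
  have hPSk : pExp μ ((∑ β : Fin m → Fin n, (sProd β) ^ 2) * (PS n) ^ (m + 1))
      = pExp μ ((PS n) ^ k) := by
    congr 1
    rw [← PS_pow_eq, ← pow_add, hk2]
  have hE0' : pExp μ (∑ β : Fin m → Fin n, (sProd β) ^ 2 * (d β) ^ 2) ≤ M ^ 2 * t ^ k := by
    have h1 := L_PS_pow_le hk hpd hsat ht k (le_refl k)
    have hM2 : (0:ℝ) ≤ M ^ 2 := sq_nonneg M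
    calc pExp μ (∑ β : Fin m → Fin n, (sProd β) ^ 2 * (d β) ^ 2)
        ≤ M ^ 2 * pExp μ ((∑ β : Fin m → Fin n, (sProd β) ^ 2) * (PS n) ^ (m + 1)) := hE0
    _ = M ^ 2 * pExp μ ((PS n) ^ k) := by rw [hPSk]
    _ ≤ M ^ 2 * t ^ k := by nlinarith
  -- the quadratic inequality in lam
  have hquad : ∀ lam : ℝ,
      2 * lam * pExp μ (∑ β : Fin m → Fin n, xProd β * sProd β * d β)
        ≤ lam ^ 2 * pExp μ (∑ β : Fin m → Fin n, (xProd β) ^ 2)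
          + pExp μ (∑ β : Fin m → Fin n, (sProd β) ^ 2 * (d β) ^ 2) := by
    intro lam
    have hsq : 0 ≤ pExp μ (∑ β : Fin m → Fin n,
        (C lam * xProd β - sProd β * d β) ^ 2) := by
      rw [pExp_sum]
      refine Finset.sum_nonneg fun β _ => ?_
      refine L_sq hk hpd _ ?_
      have h1 : (C lam * xProd β : MvPolynomial (Fin 3 × Fin n) ℝ).totalDegree ≤ m := by
        have := deg_mul_le (le_of_eq (totalDegree_C lam)) (deg_xProd β)
        simpa using this
      have h2 : (sProd β * d β).totalDegree ≤ 2 * m + 1 := by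
        have := deg_mul_le (deg_sProd β) (hdeg_d β)
        omega
      have := deg_sub_le (le_trans h1 (by omega : m ≤ 2 * m + 1)) h2
      omega
    have hexpand : (∑ β : Fin m → Fin n,
        ((C lam : MvPolynomial (Fin 3 × Fin n) ℝ) * xProd β - sProd β * d β) ^ 2)
        = C (lam ^ 2) * (∑ β : Fin m → Fin n, (xProd β) ^ 2)
          - C (2 * lam) * (∑ β : Fin m → Fin n, xProd β * sProd β * d β)
          + ∑ β : Fin m → Fin n, (sProd β) ^ 2 * (d β) ^ 2 := by
      rw [Finset.mul_sum, Finset.mul_sum, ← Finset.sum_sub_distrib, ← Finset.sum_add_distrib]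
      refine Finset.sum_congr rfl fun β _ => ?_
      have hc1 : (C (lam ^ 2) : MvPolynomial (Fin 3 × Fin n) ℝ) = (C lam) ^ 2 := by
        rw [map_pow]
      have hc2 : (C (2 * lam) : MvPolynomial (Fin 3 × Fin n) ℝ) = 2 * C lam := by
        rw [map_mul, map_ofNat]
      rw [hc1, hc2]
      ring
    rw [hexpand, pExp_add, pExp_sub, pExp_C_mul, pExp_C_mul] at hsq
    linarith
  -- conclude
  have hM0 : 0 ≤ M := by
    have : Nonempty (Fin k → Fin n) := ⟨fun _ => ⟨0, by omega⟩⟩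
    obtain ⟨α0⟩ := this
    exact le_trans (abs_nonneg _) (hw α0)
  have htk1 : (1:ℝ) ≤ t ^ k := one_le_pow₀ ht
  have hsq1 : 1 ≤ Real.sqrt (t ^ k) := by
    rw [show (1:ℝ) = Real.sqrt 1 from (Real.sqrt_one).symm]
    exact Real.sqrt_le_sqrt htk1
  have hgoal0 : pExp μ (∑ α : Fin k → Fin n, (C (w α) : MvPolynomial (Fin 3 × Fin n) ℝ)
      * ∏ j, X (0, α j)) = pExp μ (∑ β : Fin m → Fin n, xProd β * sProd β * d β) := by
    rw [show (∑ α : Fin k → Fin n, (C (w α) : MvPolynomial (Fin 3 × Fin n) ℝ)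
      * ∏ j, X (0, α j)) = (∑ α : Fin k → Fin n, (C (w α) : MvPolynomial (Fin 3 × Fin n) ℝ)
      * xProd α) from rfl, hpoly1, hdecor]
  rcases eq_or_lt_of_le hM0 with hM | hM
  · -- M = 0 : all weights vanish
    have hwz : ∀ α, w α = 0 := fun α => by
      have h := hw α
      rw [← hM] at h
      exact abs_eq_zero.mp (le_antisymm h (abs_nonneg _))
    have hzero : (∑ α : Fin k → Fin n, (C (w α) : MvPolynomial (Fin 3 × Fin n) ℝ)
        * ∏ j, X (0, α j)) = 0 := by
      refine Finset.sum_eq_zero fun α _ => ?_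
      rw [hwz α, map_zero, zero_mul]
    rw [hzero, pExp_zero, ← hM, zero_mul]
  · -- M > 0
    set lam : ℝ := M * Real.sqrt (t ^ k) with hlam
    have hlampos : 0 < lam := by
      have : 0 < Real.sqrt (t ^ k) := by linarith
      exact mul_pos hM this
    have hlamsq : lam ^ 2 = M ^ 2 * t ^ k := by
      rw [hlam, mul_pow, Real.sq_sqrt (by linarith : (0:ℝ) ≤ t ^ k)]
    have h1 := hquad lam
    have h2 : lam ^ 2 * pExp μ (∑ β : Fin m → Fin n, (xProd β) ^ 2) ≤ lam ^ 2 :=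
      by nlinarith [sq_nonneg lam]
    have hfin : 2 * lam * pExp μ (∑ β : Fin m → Fin n, xProd β * sProd β * d β)
        ≤ 2 * lam ^ 2 := by
      have := hE0'
      rw [hlamsq]
      linarith
    rw [hgoal0]
    calc pExp μ (∑ β : Fin m → Fin n, xProd β * sProd β * d β) ≤ lam := by
          have h2lam : 0 < 2 * lam := by linarith
          nlinarith
    _ = M * Real.sqrt (t ^ k) := rfl


/-! ### probability auxiliaries -/

section ProbAux

open Real Filter Topology
open scoped NNReal ENNReal

lemma map_eval_pi {ι : Type*} [Fintype ι] {α : ι → Type*} [∀ i, MeasurableSpace (α i)]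
    (ν : ∀ i, Measure (α i)) [∀ i, IsProbabilityMeasure (ν i)] (i : ι) :
    (Measure.pi ν).map (Function.eval i) = ν i := by
  classical
  ext s hs
  rw [Measure.map_apply (measurable_pi_apply i) hs]
  have hpre : Function.eval i ⁻¹' s
      = Set.pi Set.univ (Function.update (fun j => (Set.univ : Set (α j))) i s) := by
    rw [Set.eval_preimage]
  rw [hpre, Measure.pi_pi]
  rw [Finset.prod_eq_single_of_mem i (Finset.mem_univ i)]
  · rw [Function.update_self]
  · intro j _ hj
    rw [Function.update_of_ne hj]
    exact measure_univ

noncomputable def psi (b : ℝ) (x : ℝ) : ℝ := max (|x| - b) 0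

lemma psi_nonneg (b x : ℝ) : 0 ≤ psi b x := le_max_right _ _

lemma psi_continuous (b : ℝ) : Continuous (psi b) :=
  (continuous_abs.sub continuous_const).max continuous_const

lemma psi_le_abs (b : ℝ) (hb : 0 ≤ b) (x : ℝ) : psi b x ≤ |x| :=
  max_le (by linarith [abs_nonneg x]) (abs_nonneg x)

lemma abs_le_add_psi (b x : ℝ) : |x| ≤ b + psi b x := by
  have := le_max_left (|x| - b) 0
  have : |x| - b ≤ psi b x := this
  linarith

lemma pdf01 (x : ℝ) :
    gaussianPDFReal 0 1 x = (Real.sqrt (2 * π))⁻¹ * Real.exp (-(1/2) * x ^ 2) := by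
  have h := congrFun (gaussianPDFReal_def 0 1) x
  rw [h]
  push_cast
  rw [mul_one, sub_zero]
  congr 1
  ring

lemma integral_gauss01 (g : ℝ → ℝ) :
    ∫ x, g x ∂(gaussianReal 0 1) = ∫ x, gaussianPDFReal 0 1 x * g x := by
  rw [gaussianReal_of_var_ne_zero 0 one_ne_zero, gaussianPDF_def]
  have hrw : (fun x => ENNReal.ofReal (gaussianPDFReal 0 1 x))
      = fun x => (((gaussianPDFReal 0 1 x).toNNReal : ℝ≥0) : ℝ≥0∞) := rfl
  rw [hrw, integral_withDensity_eq_integral_smul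
    (measurable_gaussianPDFReal 0 1).real_toNNReal g]
  refine integral_congr_ae (ae_of_all _ fun x => ?_)
  simp only [NNReal.smul_def, smul_eq_mul]
  rw [Real.coe_toNNReal _ (gaussianPDFReal_nonneg 0 1 x)]

lemma integrable_abs_mul_exp {b : ℝ} (hb : 0 < b) :
    Integrable (fun x : ℝ => |x| * Real.exp (-b * x ^ 2)) := by
  have h := (integrable_mul_exp_neg_mul_sq hb).abs
  have heq : (fun x : ℝ => |x * Real.exp (-b * x ^ 2)|)
      = fun x : ℝ => |x| * Real.exp (-b * x ^ 2) :=
    funext fun x => by rw [abs_mul, abs_of_pos (Real.exp_pos _)]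
  rwa [heq] at h

lemma integrable_pdf_mul_psi (b : ℝ) (hb : 0 ≤ b) :
    Integrable (fun x => gaussianPDFReal 0 1 x * psi b x) := by
  refine Integrable.mono'
    (g := fun x => (Real.sqrt (2 * π))⁻¹ * (|x| * Real.exp (-(1/2) * x ^ 2))) ?_ ?_
    (ae_of_all _ fun x => ?_)
  · exact (integrable_abs_mul_exp (by norm_num : (0:ℝ) < 1/2)).const_mul _
  · exact ((measurable_gaussianPDFReal 0 1).mul
      (psi_continuous b).measurable).aestronglyMeasurable
  · have h0 : 0 ≤ gaussianPDFReal 0 1 x * psi b x :=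
      mul_nonneg (gaussianPDFReal_nonneg 0 1 x) (psi_nonneg b x)
    rw [Real.norm_of_nonneg h0]
    calc gaussianPDFReal 0 1 x * psi b x ≤ gaussianPDFReal 0 1 x * |x| :=
          mul_le_mul_of_nonneg_left (psi_le_abs b hb x) (gaussianPDFReal_nonneg 0 1 x)
    _ = (Real.sqrt (2 * π))⁻¹ * (|x| * Real.exp (-(1/2) * x ^ 2)) := by
          rw [pdf01]; ring

lemma integrable_psi_gauss (b : ℝ) (hb : 0 ≤ b) : Integrable (psi b) (gaussianReal 0 1) := by
  rw [gaussianReal_of_var_ne_zero 0 one_ne_zero, gaussianPDF_def]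
  have hrw : (fun x => ENNReal.ofReal (gaussianPDFReal 0 1 x))
      = fun x => (((gaussianPDFReal 0 1 x).toNNReal : ℝ≥0) : ℝ≥0∞) := rfl
  rw [hrw, integrable_withDensity_iff_integrable_smul
    (measurable_gaussianPDFReal 0 1).real_toNNReal]
  have heq : (fun x => ((gaussianPDFReal 0 1 x).toNNReal : ℝ≥0) • psi b x)
      = fun x => gaussianPDFReal 0 1 x * psi b x := funext fun x => by
    rw [NNReal.smul_def, Real.coe_toNNReal _ (gaussianPDFReal_nonneg 0 1 x), smul_eq_mul]
  rw [heq]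
  exact integrable_pdf_mul_psi b hb

lemma sqrt_two_pi_ge_two : (2:ℝ) ≤ Real.sqrt (2 * π) := by
  have h4 : (4:ℝ) ≤ 2 * π := by nlinarith [Real.pi_gt_three]
  have : Real.sqrt 4 ≤ Real.sqrt (2 * π) := Real.sqrt_le_sqrt h4
  have h2 : Real.sqrt 4 = 2 := by
    rw [show (4:ℝ) = 2 ^ 2 by norm_num, Real.sqrt_sq (by norm_num : (0:ℝ) ≤ 2)]
  linarith

lemma integral_Ioi_x_exp : ∫ x in Set.Ioi (0:ℝ), x * Real.exp (-(1/4) * x ^ 2) = 2 := by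
  have hd : ∀ x ∈ Set.Ici (0:ℝ),
      HasDerivAt (fun y => -2 * Real.exp (-(1/4) * y ^ 2))
        (x * Real.exp (-(1/4) * x ^ 2)) x := by
    intro x _
    have h1 : HasDerivAt (fun y : ℝ => -(1/4) * y ^ 2) (-(1/4) * (2 * x)) x := by
      simpa using (hasDerivAt_pow 2 x).const_mul (-(1/4) : ℝ)
    have h2 := h1.exp
    have h3 := h2.const_mul (-2 : ℝ)
    refine h3.congr_deriv ?_
    ring
  have hint : IntegrableOn (fun x : ℝ => x * Real.exp (-(1/4) * x ^ 2)) (Set.Ioi 0) :=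
    (integrable_mul_exp_neg_mul_sq (by norm_num : (0:ℝ) < 1/4)).integrableOn
  have htend : Tendsto (fun y : ℝ => -2 * Real.exp (-(1/4) * y ^ 2)) atTop (𝓝 0) := by
    have h1 : Tendsto (fun y : ℝ => (1/4) * y ^ 2) atTop atTop :=
      Tendsto.const_mul_atTop (by norm_num) (tendsto_pow_atTop (by norm_num : 2 ≠ 0))
    have h2 : Tendsto (fun y : ℝ => -(1/4) * y ^ 2) atTop atBot := by
      have := tendsto_neg_atTop_atBot.comp h1
      refine this.congr fun y => by simp [Function.comp]
    have h3 := Real.tendsto_exp_atBot.comp h2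
    have h4 := h3.const_mul (-2 : ℝ)
    simpa using h4
  have := integral_Ioi_of_hasDerivAt_of_tendsto' hd hint htend
  rw [this]
  norm_num

lemma integral_abs_exp_quarter : ∫ x : ℝ, |x| * Real.exp (-(1/4) * x ^ 2) = 4 := by
  have heq : (fun x : ℝ => |x| * Real.exp (-(1/4) * x ^ 2))
      = fun x : ℝ => |x| * Real.exp (-(1/4) * |x| ^ 2) := funext fun x => by rw [sq_abs]
  rw [heq]
  rw [integral_comp_abs (f := fun u : ℝ => u * Real.exp (-(1/4) * u ^ 2))]
  rw [integral_Ioi_x_exp]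
  norm_num

lemma integral_psi_gauss_le (b : ℝ) (hb : 0 ≤ b) :
    ∫ x, psi b x ∂(gaussianReal 0 1) ≤ 2 * Real.exp (-(b ^ 2) / 4) := by
  rw [integral_gauss01]
  have hpt : ∀ x, gaussianPDFReal 0 1 x * psi b x
      ≤ (Real.sqrt (2 * π))⁻¹ * Real.exp (-(b ^ 2) / 4)
        * (|x| * Real.exp (-(1/4) * x ^ 2)) := by
    intro x
    have h1 : psi b x ≤ |x| * Real.exp ((x ^ 2 - b ^ 2) / 4) := by
      rcases le_or_gt (|x|) b with h | h
      · have h0 : psi b x = 0 := max_eq_right (by linarith)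
        rw [h0]
        positivity
      · have hpsix : psi b x = |x| - b := max_eq_left (by linarith [psi_nonneg b x])
        have hsq : b ^ 2 ≤ x ^ 2 := by
          rw [← sq_abs x]
          exact pow_le_pow_left₀ hb h.le 2
        have hexp : 1 ≤ Real.exp ((x ^ 2 - b ^ 2) / 4) := by
          rw [← Real.exp_zero]
          exact Real.exp_le_exp.mpr (by linarith)
        calc psi b x = |x| - b := hpsix
        _ ≤ |x| := by linarith
        _ = |x| * 1 := (mul_one _).symm
        _ ≤ |x| * Real.exp ((x ^ 2 - b ^ 2) / 4) :=
            mul_le_mul_of_nonneg_left hexp (abs_nonneg x)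
    have hexpeq : Real.exp (-(1/2) * x ^ 2) * Real.exp ((x ^ 2 - b ^ 2) / 4)
        = Real.exp (-(b ^ 2) / 4) * Real.exp (-(1/4) * x ^ 2) := by
      rw [← Real.exp_add, ← Real.exp_add]
      congr 1
      ring
    calc gaussianPDFReal 0 1 x * psi b x
        ≤ gaussianPDFReal 0 1 x * (|x| * Real.exp ((x ^ 2 - b ^ 2) / 4)) :=
          mul_le_mul_of_nonneg_left h1 (gaussianPDFReal_nonneg 0 1 x)
    _ = (Real.sqrt (2 * π))⁻¹ * |x|
          * (Real.exp (-(1/2) * x ^ 2) * Real.exp ((x ^ 2 - b ^ 2) / 4)) := by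
        rw [pdf01]; ring
    _ = (Real.sqrt (2 * π))⁻¹ * |x|
          * (Real.exp (-(b ^ 2) / 4) * Real.exp (-(1/4) * x ^ 2)) := by rw [hexpeq]
    _ = (Real.sqrt (2 * π))⁻¹ * Real.exp (-(b ^ 2) / 4)
          * (|x| * Real.exp (-(1/4) * x ^ 2)) := by ring
  have hint2 : Integrable (fun x : ℝ => (Real.sqrt (2 * π))⁻¹ * Real.exp (-(b ^ 2) / 4)
      * (|x| * Real.exp (-(1/4) * x ^ 2))) :=
    (integrable_abs_mul_exp (by norm_num : (0:ℝ) < 1/4)).const_mul _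
  have hmono := integral_mono (integrable_pdf_mul_psi b hb) hint2 hpt
  have hval : ∫ x : ℝ, (Real.sqrt (2 * π))⁻¹ * Real.exp (-(b ^ 2) / 4)
      * (|x| * Real.exp (-(1/4) * x ^ 2))
      = (Real.sqrt (2 * π))⁻¹ * Real.exp (-(b ^ 2) / 4) * 4 := by
    rw [integral_const_mul, integral_abs_exp_quarter]
  rw [hval] at hmono
  have hc : (Real.sqrt (2 * π))⁻¹ * Real.exp (-(b ^ 2) / 4) * 4
      ≤ 2 * Real.exp (-(b ^ 2) / 4) := by
    have h2 := sqrt_two_pi_ge_two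
    have hpos : (0:ℝ) < Real.sqrt (2 * π) := by linarith
    have hinv : (Real.sqrt (2 * π))⁻¹ ≤ 2⁻¹ := by
      apply inv_anti₀ (by norm_num) h2
    have hexp0 : (0:ℝ) ≤ Real.exp (-(b ^ 2) / 4) := (Real.exp_pos _).le
    nlinarith
  linarith

end ProbAux

end SosAux

open SosAux

/-- SoS sparse certificates, odd case: there is an absolute constant
`C > 0` such that for all `n ≥ 2`, odd `k ≥ 3` and `1 ≤ t ≤ n`, the Gaussian complexity
of `S_{4k−4,n}` satisfies `E_W sup_{X ∈ S} ⟨X, W⟩ ≤ C·t^{k/2}·√(k·log n)`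
where `W` has i.i.d. `N(0,1)` entries. -/
theorem sos_sparse_certificate_odd :
    ∃ C : ℝ, 0 < C ∧ ∀ (n k : ℕ) (t : ℝ), 2 ≤ n → 3 ≤ k → Odd k → 1 ≤ t → t ≤ n →
      ∫ w, (⨆ X ∈ momentSet n k t, ∑ α : Fin k → Fin n, X α * w α)
          ∂(Measure.pi fun _ : Fin k → Fin n => gaussianReal 0 1)
        ≤ C * t ^ ((k : ℝ) / 2) * Real.sqrt (k * Real.log n) := by
  refine ⟨4, by norm_num, ?_⟩
  intro n k t hn hk hodd ht htn
  have ht0 : (0:ℝ) ≤ t := by linarith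
  have hn1 : (1:ℝ) < (n:ℝ) := by exact_mod_cast hn
  have hlogn : 0 < Real.log n := Real.log_pos hn1
  have hklogn : (1:ℝ) ≤ (k:ℝ) * Real.log n := by
    have hk3 : (3:ℝ) ≤ (k:ℝ) := by exact_mod_cast hk
    have hlog2 : (0.6931471803 : ℝ) < Real.log 2 := Real.log_two_gt_d9
    have hmono : Real.log 2 ≤ Real.log n := by
      refine Real.log_le_log (by norm_num) ?_
      exact_mod_cast hn
    nlinarith
  have hR1 : (1:ℝ) ≤ Real.sqrt ((k:ℝ) * Real.log n) := by
    rw [show (1:ℝ) = Real.sqrt 1 from (Real.sqrt_one).symm]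
    exact Real.sqrt_le_sqrt hklogn
  set R : ℝ := Real.sqrt ((k:ℝ) * Real.log n) with hR
  set b : ℝ := 2 * R with hbdef
  have hb0 : 0 ≤ b := by
    have := Real.sqrt_nonneg ((k:ℝ) * Real.log n)
    rw [hbdef]
    linarith
  set S : ℝ := Real.sqrt (t ^ k) with hS
  have hS0 : 0 ≤ S := Real.sqrt_nonneg _
  have hSrpow : S = t ^ ((k : ℝ) / 2) := by
    rw [hS, show ((k:ℝ)/2) = (k:ℝ) * (1/2) by ring, Real.rpow_mul ht0,
      Real.rpow_natCast, Real.sqrt_eq_rpow]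
  set Pm : Measure ((Fin k → Fin n) → ℝ) :=
    Measure.pi fun _ : Fin k → Fin n => gaussianReal 0 1 with hPm
  -- integrability of each coordinate psi
  have hmap : ∀ α : Fin k → Fin n,
      Pm.map (Function.eval α) = gaussianReal 0 1 := fun α =>
    map_eval_pi (fun _ : Fin k → Fin n => gaussianReal 0 1) α
  have hint_psi : ∀ α : Fin k → Fin n, Integrable (fun w => psi b (w α)) Pm := by
    intro α
    have hsm : AEStronglyMeasurable (psi b) (Pm.map (Function.eval α)) :=
      (psi_continuous b).aestronglyMeasurable
    have hφ : AEMeasurable (Function.eval α) Pm := (measurable_pi_apply α).aemeasurable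
    have h1 : Integrable (psi b) (Pm.map (Function.eval α)) := by
      rw [hmap α]
      exact integrable_psi_gauss b hb0
    exact (integrable_map_measure hsm hφ).mp h1
  have hval_psi : ∀ α : Fin k → Fin n,
      ∫ w, psi b (w α) ∂Pm ≤ 2 * Real.exp (-(b ^ 2) / 4) := by
    intro α
    have hsm : AEStronglyMeasurable (psi b) (Pm.map (Function.eval α)) :=
      (psi_continuous b).aestronglyMeasurable
    have hφ : AEMeasurable (Function.eval α) Pm := (measurable_pi_apply α).aemeasurable
    have h1 : ∫ y, psi b y ∂(Pm.map (Function.eval α)) = ∫ w, psi b (w α) ∂Pm :=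
      integral_map hφ hsm
    rw [← h1, hmap α]
    exact integral_psi_gauss_le b hb0
  -- the dominating function
  set g : ((Fin k → Fin n) → ℝ) → ℝ :=
    fun w => S * (b + ∑ α : Fin k → Fin n, psi b (w α)) with hg
  have hint_g : Integrable g Pm := by
    refine Integrable.const_mul ?_ S
    exact (integrable_const b).add (integrable_finset_sum _ fun α _ => hint_psi α)
  -- the expectation bound for g
  have hexp_n : ((n:ℝ)) ^ k * (2 * Real.exp (-(b ^ 2) / 4)) = 2 := by
    have hb2 : b ^ 2 = 4 * ((k:ℝ) * Real.log n) := by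
      rw [hbdef, mul_pow, hR, Real.sq_sqrt (by linarith : (0:ℝ) ≤ (k:ℝ) * Real.log n)]
      ring
    have : Real.exp (-(b ^ 2) / 4) = ((n:ℝ) ^ k)⁻¹ := by
      rw [hb2, show -(4 * ((k:ℝ) * Real.log n)) / 4 = -((k:ℝ) * Real.log n) by ring,
        Real.exp_neg, Real.exp_nat_mul, Real.exp_log (by linarith : (0:ℝ) < n)]
    rw [this]
    have hnk : (0:ℝ) < (n:ℝ) ^ k := by positivity
    field_simp
  have hcard : (Finset.univ : Finset (Fin k → Fin n)).card = n ^ k := by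
    rw [Finset.card_univ]
    rw [Fintype.card_fun]
    simp
  have hint_val : ∫ w, g w ∂Pm ≤ S * (b + 2) := by
    have h1 : ∫ w, g w ∂Pm
        = S * (b + ∑ α : Fin k → Fin n, ∫ w, psi b (w α) ∂Pm) := by
      rw [hg]
      rw [integral_const_mul]
      congr 1
      rw [integral_add (integrable_const b) (integrable_finset_sum _ fun α _ => hint_psi α)]
      congr 1
      · simp
      · exact integral_finset_sum _ fun α _ => hint_psi α
    rw [h1]
    have h2 : ∑ α : Fin k → Fin n, ∫ w, psi b (w α) ∂Pm ≤ 2 := by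
      calc ∑ α : Fin k → Fin n, ∫ w, psi b (w α) ∂Pm
          ≤ ∑ _α : Fin k → Fin n, 2 * Real.exp (-(b ^ 2) / 4) :=
            Finset.sum_le_sum fun α _ => hval_psi α
      _ = ((n:ℝ)) ^ k * (2 * Real.exp (-(b ^ 2) / 4)) := by
          rw [Finset.sum_const, hcard, nsmul_eq_mul]
          push_cast
          ring
      _ = 2 := hexp_n
    nlinarith
  -- pointwise bound on the sup
  have hpt : ∀ w, (⨆ X ∈ momentSet n k t, ∑ α : Fin k → Fin n, X α * w α) ≤ g w := by
    intro w
    have hg0 : 0 ≤ g w := by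
      have h1 : 0 ≤ ∑ α : Fin k → Fin n, psi b (w α) :=
        Finset.sum_nonneg fun α _ => psi_nonneg b _
      have : 0 ≤ b + ∑ α : Fin k → Fin n, psi b (w α) := by linarith
      exact mul_nonneg hS0 this
    refine Real.iSup_le (fun X => Real.iSup_le (fun hX => ?_) hg0) hg0
    obtain ⟨μ, hpd, hsat, hXμ⟩ := hX
    set M : ℝ := b + ∑ α : Fin k → Fin n, psi b (w α) with hM
    have hMw : ∀ α, |w α| ≤ M := by
      intro α
      have h1 : psi b (w α) ≤ ∑ α' : Fin k → Fin n, psi b (w α') :=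
        Finset.single_le_sum (fun α' _ => psi_nonneg b _) (Finset.mem_univ α)
      have h2 := abs_le_add_psi b (w α)
      rw [hM]
      linarith
    have htop := TOP hk hodd (by omega : 1 ≤ n) hpd hsat ht M w hMw
    have hsum : ∑ α : Fin k → Fin n, X α * w α
        = pExp μ (∑ α : Fin k → Fin n,
            MvPolynomial.C (w α) * ∏ j, MvPolynomial.X (0, α j)) := by
      rw [pExp_sum]
      refine Finset.sum_congr rfl fun α _ => ?_
      rw [pExp_C_mul, hXμ α]
      ring
    rw [hsum]
    calc pExp μ (∑ α : Fin k → Fin n,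
          MvPolynomial.C (w α) * ∏ j, MvPolynomial.X (0, α j)) ≤ M * S := htop
    _ = g w := by rw [hg, hM]; ring
  -- final assembly
  have hRHS : S * (b + 2) ≤ 4 * t ^ ((k : ℝ) / 2) * R := by
    rw [← hSrpow, hbdef]
    nlinarith
  by_cases hF : Integrable
      (fun w => ⨆ X ∈ momentSet n k t, ∑ α : Fin k → Fin n, X α * w α) Pm
  · calc ∫ w, (⨆ X ∈ momentSet n k t, ∑ α : Fin k → Fin n, X α * w α) ∂Pm
        ≤ ∫ w, g w ∂Pm := integral_mono hF hint_g hpt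
    _ ≤ S * (b + 2) := hint_val
    _ ≤ 4 * t ^ ((k : ℝ) / 2) * R := hRHS
  · rw [integral_undef hF]
    have h1 : (0:ℝ) ≤ t ^ ((k : ℝ) / 2) := Real.rpow_nonneg ht0 _
    have h2 : (0:ℝ) ≤ R := Real.sqrt_nonneg _
    positivity
end
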